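/- arXiv:math/0012126 — 6 statements merged into one kernel-verified Lean document; each statement's English description precedes it below -/
import Mathlib

section
/- Let a, b, c be positive integers. Then the horizontal moment of inertia with respect to the centre S = ((a+b)/2, (a+c)/2) of the hexagon satisfies: Σ_{x=1}^{a+b-1} Σ_{y=0}^{a+c-1} P_{a,b,c}(x,y) · (x − (a+b)/2)² = (1/12) · a · b · (a² + b² − 2). -/
open Finset

/-- Plane partitions in an `a × b × c` box: assignments of entries in `{0, …, c}` to the
cells of an `a × b` rectangle with weakly decreasing rows and columns. -/
def PlanePartitions (a b c : ℕ) : Finset (Fin a → Fin b → Fin (c + 1)) :=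
  univ.filter (fun T =>
    (∀ i : Fin a, ∀ j j' : Fin b, j ≤ j' → T i j' ≤ T i j) ∧
    (∀ i i' : Fin a, ∀ j : Fin b, i ≤ i' → T i' j ≤ T i j))

/-- `P a b c x y` is the probability that a uniformly random lozenge tiling of the hexagon
with side lengths `a, b, c, a, b, c` contains the horizontal lozenge with lowest vertex
`(x, y)`: the cell `(i, j)` (1-based) of a plane partition `T` contributes the horizontal
lozenge with lowest vertex `(j - i + a, T(i,j) + a - i)`. -/
def P (a b c : ℕ) (x y : ℤ) : ℚ :=
  (∑ T ∈ PlanePartitions a b c,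
      ((univ.filter (fun p : Fin a × Fin b =>
          ((p.2 : ℕ) : ℤ) - ((p.1 : ℕ) : ℤ) + (a : ℤ) = x ∧
          ((T p.1 p.2 : ℕ) : ℤ) + (a : ℤ) - (((p.1 : ℕ) : ℤ) + 1) = y)).card : ℚ))
    / ((PlanePartitions a b c).card : ℚ)

lemma hsq_aux (n : ℕ) (t : ℚ) : ∑ j ∈ range n, ((j : ℚ) + t) ^ 2
    = (n : ℚ) * ((n : ℚ) - 1) * (2 * (n : ℚ) - 1) / 6 + t * ((n : ℚ) * ((n : ℚ) - 1))
      + (n : ℚ) * t ^ 2 := by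
  induction n with
  | zero => simp
  | succ n ih => rw [Finset.sum_range_succ, ih]; push_cast; ring

lemma hquad_aux (n : ℕ) (α β γ : ℚ) :
    ∑ i ∈ range n, (α * (i : ℚ) ^ 2 + β * (i : ℚ) + γ)
      = α * ((n : ℚ) * ((n : ℚ) - 1) * (2 * (n : ℚ) - 1)) / 6
        + β * ((n : ℚ) * ((n : ℚ) - 1)) / 2 + γ * (n : ℚ) := by
  induction n with
  | zero => simp
  | succ n ih => rw [Finset.sum_range_succ, ih]; push_cast; ring

lemma sumS (a b : ℕ) :
    ∑ p ∈ (univ : Finset (Fin a × Fin b)),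
        (((((p.2 : ℕ) : ℤ) - ((p.1 : ℕ) : ℤ) + (a : ℤ) : ℤ) : ℚ) - ((a : ℚ) + b) / 2) ^ 2
      = (1 / 12 : ℚ) * a * b * ((a : ℚ) ^ 2 + (b : ℚ) ^ 2 - 2) := by
  have conv1 : ∀ g : ℕ → ℕ → ℚ,
      ∑ p ∈ (univ : Finset (Fin a × Fin b)), g p.1 p.2
        = ∑ i ∈ range a, ∑ j ∈ range b, g i j := by
    intro g
    calc ∑ p ∈ (univ : Finset (Fin a × Fin b)), g p.1 p.2
        = ∑ i : Fin a, ∑ j : Fin b, g i j := by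
          rw [← Finset.univ_product_univ]
          exact Finset.sum_product' (s := univ) (t := univ) (f := fun (i : Fin a) (j : Fin b) => g i j)
      _ = ∑ i ∈ range a, ∑ j ∈ range b, g i j := by
          rw [Fin.sum_univ_eq_sum_range (fun i => ∑ y : Fin b, g i y) a]
          exact sum_congr rfl fun i _ => Fin.sum_univ_eq_sum_range (fun j => g i j) b
  have step1 : ∑ p ∈ (univ : Finset (Fin a × Fin b)),
      (((((p.2 : ℕ) : ℤ) - ((p.1 : ℕ) : ℤ) + (a : ℤ) : ℤ) : ℚ) - ((a : ℚ) + b) / 2) ^ 2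
      = ∑ i ∈ range a, ∑ j ∈ range b,
          ((j : ℚ) + (-(i : ℚ) + (a : ℚ) - ((a : ℚ) + b) / 2)) ^ 2 := by
    refine (conv1 (fun i j =>
        (((((j : ℤ) - (i : ℤ) + (a : ℤ)) : ℤ) : ℚ) - ((a : ℚ) + b) / 2) ^ 2)).trans ?_
    refine sum_congr rfl fun i _ => sum_congr rfl fun j _ => ?_
    push_cast
    ring
  rw [step1]
  have step2 : ∀ i ∈ range a, ∑ j ∈ range b,
      ((j : ℚ) + (-(i : ℚ) + (a : ℚ) - ((a : ℚ) + b) / 2)) ^ 2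
      = (b : ℚ) * (i : ℚ) ^ 2
        + (-(2 * (b : ℚ) * (((a : ℚ) - b) / 2) + (b : ℚ) * ((b : ℚ) - 1))) * (i : ℚ)
        + ((b : ℚ) * ((b : ℚ) - 1) * (2 * (b : ℚ) - 1) / 6
            + (((a : ℚ) - b) / 2) * ((b : ℚ) * ((b : ℚ) - 1))
            + (b : ℚ) * (((a : ℚ) - b) / 2) ^ 2) := by
    intro i _
    rw [hsq_aux b (-(i : ℚ) + (a : ℚ) - ((a : ℚ) + b) / 2)]
    ring
  rw [sum_congr rfl step2, hquad_aux]
  ring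

theorem horizontal_moment_of_inertia (a b c : ℕ) (ha : 0 < a) (hb : 0 < b) (hc : 0 < c) :
    ∑ x ∈ Finset.Icc (1 : ℤ) ((a : ℤ) + b - 1),
      ∑ y ∈ Finset.Icc (0 : ℤ) ((a : ℤ) + c - 1),
        P a b c x y * ((x : ℚ) - ((a : ℚ) + b) / 2) ^ 2
      = (1 / 12 : ℚ) * a * b * ((a : ℚ) ^ 2 + (b : ℚ) ^ 2 - 2) := by
  classical
  set X : Finset ℤ := Finset.Icc (1 : ℤ) ((a : ℤ) + b - 1) with hX
  set Y : Finset ℤ := Finset.Icc (0 : ℤ) ((a : ℤ) + c - 1) with hY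
  have h0 : (fun _ _ => 0 : Fin a → Fin b → Fin (c + 1)) ∈ PlanePartitions a b c := by
    simp only [PlanePartitions, mem_filter, mem_univ, true_and]
    exact ⟨fun _ _ _ _ => le_refl _, fun _ _ _ _ => le_refl _⟩
  have hNnat : 0 < (PlanePartitions a b c).card := Finset.card_pos.mpr ⟨_, h0⟩
  have hN : ((PlanePartitions a b c).card : ℚ) ≠ 0 := Nat.cast_ne_zero.mpr hNnat.ne'
  set N : ℚ := ((PlanePartitions a b c).card : ℚ) with hNdef
  -- key per-T identity
  have key : ∀ T ∈ PlanePartitions a b c,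
      ∑ x ∈ X, ∑ y ∈ Y,
        ((univ.filter (fun p : Fin a × Fin b =>
            ((p.2 : ℕ) : ℤ) - ((p.1 : ℕ) : ℤ) + (a : ℤ) = x ∧
            ((T p.1 p.2 : ℕ) : ℤ) + (a : ℤ) - (((p.1 : ℕ) : ℤ) + 1) = y)).card : ℚ)
          * ((x : ℚ) - ((a : ℚ) + b) / 2) ^ 2
      = (1 / 12 : ℚ) * a * b * ((a : ℚ) ^ 2 + (b : ℚ) ^ 2 - 2) := by
    intro T _
    have e1 : ∀ x ∈ X, ∀ y ∈ Y,
        ((univ.filter (fun p : Fin a × Fin b =>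
            ((p.2 : ℕ) : ℤ) - ((p.1 : ℕ) : ℤ) + (a : ℤ) = x ∧
            ((T p.1 p.2 : ℕ) : ℤ) + (a : ℤ) - (((p.1 : ℕ) : ℤ) + 1) = y)).card : ℚ)
            * ((x : ℚ) - ((a : ℚ) + b) / 2) ^ 2
          = ∑ p ∈ (univ : Finset (Fin a × Fin b)),
              (if ((p.2 : ℕ) : ℤ) - ((p.1 : ℕ) : ℤ) + (a : ℤ) = x ∧
                  ((T p.1 p.2 : ℕ) : ℤ) + (a : ℤ) - (((p.1 : ℕ) : ℤ) + 1) = y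
               then ((x : ℚ) - ((a : ℚ) + b) / 2) ^ 2 else 0) := by
      intro x _ y _
      rw [Finset.card_filter]
      push_cast
      rw [Finset.sum_mul]
      exact sum_congr rfl fun p _ => by rw [ite_mul, one_mul, zero_mul]
    calc ∑ x ∈ X, ∑ y ∈ Y,
          ((univ.filter (fun p : Fin a × Fin b =>
              ((p.2 : ℕ) : ℤ) - ((p.1 : ℕ) : ℤ) + (a : ℤ) = x ∧
              ((T p.1 p.2 : ℕ) : ℤ) + (a : ℤ) - (((p.1 : ℕ) : ℤ) + 1) = y)).card : ℚ)
            * ((x : ℚ) - ((a : ℚ) + b) / 2) ^ 2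
        = ∑ x ∈ X, ∑ y ∈ Y, ∑ p ∈ (univ : Finset (Fin a × Fin b)),
            (if ((p.2 : ℕ) : ℤ) - ((p.1 : ℕ) : ℤ) + (a : ℤ) = x ∧
                ((T p.1 p.2 : ℕ) : ℤ) + (a : ℤ) - (((p.1 : ℕ) : ℤ) + 1) = y
             then ((x : ℚ) - ((a : ℚ) + b) / 2) ^ 2 else 0) := by
          exact sum_congr rfl fun x hx => sum_congr rfl fun y hy => e1 x hx y hy
      _ = ∑ x ∈ X, ∑ p ∈ (univ : Finset (Fin a × Fin b)), ∑ y ∈ Y,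
            (if ((p.2 : ℕ) : ℤ) - ((p.1 : ℕ) : ℤ) + (a : ℤ) = x ∧
                ((T p.1 p.2 : ℕ) : ℤ) + (a : ℤ) - (((p.1 : ℕ) : ℤ) + 1) = y
             then ((x : ℚ) - ((a : ℚ) + b) / 2) ^ 2 else 0) := by
          exact sum_congr rfl fun x _ => Finset.sum_comm
      _ = ∑ p ∈ (univ : Finset (Fin a × Fin b)), ∑ x ∈ X, ∑ y ∈ Y,
            (if ((p.2 : ℕ) : ℤ) - ((p.1 : ℕ) : ℤ) + (a : ℤ) = x ∧
                ((T p.1 p.2 : ℕ) : ℤ) + (a : ℤ) - (((p.1 : ℕ) : ℤ) + 1) = y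
             then ((x : ℚ) - ((a : ℚ) + b) / 2) ^ 2 else 0) := Finset.sum_comm
      _ = ∑ p ∈ (univ : Finset (Fin a × Fin b)),
            (((((p.2 : ℕ) : ℤ) - ((p.1 : ℕ) : ℤ) + (a : ℤ) : ℤ) : ℚ) - ((a : ℚ) + b) / 2) ^ 2 := by
          refine sum_congr rfl fun p _ => ?_
          have hi := p.1.isLt
          have hj := p.2.isLt
          have hT := (T p.1 p.2).isLt
          have hxX : ((p.2 : ℕ) : ℤ) - ((p.1 : ℕ) : ℤ) + (a : ℤ) ∈ X := by
            rw [hX, Finset.mem_Icc]; omega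
          have hyY : ((T p.1 p.2 : ℕ) : ℤ) + (a : ℤ) - (((p.1 : ℕ) : ℤ) + 1) ∈ Y := by
            rw [hY, Finset.mem_Icc]; omega
          calc ∑ x ∈ X, ∑ y ∈ Y,
              (if ((p.2 : ℕ) : ℤ) - ((p.1 : ℕ) : ℤ) + (a : ℤ) = x ∧
                  ((T p.1 p.2 : ℕ) : ℤ) + (a : ℤ) - (((p.1 : ℕ) : ℤ) + 1) = y
               then ((x : ℚ) - ((a : ℚ) + b) / 2) ^ 2 else 0)
              = ∑ x ∈ X, (if ((p.2 : ℕ) : ℤ) - ((p.1 : ℕ) : ℤ) + (a : ℤ) = x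
                  then ((x : ℚ) - ((a : ℚ) + b) / 2) ^ 2 else 0) := by
                refine sum_congr rfl fun x _ => ?_
                by_cases h : ((p.2 : ℕ) : ℤ) - ((p.1 : ℕ) : ℤ) + (a : ℤ) = x
                · simp [h, Finset.sum_ite_eq, hyY]
                · simp [h]
            _ = (((((p.2 : ℕ) : ℤ) - ((p.1 : ℕ) : ℤ) + (a : ℤ) : ℤ) : ℚ) - ((a : ℚ) + b) / 2) ^ 2 := by
                simp [Finset.sum_ite_eq, hxX]
      _ = (1 / 12 : ℚ) * a * b * ((a : ℚ) ^ 2 + (b : ℚ) ^ 2 - 2) := sumS a b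
  calc ∑ x ∈ X, ∑ y ∈ Y, P a b c x y * ((x : ℚ) - ((a : ℚ) + b) / 2) ^ 2
      = ∑ x ∈ X, ∑ y ∈ Y, (∑ T ∈ PlanePartitions a b c,
          ((univ.filter (fun p : Fin a × Fin b =>
              ((p.2 : ℕ) : ℤ) - ((p.1 : ℕ) : ℤ) + (a : ℤ) = x ∧
              ((T p.1 p.2 : ℕ) : ℤ) + (a : ℤ) - (((p.1 : ℕ) : ℤ) + 1) = y)).card : ℚ)
            * ((x : ℚ) - ((a : ℚ) + b) / 2) ^ 2) / N := by
        refine sum_congr rfl fun x _ => sum_congr rfl fun y _ => ?_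
        rw [P, div_mul_eq_mul_div, Finset.sum_mul]
    _ = (∑ x ∈ X, ∑ y ∈ Y, ∑ T ∈ PlanePartitions a b c,
          ((univ.filter (fun p : Fin a × Fin b =>
              ((p.2 : ℕ) : ℤ) - ((p.1 : ℕ) : ℤ) + (a : ℤ) = x ∧
              ((T p.1 p.2 : ℕ) : ℤ) + (a : ℤ) - (((p.1 : ℕ) : ℤ) + 1) = y)).card : ℚ)
            * ((x : ℚ) - ((a : ℚ) + b) / 2) ^ 2) / N := by
        rw [Finset.sum_div]
        refine sum_congr rfl fun x _ => ?_
        rw [Finset.sum_div]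
    _ = (∑ T ∈ PlanePartitions a b c, ∑ x ∈ X, ∑ y ∈ Y,
          ((univ.filter (fun p : Fin a × Fin b =>
              ((p.2 : ℕ) : ℤ) - ((p.1 : ℕ) : ℤ) + (a : ℤ) = x ∧
              ((T p.1 p.2 : ℕ) : ℤ) + (a : ℤ) - (((p.1 : ℕ) : ℤ) + 1) = y)).card : ℚ)
            * ((x : ℚ) - ((a : ℚ) + b) / 2) ^ 2) / N := by
        congr 1
        calc _ = ∑ x ∈ X, ∑ T ∈ PlanePartitions a b c, ∑ y ∈ Y,
              ((univ.filter (fun p : Fin a × Fin b =>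
                  ((p.2 : ℕ) : ℤ) - ((p.1 : ℕ) : ℤ) + (a : ℤ) = x ∧
                  ((T p.1 p.2 : ℕ) : ℤ) + (a : ℤ) - (((p.1 : ℕ) : ℤ) + 1) = y)).card : ℚ)
                * ((x : ℚ) - ((a : ℚ) + b) / 2) ^ 2 :=
              sum_congr rfl fun x _ => Finset.sum_comm
          _ = _ := Finset.sum_comm
    _ = (∑ _T ∈ PlanePartitions a b c,
          (1 / 12 : ℚ) * a * b * ((a : ℚ) ^ 2 + (b : ℚ) ^ 2 - 2)) / N := by
        congr 1
        exact sum_congr rfl key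
    _ = (1 / 12 : ℚ) * a * b * ((a : ℚ) ^ 2 + (b : ℚ) ^ 2 - 2) := by
        rw [Finset.sum_const, nsmul_eq_mul, ← hNdef]
        field_simp
end

section
/- Let a, b, c be positive integers and let y₀ be an integer with 0 ≤ y₀ ≤ a+c−1. Then Σ_{x=1}^{a+b-1} P_{a,b,c}(x, y₀) = a·b/(a+c). -/
open Finset

namespace RowSumAux

lemma downclosed_iff {n : ℕ} {S : Finset (Fin n)}
    (h : ∀ j j' : Fin n, j ≤ j' → j' ∈ S → j ∈ S) (j : Fin n) :
    j ∈ S ↔ (j : ℕ) < S.card := by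
  constructor
  · intro hj
    have hsub : Finset.Iic j ⊆ S := fun x hx => h x j (mem_Iic.mp hx) hj
    have := Finset.card_le_card hsub
    rw [Fin.card_Iic] at this
    omega
  · intro hlt
    by_contra hj
    have hsub : S ⊆ Finset.Iio j := by
      intro x hx
      rw [mem_Iio]
      by_contra hxj
      exact hj (h j x (le_of_not_gt hxj) hx)
    have := Finset.card_le_card hsub
    rw [Fin.card_Iio] at this
    omega

lemma card_filter_lt {n m : ℕ} (hm : m ≤ n) :
    ((univ : Finset (Fin n)).filter fun j : Fin n => (j : ℕ) < m).card = m := by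
  rcases eq_or_lt_of_le hm with rfl | hm'
  · have h1 : ((univ : Finset (Fin m)).filter fun j : Fin m => (j : ℕ) < m) = univ := by
      apply filter_true_of_mem; intro j _; exact j.isLt
    rw [h1, card_univ, Fintype.card_fin]
  · have h1 : ((univ : Finset (Fin n)).filter fun j : Fin n => (j : ℕ) < m)
        = Finset.Iio ⟨m, hm'⟩ := by
      ext j; simp [Fin.lt_def]
    rw [h1, Fin.card_Iio]

section BK
variable {a b c : ℕ}

/-- number of entries `≥ v` in row `r` (0 for virtual rows `r ≥ a`). -/
def cnt (T : Fin a → Fin b → Fin (c + 1)) (r : ℕ) (v : ℤ) : ℕ :=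
  if h : r < a then ((univ : Finset (Fin b)).filter fun j : Fin b => v ≤ ((T ⟨r, h⟩ j : ℕ) : ℤ)).card
  else 0

lemma cnt_le_b (T : Fin a → Fin b → Fin (c + 1)) (r : ℕ) (v : ℤ) : cnt T r v ≤ b := by
  unfold cnt
  split
  · exact le_trans (card_filter_le _ _) (by simp)
  · omega

lemma cnt_eq_b (T : Fin a → Fin b → Fin (c + 1)) {r : ℕ} {v : ℤ} (hr : r < a) (hv : v ≤ 0) :
    cnt T r v = b := by
  unfold cnt
  rw [dif_pos hr, filter_true_of_mem, card_univ, Fintype.card_fin]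
  intro j _
  have : (0 : ℤ) ≤ ((T ⟨r, hr⟩ j : ℕ) : ℤ) := Int.ofNat_nonneg _
  omega

lemma cnt_eq_zero (T : Fin a → Fin b → Fin (c + 1)) {r : ℕ} {v : ℤ} (hv : (c : ℤ) < v) :
    cnt T r v = 0 := by
  unfold cnt
  by_cases h : r < a
  · rw [dif_pos h, Finset.card_eq_zero, filter_eq_empty_iff]
    intro j _
    have h2 : (T ⟨r, h⟩ j : ℕ) ≤ c := Nat.lt_succ_iff.mp (T ⟨r, h⟩ j).isLt
    push_neg
    have h3 : ((T ⟨r, h⟩ j : ℕ) : ℤ) ≤ (c : ℤ) := by exact_mod_cast h2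
    omega
  · rw [dif_neg h]

lemma cnt_anti (T : Fin a → Fin b → Fin (c + 1)) {r : ℕ} {v v' : ℤ} (h : v ≤ v') :
    cnt T r v' ≤ cnt T r v := by
  unfold cnt
  by_cases hr : r < a
  · rw [dif_pos hr, dif_pos hr]
    apply card_le_card
    intro j hj
    simp only [mem_filter, mem_univ, true_and] at *
    omega
  · rw [dif_neg hr]
    simp
lemma cnt_row_anti (T : Fin a → Fin b → Fin (c + 1))
    (hcol : ∀ i i' : Fin a, ∀ j : Fin b, i ≤ i' → T i' j ≤ T i j)
    {r r' : ℕ} (h : r ≤ r') (v : ℤ) : cnt T r' v ≤ cnt T r v := by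
  unfold cnt
  by_cases hr' : r' < a
  · have hr : r < a := lt_of_le_of_lt h hr'
    rw [dif_pos hr', dif_pos hr]
    apply card_le_card
    intro j hj
    simp only [mem_filter, mem_univ, true_and] at *
    have h1 := hcol ⟨r, hr⟩ ⟨r', hr'⟩ j (by simpa [Fin.le_def])
    have h2 : ((T ⟨r', hr'⟩ j : ℕ) : ℤ) ≤ ((T ⟨r, hr⟩ j : ℕ) : ℤ) := by exact_mod_cast h1
    omega
  · rw [dif_neg hr']
    omega

lemma lt_cnt_iff (T : Fin a → Fin b → Fin (c + 1))
    (hrow : ∀ i : Fin a, ∀ j j' : Fin b, j ≤ j' → T i j' ≤ T i j)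
    (i : Fin a) (v : ℤ) (j : Fin b) :
    (j : ℕ) < cnt T i v ↔ v ≤ ((T i j : ℕ) : ℤ) := by
  unfold cnt
  rw [dif_pos i.isLt]
  have heta : (⟨(i : ℕ), i.isLt⟩ : Fin a) = i := rfl
  rw [heta]
  rw [← downclosed_iff (S := (univ : Finset (Fin b)).filter fun j : Fin b => v ≤ ((T i j : ℕ) : ℤ))]
  · simp
  · intro x x' hx hx'
    simp only [mem_filter, mem_univ, true_and] at *
    have h1 := hrow i x x' hx
    have h2 : ((T i x' : ℕ) : ℤ) ≤ ((T i x : ℕ) : ℤ) := by exact_mod_cast h1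
    omega


variable (s : ℤ)

def Fc (T : Fin a → Fin b → Fin (c + 1)) (i : Fin a) : ℕ := cnt T (i : ℕ) (s + (i : ℕ) + 1)

def Lc (T : Fin a → Fin b → Fin (c + 1)) (i : Fin a) : ℕ :=
  max (cnt T (i : ℕ) (s + (i : ℕ) + 2)) (cnt T ((i : ℕ) + 1) (s + (i : ℕ) + 1))

def Uc (T : Fin a → Fin b → Fin (c + 1)) (i : Fin a) : ℕ :=
  min (if (i : ℕ) = 0 then b else cnt T ((i : ℕ) - 1) (s + (i : ℕ) + 1))
    (cnt T (i : ℕ) (s + (i : ℕ)))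

def Fc' (T : Fin a → Fin b → Fin (c + 1)) (i : Fin a) : ℕ := Lc s T i + Uc s T i - Fc s T i

def Phi (T : Fin a → Fin b → Fin (c + 1)) : Fin a → Fin b → Fin (c + 1) := fun i j =>
  if (j : ℕ) < cnt T (i : ℕ) (s + (i : ℕ) + 2) ∨ cnt T (i : ℕ) (s + (i : ℕ)) ≤ (j : ℕ) then T i j
  else if (j : ℕ) < Fc' s T i then ⟨min c (s + (i : ℕ) + 1).toNat, by omega⟩
  else ⟨min c (s + (i : ℕ)).toNat, by omega⟩

def cnt' (T : Fin a → Fin b → Fin (c + 1)) (i : Fin a) (v : ℤ) : ℕ :=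
  if v = s + (i : ℕ) + 1 then Fc' s T i else cnt T (i : ℕ) v

variable {s}

lemma Lc_le_Fc (T : Fin a → Fin b → Fin (c + 1))
    (hcol : ∀ i i' : Fin a, ∀ j : Fin b, i ≤ i' → T i' j ≤ T i j) (i : Fin a) :
    Lc s T i ≤ Fc s T i :=
  max_le (cnt_anti T (by omega)) (cnt_row_anti T hcol (by omega) _)

lemma Fc_le_Uc (T : Fin a → Fin b → Fin (c + 1))
    (hcol : ∀ i i' : Fin a, ∀ j : Fin b, i ≤ i' → T i' j ≤ T i j) (i : Fin a) :
    Fc s T i ≤ Uc s T i := by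
  apply le_min
  · by_cases hi0 : (i : ℕ) = 0
    · rw [if_pos hi0]; exact cnt_le_b T _ _
    · rw [if_neg hi0]; exact cnt_row_anti T hcol (by omega) _
  · exact cnt_anti T (by omega)

lemma le_Phi_iff (T : Fin a → Fin b → Fin (c + 1))
    (hrow : ∀ i : Fin a, ∀ j j' : Fin b, j ≤ j' → T i j' ≤ T i j)
    (hcol : ∀ i i' : Fin a, ∀ j : Fin b, i ≤ i' → T i' j ≤ T i j)
    (hs : 1 - (a : ℤ) ≤ s) (hs' : s ≤ (c : ℤ) - 1)
    (i : Fin a) (v : ℤ) (j : Fin b) :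
    v ≤ ((Phi s T i j : ℕ) : ℤ) ↔ (j : ℕ) < cnt' s T i v := by
  have hA := lt_cnt_iff T hrow i (s + (i : ℕ) + 2) j
  have hB := lt_cnt_iff T hrow i (s + (i : ℕ)) j
  have hV := fun w => lt_cnt_iff T hrow i w j
  have hLF : Lc s T i ≤ Fc s T i := Lc_le_Fc T hcol i
  have hFU : Fc s T i ≤ Uc s T i := Fc_le_Uc T hcol i
  have hdef : Fc' s T i = Lc s T i + Uc s T i - Fc s T i := rfl
  have hAL : cnt T (i : ℕ) (s + (i : ℕ) + 2) ≤ Lc s T i := le_max_left _ _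
  have hUB : Uc s T i ≤ cnt T (i : ℕ) (s + (i : ℕ)) := min_le_right _ _
  have hTnn : (0 : ℤ) ≤ ((T i j : ℕ) : ℤ) := Int.ofNat_nonneg _
  have hTc : ((T i j : ℕ) : ℤ) ≤ (c : ℤ) := by
    have := Nat.lt_succ_iff.mp (T i j).isLt; exact_mod_cast this
  unfold Phi cnt'
  by_cases hout : (j : ℕ) < cnt T (i : ℕ) (s + (i : ℕ) + 2) ∨ cnt T (i : ℕ) (s + (i : ℕ)) ≤ (j : ℕ)
  · rw [if_pos hout]
    by_cases hv : v = s + (i : ℕ) + 1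
    · rw [if_pos hv]; subst hv
      rcases hout with h1 | h2
      · have hT := hA.mp h1
        constructor
        · intro _; omega
        · intro _; omega
      · have hT : ¬ (s + (i : ℕ) ≤ ((T i j : ℕ) : ℤ)) := fun h => by
          have := hB.mpr h; omega
        constructor
        · intro h; omega
        · intro h; omega
    · rw [if_neg hv]; exact (hV v).symm
  · rw [if_neg hout]
    push_neg at hout
    obtain ⟨hA', hB'⟩ := hout
    have hTlo : s + (i : ℕ) ≤ ((T i j : ℕ) : ℤ) := hB.mp hB'
    have hThi : ¬ (s + (i : ℕ) + 2 ≤ ((T i j : ℕ) : ℤ)) := fun h => by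
      have := hA.mpr h; omega
    by_cases hj : (j : ℕ) < Fc' s T i
    · rw [if_pos hj]
      have hrange : 0 ≤ s + (i : ℕ) + 1 ∧ s + (i : ℕ) + 1 ≤ (c : ℤ) := by
        constructor
        · omega
        · by_cases hi0 : (i : ℕ) = 0
          · omega
          · by_contra hgt
            push_neg at hgt
            have h1 : cnt T ((i : ℕ) - 1) (s + (i : ℕ) + 1) = 0 := cnt_eq_zero T (by omega)
            have h2 : Uc s T i = 0 := by unfold Uc; rw [if_neg hi0]; omega
            have h3 : cnt T (i : ℕ) (s + (i : ℕ) + 2) = 0 := cnt_eq_zero T (by omega)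
            have h4 : cnt T ((i : ℕ) + 1) (s + (i : ℕ) + 1) = 0 := cnt_eq_zero T (by omega)
            have h5 : Lc s T i = 0 := by unfold Lc; rw [h3, h4]; simp
            omega
      have hval : (((⟨min c (s + (i : ℕ) + 1).toNat, by omega⟩ : Fin (c + 1)) : ℕ) : ℤ)
          = s + (i : ℕ) + 1 := by
        simp only [Fin.val_mk]; omega
      rw [hval]
      by_cases hv : v = s + (i : ℕ) + 1
      · rw [if_pos hv]; subst hv; constructor <;> intro <;> omega
      · rw [if_neg hv]
        rcases le_or_gt v (s + (i : ℕ)) with hvle | hvgt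
        · have : cnt T (i : ℕ) (s + (i : ℕ)) ≤ cnt T (i : ℕ) v := cnt_anti T hvle
          constructor <;> intro <;> omega
        · have hv2 : s + (i : ℕ) + 2 ≤ v := by omega
          have : cnt T (i : ℕ) v ≤ cnt T (i : ℕ) (s + (i : ℕ) + 2) := cnt_anti T hv2
          constructor <;> intro <;> omega
    · rw [if_neg hj]
      have hrange : 0 ≤ s + (i : ℕ) ∧ s + (i : ℕ) ≤ (c : ℤ) := by
        constructor
        · by_contra hlt
          push_neg at hlt
          have hia : (i : ℕ) + 1 < a := by
            have := i.isLt; omega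
          have h1 : cnt T ((i : ℕ) + 1) (s + (i : ℕ) + 1) = b := cnt_eq_b T hia (by omega)
          have h2 : b ≤ Lc s T i := by
            unfold Lc; rw [h1]; exact le_max_right _ _
          have := j.isLt
          omega
        · omega
      have hval : (((⟨min c (s + (i : ℕ)).toNat, by omega⟩ : Fin (c + 1)) : ℕ) : ℤ)
          = s + (i : ℕ) := by
        simp only [Fin.val_mk]; omega
      rw [hval]
      by_cases hv : v = s + (i : ℕ) + 1
      · rw [if_pos hv]; subst hv; constructor <;> intro <;> omega
      · rw [if_neg hv]
        rcases le_or_gt v (s + (i : ℕ)) with hvle | hvgt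
        · have : cnt T (i : ℕ) (s + (i : ℕ)) ≤ cnt T (i : ℕ) v := cnt_anti T hvle
          constructor <;> intro <;> omega
        · have hv2 : s + (i : ℕ) + 2 ≤ v := by omega
          have : cnt T (i : ℕ) v ≤ cnt T (i : ℕ) (s + (i : ℕ) + 2) := cnt_anti T hv2
          constructor <;> intro <;> omega


lemma Fc'_le_Uc (T : Fin a → Fin b → Fin (c + 1))
    (hcol : ∀ i i' : Fin a, ∀ j : Fin b, i ≤ i' → T i' j ≤ T i j) (i : Fin a) :
    Fc' s T i ≤ Uc s T i := by
  have h1 := Lc_le_Fc (s := s) T hcol i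
  have h2 := Fc_le_Uc (s := s) T hcol i
  unfold Fc'
  omega

lemma cnt'_le_b (T : Fin a → Fin b → Fin (c + 1))
    (hcol : ∀ i i' : Fin a, ∀ j : Fin b, i ≤ i' → T i' j ≤ T i j) (i : Fin a) (v : ℤ) :
    cnt' s T i v ≤ b := by
  unfold cnt'
  split
  · exact le_trans (Fc'_le_Uc T hcol i) (le_trans (min_le_right _ _) (cnt_le_b T _ _))
  · exact cnt_le_b T _ _

lemma cnt_Phi (T : Fin a → Fin b → Fin (c + 1))
    (hrow : ∀ i : Fin a, ∀ j j' : Fin b, j ≤ j' → T i j' ≤ T i j)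
    (hcol : ∀ i i' : Fin a, ∀ j : Fin b, i ≤ i' → T i' j ≤ T i j)
    (hs : 1 - (a : ℤ) ≤ s) (hs' : s ≤ (c : ℤ) - 1) (r : ℕ) (v : ℤ) :
    cnt (Phi s T) r v = if h : r < a then cnt' s T ⟨r, h⟩ v else 0 := by
  by_cases h : r < a
  · rw [dif_pos h]
    unfold cnt
    rw [dif_pos h]
    have heq : ((univ : Finset (Fin b)).filter fun j : Fin b =>
        v ≤ ((Phi s T ⟨r, h⟩ j : ℕ) : ℤ))
        = (univ.filter fun j : Fin b => (j : ℕ) < cnt' s T ⟨r, h⟩ v) := by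
      ext j
      simp only [mem_filter, mem_univ, true_and]
      exact le_Phi_iff T hrow hcol hs hs' ⟨r, h⟩ v j
    rw [heq, card_filter_lt (cnt'_le_b T hcol _ _)]
  · unfold cnt
    rw [dif_neg h, dif_neg h]

lemma cnt_Phi_nonspecial (T : Fin a → Fin b → Fin (c + 1))
    (hrow : ∀ i : Fin a, ∀ j j' : Fin b, j ≤ j' → T i j' ≤ T i j)
    (hcol : ∀ i i' : Fin a, ∀ j : Fin b, i ≤ i' → T i' j ≤ T i j)
    (hs : 1 - (a : ℤ) ≤ s) (hs' : s ≤ (c : ℤ) - 1) (r : ℕ) (v : ℤ)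
    (hv : v ≠ s + (r : ℤ) + 1) :
    cnt (Phi s T) r v = cnt T r v := by
  rw [cnt_Phi T hrow hcol hs hs']
  by_cases h : r < a
  · rw [dif_pos h]
    unfold cnt'
    rw [if_neg (by exact_mod_cast hv)]
  · rw [dif_neg h]
    unfold cnt
    rw [dif_neg h]

lemma Fc_Phi (T : Fin a → Fin b → Fin (c + 1))
    (hrow : ∀ i : Fin a, ∀ j j' : Fin b, j ≤ j' → T i j' ≤ T i j)
    (hcol : ∀ i i' : Fin a, ∀ j : Fin b, i ≤ i' → T i' j ≤ T i j)
    (hs : 1 - (a : ℤ) ≤ s) (hs' : s ≤ (c : ℤ) - 1) (i : Fin a) :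
    Fc s (Phi s T) i = Fc' s T i := by
  unfold Fc
  rw [cnt_Phi T hrow hcol hs hs', dif_pos i.isLt]
  unfold cnt'
  rw [if_pos rfl]

lemma Lc_Phi (T : Fin a → Fin b → Fin (c + 1))
    (hrow : ∀ i : Fin a, ∀ j j' : Fin b, j ≤ j' → T i j' ≤ T i j)
    (hcol : ∀ i i' : Fin a, ∀ j : Fin b, i ≤ i' → T i' j ≤ T i j)
    (hs : 1 - (a : ℤ) ≤ s) (hs' : s ≤ (c : ℤ) - 1) (i : Fin a) :
    Lc s (Phi s T) i = Lc s T i := by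
  unfold Lc
  rw [cnt_Phi_nonspecial T hrow hcol hs hs' _ _ (by omega),
    cnt_Phi_nonspecial T hrow hcol hs hs' _ _ (by push_cast; omega)]

lemma Uc_Phi (T : Fin a → Fin b → Fin (c + 1))
    (hrow : ∀ i : Fin a, ∀ j j' : Fin b, j ≤ j' → T i j' ≤ T i j)
    (hcol : ∀ i i' : Fin a, ∀ j : Fin b, i ≤ i' → T i' j ≤ T i j)
    (hs : 1 - (a : ℤ) ≤ s) (hs' : s ≤ (c : ℤ) - 1) (i : Fin a) :
    Uc s (Phi s T) i = Uc s T i := by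
  unfold Uc
  by_cases hi0 : (i : ℕ) = 0
  · rw [if_pos hi0, if_pos hi0,
      cnt_Phi_nonspecial T hrow hcol hs hs' _ _ (by omega)]
  · have h1 : 1 ≤ (i : ℕ) := by omega
    rw [if_neg hi0, if_neg hi0,
      cnt_Phi_nonspecial T hrow hcol hs hs' _ _ (by push_cast [Nat.cast_sub h1]; omega),
      cnt_Phi_nonspecial T hrow hcol hs hs' _ _ (by omega)]

lemma Fc'_Phi (T : Fin a → Fin b → Fin (c + 1))
    (hrow : ∀ i : Fin a, ∀ j j' : Fin b, j ≤ j' → T i j' ≤ T i j)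
    (hcol : ∀ i i' : Fin a, ∀ j : Fin b, i ≤ i' → T i' j ≤ T i j)
    (hs : 1 - (a : ℤ) ≤ s) (hs' : s ≤ (c : ℤ) - 1) (i : Fin a) :
    Fc' s (Phi s T) i = Fc s T i := by
  have h1 := Lc_le_Fc (s := s) T hcol i
  have h2 := Fc_le_Uc (s := s) T hcol i
  unfold Fc'
  rw [Fc_Phi T hrow hcol hs hs', Lc_Phi T hrow hcol hs hs', Uc_Phi T hrow hcol hs hs']
  unfold Fc'
  omega

lemma Phi_row (T : Fin a → Fin b → Fin (c + 1))
    (hrow : ∀ i : Fin a, ∀ j j' : Fin b, j ≤ j' → T i j' ≤ T i j)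
    (hcol : ∀ i i' : Fin a, ∀ j : Fin b, i ≤ i' → T i' j ≤ T i j)
    (hs : 1 - (a : ℤ) ≤ s) (hs' : s ≤ (c : ℤ) - 1) :
    ∀ i : Fin a, ∀ j j' : Fin b, j ≤ j' → Phi s T i j' ≤ Phi s T i j := by
  intro i j j' hjj
  have h1 := (le_Phi_iff T hrow hcol hs hs' i ((Phi s T i j' : ℕ) : ℤ) j').mpr
  have h2 := (le_Phi_iff T hrow hcol hs hs' i ((Phi s T i j' : ℕ) : ℤ) j).mpr
  have h3 := (le_Phi_iff T hrow hcol hs hs' i ((Phi s T i j' : ℕ) : ℤ) j').mp le_rfl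
  have hjj' : (j : ℕ) ≤ (j' : ℕ) := hjj
  have h4 : ((Phi s T i j' : ℕ) : ℤ) ≤ ((Phi s T i j : ℕ) : ℤ) := h2 (by omega)
  exact_mod_cast h4

lemma cnt'_row_adj (T : Fin a → Fin b → Fin (c + 1))
    (hrow : ∀ i : Fin a, ∀ j j' : Fin b, j ≤ j' → T i j' ≤ T i j)
    (hcol : ∀ i i' : Fin a, ∀ j : Fin b, i ≤ i' → T i' j ≤ T i j)
    (i i' : Fin a) (hii : (i' : ℕ) = (i : ℕ) + 1) (v : ℤ) :
    cnt' s T i' v ≤ cnt' s T i v := by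
  have hLF := Lc_le_Fc (s := s) T hcol i
  have hFU := Fc_le_Uc (s := s) T hcol i
  have hLF' := Lc_le_Fc (s := s) T hcol i'
  have hFU' := Fc_le_Uc (s := s) T hcol i'
  unfold cnt'
  by_cases hv1 : v = s + (i : ℕ) + 1
  · rw [if_pos hv1, if_neg (by omega : ¬ v = s + ((i' : ℕ) : ℤ) + 1)]
    have h1 : cnt T (i' : ℕ) v ≤ Lc s T i := by
      unfold Lc
      rw [hii, hv1]
      exact le_max_right _ _
    unfold Fc'
    omega
  · by_cases hv2 : v = s + (i' : ℕ) + 1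
    · rw [if_pos hv2, if_neg hv1]
      have h1 : Uc s T i' ≤ cnt T (i : ℕ) v := by
        unfold Uc
        refine le_trans (min_le_left _ _) ?_
        rw [if_neg (by omega : ¬ (i' : ℕ) = 0)]
        have he1 : (i' : ℕ) - 1 = (i : ℕ) := by omega
        rw [he1, ← hv2]
      have h2 : Fc' s T i' ≤ Uc s T i' := by unfold Fc'; omega
      omega
    · rw [if_neg hv1, if_neg hv2]
      exact cnt_row_anti T hcol (by omega) v

lemma antitone_of_adj {α : Type*} [Preorder α] {n : ℕ} (f : Fin n → α)
    (h : ∀ i i' : Fin n, (i' : ℕ) = (i : ℕ) + 1 → f i' ≤ f i) :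
    ∀ i i' : Fin n, i ≤ i' → f i' ≤ f i := by
  intro i i' hii
  have hle : (i : ℕ) ≤ (i' : ℕ) := hii
  obtain ⟨k, hk⟩ : ∃ k, (i' : ℕ) = (i : ℕ) + k := ⟨(i' : ℕ) - (i : ℕ), by omega⟩
  clear hii hle
  induction k generalizing i' with
  | zero =>
    have : i = i' := Fin.ext (by omega)
    subst this
    exact le_refl _
  | succ k ih =>
    have hlt : (i : ℕ) + k < n := by have := i'.isLt; omega
    have h1 := h ⟨(i : ℕ) + k, hlt⟩ i' (by omega)
    exact le_trans h1 (ih ⟨(i : ℕ) + k, hlt⟩ rfl)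

lemma Phi_col (T : Fin a → Fin b → Fin (c + 1))
    (hrow : ∀ i : Fin a, ∀ j j' : Fin b, j ≤ j' → T i j' ≤ T i j)
    (hcol : ∀ i i' : Fin a, ∀ j : Fin b, i ≤ i' → T i' j ≤ T i j)
    (hs : 1 - (a : ℤ) ≤ s) (hs' : s ≤ (c : ℤ) - 1) :
    ∀ i i' : Fin a, ∀ j : Fin b, i ≤ i' → Phi s T i' j ≤ Phi s T i j := by
  intro i i' j hii
  refine antitone_of_adj (fun i => Phi s T i j) ?_ i i' hii
  intro k k' hkk
  have h1 := (le_Phi_iff T hrow hcol hs hs' k' ((Phi s T k' j : ℕ) : ℤ) j).mp le_rfl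
  have h2 := cnt'_row_adj (s := s) T hrow hcol k k' hkk ((Phi s T k' j : ℕ) : ℤ)
  have h3 := (le_Phi_iff T hrow hcol hs hs' k ((Phi s T k' j : ℕ) : ℤ) j).mpr (by omega)
  exact_mod_cast h3

lemma Phi_Phi (T : Fin a → Fin b → Fin (c + 1))
    (hrow : ∀ i : Fin a, ∀ j j' : Fin b, j ≤ j' → T i j' ≤ T i j)
    (hcol : ∀ i i' : Fin a, ∀ j : Fin b, i ≤ i' → T i' j ≤ T i j)
    (hs : 1 - (a : ℤ) ≤ s) (hs' : s ≤ (c : ℤ) - 1) :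
    Phi s (Phi s T) = T := by
  have hrow' := Phi_row T hrow hcol hs hs'
  have hcol' := Phi_col T hrow hcol hs hs'
  funext i j
  have hc' : ∀ v : ℤ, cnt' s (Phi s T) i v = cnt T (i : ℕ) v := by
    intro v
    unfold cnt'
    by_cases hv : v = s + (i : ℕ) + 1
    · rw [if_pos hv, Fc'_Phi T hrow hcol hs hs']
      subst hv
      rfl
    · rw [if_neg hv, cnt_Phi_nonspecial T hrow hcol hs hs' _ _ hv]
  have h1 : ∀ v : ℤ, v ≤ ((Phi s (Phi s T) i j : ℕ) : ℤ) ↔ v ≤ ((T i j : ℕ) : ℤ) := by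
    intro v
    rw [le_Phi_iff (Phi s T) hrow' hcol' hs hs' i v j, hc' v,
      lt_cnt_iff T hrow i v j]
  have h2 := (h1 ((Phi s (Phi s T) i j : ℕ) : ℤ)).mp le_rfl
  have h3 := (h1 ((T i j : ℕ) : ℤ)).mpr le_rfl
  apply Fin.ext
  omega


lemma card_level (T : Fin a → Fin b → Fin (c + 1)) (i : Fin a) (w : ℤ) :
    ((univ : Finset (Fin b)).filter fun j : Fin b => ((T i j : ℕ) : ℤ) = w).card
      = cnt T (i : ℕ) w - cnt T (i : ℕ) (w + 1) := by
  have hsplit : ((univ : Finset (Fin b)).filter fun j : Fin b => w ≤ ((T i j : ℕ) : ℤ))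
      = ((univ : Finset (Fin b)).filter fun j : Fin b => ((T i j : ℕ) : ℤ) = w)
        ∪ ((univ : Finset (Fin b)).filter fun j : Fin b => w + 1 ≤ ((T i j : ℕ) : ℤ)) := by
    ext j
    simp only [mem_filter, mem_univ, true_and, mem_union]
    omega
  have hdisj : Disjoint ((univ : Finset (Fin b)).filter fun j : Fin b => ((T i j : ℕ) : ℤ) = w)
      ((univ : Finset (Fin b)).filter fun j : Fin b => w + 1 ≤ ((T i j : ℕ) : ℤ)) := by
    rw [Finset.disjoint_left]
    intro j hj hj'
    simp only [mem_filter, mem_univ, true_and] at hj hj'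
    omega
  have hcnt : ∀ v : ℤ, cnt T (i : ℕ) v
      = ((univ : Finset (Fin b)).filter fun j : Fin b => v ≤ ((T i j : ℕ) : ℤ)).card := by
    intro v
    unfold cnt
    rw [dif_pos i.isLt]
  rw [hcnt, hcnt, hsplit, card_union_of_disjoint hdisj]
  omega

/-- number of cells with `T i j - i = s`. -/
def mcount (s : ℤ) (T : Fin a → Fin b → Fin (c + 1)) : ℕ :=
  ((univ : Finset (Fin a × Fin b)).filter fun p : Fin a × Fin b =>
    ((T p.1 p.2 : ℕ) : ℤ) - ((p.1 : ℕ) : ℤ) = s).card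

lemma mcount_eq_sum (T : Fin a → Fin b → Fin (c + 1)) :
    mcount s T = ∑ i : Fin a, (cnt T (i : ℕ) (s + (i : ℕ)) - cnt T (i : ℕ) (s + (i : ℕ) + 1)) := by
  unfold mcount
  rw [Finset.card_filter, Fintype.sum_prod_type]
  refine Finset.sum_congr rfl ?_
  intro i _
  have h1 : ∀ j : Fin b, (((T i j : ℕ) : ℤ) - ((i : ℕ) : ℤ) = s)
      = (((T i j : ℕ) : ℤ) = s + ((i : ℕ) : ℤ)) := by
    intro j
    apply propext
    constructor <;> intro <;> omega
  calc ∑ j : Fin b, (if ((T i j : ℕ) : ℤ) - ((i : ℕ) : ℤ) = s then 1 else 0)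
      = ∑ j : Fin b, (if ((T i j : ℕ) : ℤ) = s + ((i : ℕ) : ℤ) then 1 else 0) := by
        refine Finset.sum_congr rfl ?_
        intro j _
        exact if_congr (by constructor <;> intro <;> omega) rfl rfl
    _ = ((univ : Finset (Fin b)).filter fun j : Fin b =>
          ((T i j : ℕ) : ℤ) = s + ((i : ℕ) : ℤ)).card := (Finset.card_filter _ _).symm
    _ = cnt T (i : ℕ) (s + (i : ℕ)) - cnt T (i : ℕ) (s + (i : ℕ) + 1) := card_level T i _

lemma range_telescope (m bb : ℕ) (A B : ℕ → ℕ) (hB0 : B 0 ≤ bb) (hBn : B (m + 1) = 0) :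
    ∑ r ∈ Finset.range (m + 1),
        (max (A r) (B (r + 1)) + min (if r = 0 then bb else A (r - 1)) (B r))
      = ∑ r ∈ Finset.range (m + 1), (A r + B r) := by
  rw [Finset.sum_add_distrib, Finset.sum_add_distrib]
  have hmax : ∑ r ∈ Finset.range (m + 1), max (A r) (B (r + 1))
      = (∑ r ∈ Finset.range m, max (A r) (B (r + 1))) + A m := by
    rw [Finset.sum_range_succ, hBn]
    simp
  have hmin : ∑ r ∈ Finset.range (m + 1), min (if r = 0 then bb else A (r - 1)) (B r)
      = B 0 + ∑ r ∈ Finset.range m, min (A r) (B (r + 1)) := by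
    rw [Finset.sum_range_succ']
    have hterm : ∀ r : ℕ, min (if r + 1 = 0 then bb else A (r + 1 - 1)) (B (r + 1))
        = min (A r) (B (r + 1)) := by
      intro r
      congr 1
    rw [if_pos rfl, min_eq_right hB0]
    simp only [hterm]
    omega
  have hA : ∑ r ∈ Finset.range (m + 1), A r = (∑ r ∈ Finset.range m, A r) + A m :=
    Finset.sum_range_succ _ _
  have hB : ∑ r ∈ Finset.range (m + 1), B r = B 0 + ∑ r ∈ Finset.range m, B (r + 1) := by
    rw [Finset.sum_range_succ']
    omega
  have hmm : ∑ r ∈ Finset.range m, max (A r) (B (r + 1))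
        + ∑ r ∈ Finset.range m, min (A r) (B (r + 1))
      = ∑ r ∈ Finset.range m, A r + ∑ r ∈ Finset.range m, B (r + 1) := by
    rw [← Finset.sum_add_distrib, ← Finset.sum_add_distrib]
    refine Finset.sum_congr rfl ?_
    intro r _
    rw [add_comm (max _ _), min_add_max]
  omega


lemma sum_LcUc (T : Fin a → Fin b → Fin (c + 1)) (ha : 0 < a) :
    ∑ i : Fin a, (Lc s T i + Uc s T i)
      = ∑ i : Fin a, (cnt T (i : ℕ) (s + (i : ℕ) + 2) + cnt T (i : ℕ) (s + (i : ℕ))) := by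
  obtain ⟨m, rfl⟩ : ∃ m, a = m + 1 := ⟨a - 1, by omega⟩
  set A : ℕ → ℕ := fun r => cnt T r (s + r + 2) with hA
  set B : ℕ → ℕ := fun r => cnt T r (s + r) with hB
  have hL : ∀ i : Fin (m + 1), Lc s T i = max (A (i : ℕ)) (B ((i : ℕ) + 1)) := by
    intro i
    unfold Lc
    congr 1
    rw [hB]
    congr 1
    push_cast
    ring
  have hU : ∀ i : Fin (m + 1),
      Uc s T i = min (if (i : ℕ) = 0 then b else A ((i : ℕ) - 1)) (B (i : ℕ)) := by
    intro i
    unfold Uc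
    by_cases hi0 : (i : ℕ) = 0
    · rw [if_pos hi0, if_pos hi0]
    · rw [if_neg hi0, if_neg hi0]
      congr 1
      rw [hA]
      congr 1
      have h1 : 1 ≤ (i : ℕ) := by omega
      push_cast [Nat.cast_sub h1]
      ring
  calc ∑ i : Fin (m + 1), (Lc s T i + Uc s T i)
      = ∑ i : Fin (m + 1), (fun r : ℕ =>
          max (A r) (B (r + 1)) + min (if r = 0 then b else A (r - 1)) (B r)) (i : ℕ) := by
        refine Finset.sum_congr rfl ?_
        intro i _
        rw [hL i, hU i]
    _ = ∑ r ∈ Finset.range (m + 1),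
          (max (A r) (B (r + 1)) + min (if r = 0 then b else A (r - 1)) (B r)) :=
        Fin.sum_univ_eq_sum_range
          (fun r : ℕ => max (A r) (B (r + 1)) + min (if r = 0 then b else A (r - 1)) (B r))
          (m + 1)
    _ = ∑ r ∈ Finset.range (m + 1), (A r + B r) := by
        refine range_telescope m b A B ?_ ?_
        · exact cnt_le_b T 0 _
        · show cnt T (m + 1) (s + ((m + 1 : ℕ) : ℤ)) = 0
          simp only [cnt]
          rw [dif_neg (lt_irrefl (m + 1))]
    _ = ∑ i : Fin (m + 1), (fun r : ℕ => A r + B r) (i : ℕ) :=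
        (Fin.sum_univ_eq_sum_range (fun r : ℕ => A r + B r) (m + 1)).symm
    _ = ∑ i : Fin (m + 1), (cnt T (i : ℕ) (s + (i : ℕ) + 2) + cnt T (i : ℕ) (s + (i : ℕ))) := rfl

lemma mcount_Phi (T : Fin a → Fin b → Fin (c + 1))
    (hrow : ∀ i : Fin a, ∀ j j' : Fin b, j ≤ j' → T i j' ≤ T i j)
    (hcol : ∀ i i' : Fin a, ∀ j : Fin b, i ≤ i' → T i' j ≤ T i j)
    (hs : 1 - (a : ℤ) ≤ s) (hs' : s ≤ (c : ℤ) - 1) (ha : 0 < a) :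
    mcount (s + 1) (Phi s T) = mcount s T := by
  rw [mcount_eq_sum, mcount_eq_sum]
  have hLeq : ∀ i : Fin a, cnt (Phi s T) (i : ℕ) (s + 1 + (i : ℕ)) = Fc' s T i := by
    intro i
    have h1 : s + 1 + ((i : ℕ) : ℤ) = s + (i : ℕ) + 1 := by ring
    rw [h1, ← Fc_Phi T hrow hcol hs hs' i]
    rfl
  have hReq : ∀ i : Fin a,
      cnt (Phi s T) (i : ℕ) (s + 1 + (i : ℕ) + 1) = cnt T (i : ℕ) (s + (i : ℕ) + 2) := by
    intro i
    have h1 : s + 1 + ((i : ℕ) : ℤ) + 1 = s + (i : ℕ) + 2 := by ring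
    rw [h1, cnt_Phi_nonspecial T hrow hcol hs hs' _ _ (by omega)]
  have hstep : ∑ i : Fin a, (cnt (Phi s T) (i : ℕ) (s + 1 + (i : ℕ))
        - cnt (Phi s T) (i : ℕ) (s + 1 + (i : ℕ) + 1))
      = ∑ i : Fin a, (Fc' s T i - cnt T (i : ℕ) (s + (i : ℕ) + 2)) := by
    refine Finset.sum_congr rfl ?_
    intro i _
    rw [hLeq i, hReq i]
  rw [hstep]
  have e1 := sum_LcUc (s := s) T ha
  have h2 : ∀ i : Fin a, (Fc' s T i - cnt T (i : ℕ) (s + (i : ℕ) + 2))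
      + (cnt T (i : ℕ) (s + (i : ℕ) + 2) + Fc s T i) = Lc s T i + Uc s T i := by
    intro i
    have hLF := Lc_le_Fc (s := s) T hcol i
    have hFU := Fc_le_Uc (s := s) T hcol i
    have hAL : cnt T (i : ℕ) (s + (i : ℕ) + 2) ≤ Lc s T i := le_max_left _ _
    unfold Fc'
    omega
  have h3 : ∀ i : Fin a, (cnt T (i : ℕ) (s + (i : ℕ)) - Fc s T i)
      + (cnt T (i : ℕ) (s + (i : ℕ) + 2) + Fc s T i)
      = cnt T (i : ℕ) (s + (i : ℕ) + 2) + cnt T (i : ℕ) (s + (i : ℕ)) := by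
    intro i
    have hFU := Fc_le_Uc (s := s) T hcol i
    have hUB : Uc s T i ≤ cnt T (i : ℕ) (s + (i : ℕ)) := min_le_right _ _
    omega
  have hsum1 : (∑ i : Fin a, (Fc' s T i - cnt T (i : ℕ) (s + (i : ℕ) + 2)))
      + (∑ i : Fin a, (cnt T (i : ℕ) (s + (i : ℕ) + 2) + Fc s T i))
      = ∑ i : Fin a, (Lc s T i + Uc s T i) := by
    rw [← Finset.sum_add_distrib]
    exact Finset.sum_congr rfl (fun i _ => h2 i)
  have hsum2 : (∑ i : Fin a, (cnt T (i : ℕ) (s + (i : ℕ)) - Fc s T i))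
      + (∑ i : Fin a, (cnt T (i : ℕ) (s + (i : ℕ) + 2) + Fc s T i))
      = ∑ i : Fin a, (cnt T (i : ℕ) (s + (i : ℕ) + 2) + cnt T (i : ℕ) (s + (i : ℕ))) := by
    rw [← Finset.sum_add_distrib]
    exact Finset.sum_congr rfl (fun i _ => h3 i)
  have hgoal : ∑ i : Fin a, (cnt T (i : ℕ) (s + (i : ℕ)) - cnt T (i : ℕ) (s + (i : ℕ) + 1))
      = ∑ i : Fin a, (cnt T (i : ℕ) (s + (i : ℕ)) - Fc s T i) := rfl
  rw [hgoal]
  omega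

end BK
end RowSumAux

-- GLUE (appended after problem definitions)
open RowSumAux in
lemma pp_mem_iff {a b c : ℕ} (T : Fin a → Fin b → Fin (c + 1)) :
    T ∈ PlanePartitions a b c ↔
      (∀ i : Fin a, ∀ j j' : Fin b, j ≤ j' → T i j' ≤ T i j) ∧
      (∀ i i' : Fin a, ∀ j : Fin b, i ≤ i' → T i' j ≤ T i j) := by
  unfold PlanePartitions
  simp only [Finset.mem_filter, Finset.mem_univ, true_and]

open RowSumAux in
lemma pp_swap (a b c : ℕ) (ha : 0 < a) (s : ℤ) (hs : 1 - (a : ℤ) ≤ s) (hs' : s ≤ (c : ℤ) - 1) :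
    ∑ T ∈ PlanePartitions a b c, mcount s T
      = ∑ T ∈ PlanePartitions a b c, mcount (s + 1) T := by
  refine Finset.sum_nbij' (Phi s) (Phi s) ?_ ?_ ?_ ?_ ?_
  · intro T hT
    obtain ⟨h1, h2⟩ := (pp_mem_iff T).mp hT
    exact (pp_mem_iff _).mpr ⟨Phi_row T h1 h2 hs hs', Phi_col T h1 h2 hs hs'⟩
  · intro T hT
    obtain ⟨h1, h2⟩ := (pp_mem_iff T).mp hT
    exact (pp_mem_iff _).mpr ⟨Phi_row T h1 h2 hs hs', Phi_col T h1 h2 hs hs'⟩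
  · intro T hT
    obtain ⟨h1, h2⟩ := (pp_mem_iff T).mp hT
    exact Phi_Phi T h1 h2 hs hs'
  · intro T hT
    obtain ⟨h1, h2⟩ := (pp_mem_iff T).mp hT
    exact Phi_Phi T h1 h2 hs hs'
  · intro T hT
    obtain ⟨h1, h2⟩ := (pp_mem_iff T).mp hT
    exact (mcount_Phi T h1 h2 hs hs' ha).symm

open RowSumAux in
lemma pp_const (a b c : ℕ) (ha : 0 < a) :
    ∀ s : ℤ, 1 - (a : ℤ) ≤ s → s ≤ (c : ℤ) →
      ∑ T ∈ PlanePartitions a b c, mcount s T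
        = ∑ T ∈ PlanePartitions a b c, mcount (1 - (a : ℤ)) T := by
  intro s hs hsc
  refine Int.le_induction (motive := fun s _ => s ≤ (c : ℤ) →
    ∑ T ∈ PlanePartitions a b c, mcount s T
      = ∑ T ∈ PlanePartitions a b c, mcount (1 - (a : ℤ)) T) ?_ ?_ s hs hsc
  · intro _
    rfl
  · intro n hn ih hc1
    rw [← pp_swap a b c ha n hn (by omega)]
    exact ih (by omega)

open RowSumAux in
lemma mcount_total (a b c : ℕ) (ha : 0 < a) (T : Fin a → Fin b → Fin (c + 1)) :
    ∑ s ∈ Finset.Icc (1 - (a : ℤ)) (c : ℤ), mcount s T = a * b := by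
  have hinc : ∀ p : Fin a × Fin b, p ∈ (univ : Finset (Fin a × Fin b)) →
      ((T p.1 p.2 : ℕ) : ℤ) - ((p.1 : ℕ) : ℤ) ∈ Finset.Icc (1 - (a : ℤ)) (c : ℤ) := by
    intro p _
    rw [Finset.mem_Icc]
    have h1 : (T p.1 p.2 : ℕ) < c + 1 := (T p.1 p.2).isLt
    have h2 : (p.1 : ℕ) < a := p.1.isLt
    omega
  have h := Finset.card_eq_sum_card_fiberwise hinc
  rw [Finset.card_univ, Fintype.card_prod, Fintype.card_fin, Fintype.card_fin] at h
  unfold mcount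
  rw [← h]


open RowSumAux in
theorem row_sum_of_probabilities (a b c : ℕ) (ha : 0 < a) (hb : 0 < b) (hc : 0 < c)
    (y₀ : ℤ) (hy0 : 0 ≤ y₀) (hy1 : y₀ ≤ (a : ℤ) + c - 1) :
    ∑ x ∈ Finset.Icc (1 : ℤ) ((a : ℤ) + b - 1), P a b c x y₀
      = (a : ℚ) * b / ((a : ℚ) + c) := by
  set s₀ : ℤ := y₀ + 1 - a with hs₀
  -- Step 1: for each T, the x-sum of inner cards is mcount s₀ T
  have step1 : ∀ T : Fin a → Fin b → Fin (c + 1),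
      ∑ x ∈ Finset.Icc (1 : ℤ) ((a : ℤ) + b - 1),
        ((univ : Finset (Fin a × Fin b)).filter (fun p : Fin a × Fin b =>
          ((p.2 : ℕ) : ℤ) - ((p.1 : ℕ) : ℤ) + (a : ℤ) = x ∧
          ((T p.1 p.2 : ℕ) : ℤ) + (a : ℤ) - (((p.1 : ℕ) : ℤ) + 1) = y₀)).card
      = mcount s₀ T := by
    intro T
    have hinc : ∀ p : Fin a × Fin b,
        p ∈ (univ : Finset (Fin a × Fin b)).filter (fun p : Fin a × Fin b =>
          ((T p.1 p.2 : ℕ) : ℤ) - ((p.1 : ℕ) : ℤ) = s₀) →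
        ((p.2 : ℕ) : ℤ) - ((p.1 : ℕ) : ℤ) + (a : ℤ) ∈ Finset.Icc (1 : ℤ) ((a : ℤ) + b - 1) := by
      intro p _
      rw [Finset.mem_Icc]
      have h1 : (p.1 : ℕ) < a := p.1.isLt
      have h2 : (p.2 : ℕ) < b := p.2.isLt
      omega
    have h := Finset.card_eq_sum_card_fiberwise hinc
    have hfib : ∀ x : ℤ,
        (((univ : Finset (Fin a × Fin b)).filter (fun p : Fin a × Fin b =>
            ((T p.1 p.2 : ℕ) : ℤ) - ((p.1 : ℕ) : ℤ) = s₀)).filter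
          (fun p => ((p.2 : ℕ) : ℤ) - ((p.1 : ℕ) : ℤ) + (a : ℤ) = x))
        = (univ : Finset (Fin a × Fin b)).filter (fun p : Fin a × Fin b =>
          ((p.2 : ℕ) : ℤ) - ((p.1 : ℕ) : ℤ) + (a : ℤ) = x ∧
          ((T p.1 p.2 : ℕ) : ℤ) + (a : ℤ) - (((p.1 : ℕ) : ℤ) + 1) = y₀) := by
      intro x
      rw [Finset.filter_filter]
      apply Finset.filter_congr
      intro p _
      constructor
      · rintro ⟨h1, h2⟩
        exact ⟨h2, by omega⟩
      · rintro ⟨h1, h2⟩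
        exact ⟨by omega, h1⟩
    unfold mcount
    rw [h]
    refine Finset.sum_congr rfl ?_
    intro x _
    rw [hfib x]
  -- Step 2: rewrite the LHS
  have hNpos : 0 < (PlanePartitions a b c).card := by
    rw [Finset.card_pos]
    refine ⟨fun _ _ => 0, ?_⟩
    rw [pp_mem_iff]
    exact ⟨fun _ _ _ _ => le_refl _, fun _ _ _ _ => le_refl _⟩
  set N : ℕ := (PlanePartitions a b c).card with hN
  have hLHS : ∑ x ∈ Finset.Icc (1 : ℤ) ((a : ℤ) + b - 1), P a b c x y₀
      = ((∑ T ∈ PlanePartitions a b c, mcount s₀ T : ℕ) : ℚ) / (N : ℚ) := by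
    unfold P
    rw [← Finset.sum_div]
    congr 1
    rw [Finset.sum_comm, Nat.cast_sum]
    refine Finset.sum_congr rfl ?_
    intro T _
    rw [← step1 T, Nat.cast_sum]
  rw [hLHS]
  -- Step 3: the key count
  have hs₀mem : 1 - (a : ℤ) ≤ s₀ ∧ s₀ ≤ (c : ℤ) := by omega
  have hconst := pp_const a b c ha
  have htot : ∑ s ∈ Finset.Icc (1 - (a : ℤ)) (c : ℤ),
      (∑ T ∈ PlanePartitions a b c, mcount s T) = N * (a * b) := by
    rw [Finset.sum_comm]
    rw [Finset.sum_congr rfl (fun T _ => mcount_total a b c ha T)]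
    rw [Finset.sum_const, smul_eq_mul]
  have hcard : (Finset.Icc (1 - (a : ℤ)) (c : ℤ)).card = a + c := by
    rw [Int.card_Icc]
    omega
  have hconstsum : ∑ s ∈ Finset.Icc (1 - (a : ℤ)) (c : ℤ),
      (∑ T ∈ PlanePartitions a b c, mcount s T)
      = (a + c) * (∑ T ∈ PlanePartitions a b c, mcount (1 - (a : ℤ)) T) := by
    calc ∑ s ∈ Finset.Icc (1 - (a : ℤ)) (c : ℤ), (∑ T ∈ PlanePartitions a b c, mcount s T)
        = ∑ s ∈ Finset.Icc (1 - (a : ℤ)) (c : ℤ),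
            (∑ T ∈ PlanePartitions a b c, mcount (1 - (a : ℤ)) T) :=
          Finset.sum_congr rfl (fun s hs =>
            hconst s (Finset.mem_Icc.mp hs).1 (Finset.mem_Icc.mp hs).2)
      _ = (a + c) * (∑ T ∈ PlanePartitions a b c, mcount (1 - (a : ℤ)) T) := by
          rw [Finset.sum_const, smul_eq_mul, hcard]
  have hkey : (a + c) * (∑ T ∈ PlanePartitions a b c, mcount s₀ T) = N * (a * b) := by
    rw [hconst s₀ hs₀mem.1 hs₀mem.2, ← hconstsum, htot]
  -- Step 4: finish in ℚ
  have haq : (0 : ℚ) < (a : ℚ) := by exact_mod_cast ha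
  have hcq : (0 : ℚ) ≤ (c : ℚ) := by positivity
  have hac : ((a : ℚ) + c) ≠ 0 := by linarith
  have hNne : (N : ℚ) ≠ 0 := Nat.cast_ne_zero.mpr (by omega)
  rw [div_eq_div_iff hNne hac]
  have hcast := congrArg (fun n : ℕ => (n : ℚ)) hkey
  push_cast at hcast ⊢
  linear_combination hcast
end

section
/- Let a, b, c be positive integers and let x₀ be an integer with 1 ≤ x₀ ≤ a+b−1. Then Σ_{y=0}^{a+c-1} P_{a,b,c}(x₀, y) equals x₀ if 1 ≤ x₀ ≤ min(a,b); equals min(a,b) if min(a,b) ≤ x₀ ≤ max(a,b); and equals a+b−x₀ if max(a,b) ≤ x₀ ≤ a+b−1. -/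
open Finset

lemma PP_nonempty (a b c : ℕ) : (PlanePartitions a b c).Nonempty := by
  refine ⟨fun _ _ => 0, ?_⟩
  simp [PlanePartitions]

lemma diag_card (a b : ℕ) (x₀ : ℤ) :
    (univ.filter (fun p : Fin a × Fin b =>
        ((p.2 : ℕ) : ℤ) - ((p.1 : ℕ) : ℤ) + (a : ℤ) = x₀)).card
      = (Finset.Icc (max 0 ((a : ℤ) - x₀)) (min ((a : ℤ) - 1) ((a : ℤ) + b - 1 - x₀))).card := by
  apply Finset.card_bij (fun p _ => ((p.1 : ℕ) : ℤ))
  · rintro ⟨i, j⟩ hp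
    simp only [mem_filter, mem_univ, true_and] at hp
    have hi := i.isLt
    have hj := j.isLt
    simp only [mem_Icc, le_max_iff, max_le_iff, le_min_iff, min_le_iff]
    omega
  · rintro ⟨i, j⟩ hp ⟨i', j'⟩ hp' h
    simp only [mem_filter, mem_univ, true_and] at hp hp'
    have h1 : (i : ℕ) = (i' : ℕ) := by exact_mod_cast h
    have h2 : (j : ℕ) = (j' : ℕ) := by omega
    simp only [Prod.mk.injEq]
    exact ⟨Fin.ext h1, Fin.ext h2⟩
  · intro n hn
    simp only [mem_Icc, le_min_iff, max_le_iff] at hn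
    obtain ⟨⟨hn0, hn1⟩, hn2, hn3⟩ := hn
    have hia : n.toNat < a := by omega
    have hjb : (x₀ - a + n).toNat < b := by omega
    refine ⟨(⟨n.toNat, hia⟩, ⟨(x₀ - a + n).toNat, hjb⟩), ?_, ?_⟩
    · simp only [mem_filter, mem_univ, true_and]
      push_cast
      omega
    · push_cast
      omega

lemma fiber_sum (a b c : ℕ) (x₀ : ℤ) (T : Fin a → Fin b → Fin (c + 1)) :
    ∑ y ∈ Finset.Icc (0 : ℤ) ((a : ℤ) + c - 1),
      ((univ.filter (fun p : Fin a × Fin b =>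
          ((p.2 : ℕ) : ℤ) - ((p.1 : ℕ) : ℤ) + (a : ℤ) = x₀ ∧
          ((T p.1 p.2 : ℕ) : ℤ) + (a : ℤ) - (((p.1 : ℕ) : ℤ) + 1) = y)).card)
    = (univ.filter (fun p : Fin a × Fin b =>
        ((p.2 : ℕ) : ℤ) - ((p.1 : ℕ) : ℤ) + (a : ℤ) = x₀)).card := by
  rw [Finset.card_eq_sum_card_fiberwise
    (f := fun p : Fin a × Fin b => ((T p.1 p.2 : ℕ) : ℤ) + (a : ℤ) - (((p.1 : ℕ) : ℤ) + 1))
    (t := Finset.Icc (0 : ℤ) ((a : ℤ) + c - 1))]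
  · apply Finset.sum_congr rfl
    intro y _
    rw [Finset.filter_filter]
  · rintro ⟨i, j⟩ _
    have hi := i.isLt
    have hT := (T i j).isLt
    simp only [Finset.mem_coe, mem_Icc]
    omega

lemma col_sum (a b c : ℕ) (x₀ : ℤ) :
    ∑ y ∈ Finset.Icc (0 : ℤ) ((a : ℤ) + c - 1), P a b c x₀ y
    = ((univ.filter (fun p : Fin a × Fin b =>
        ((p.2 : ℕ) : ℤ) - ((p.1 : ℕ) : ℤ) + (a : ℤ) = x₀)).card : ℚ) := by
  have hN : ((PlanePartitions a b c).card : ℚ) ≠ 0 := by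
    exact_mod_cast Finset.card_ne_zero_of_mem (PP_nonempty a b c).choose_spec
  unfold P
  rw [← Finset.sum_div]
  rw [Finset.sum_comm]
  have : ∀ T ∈ PlanePartitions a b c,
      ∑ y ∈ Finset.Icc (0 : ℤ) ((a : ℤ) + c - 1),
        ((univ.filter (fun p : Fin a × Fin b =>
            ((p.2 : ℕ) : ℤ) - ((p.1 : ℕ) : ℤ) + (a : ℤ) = x₀ ∧
            ((T p.1 p.2 : ℕ) : ℤ) + (a : ℤ) - (((p.1 : ℕ) : ℤ) + 1) = y)).card : ℚ)
      = ((univ.filter (fun p : Fin a × Fin b =>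
          ((p.2 : ℕ) : ℤ) - ((p.1 : ℕ) : ℤ) + (a : ℤ) = x₀)).card : ℚ) := by
    intro T _
    exact_mod_cast congrArg (Nat.cast : ℕ → ℚ) (fiber_sum a b c x₀ T)
  rw [Finset.sum_congr rfl this, Finset.sum_const, nsmul_eq_mul]
  field_simp

theorem column_sum_of_probabilities (a b c : ℕ) (ha : 0 < a) (hb : 0 < b) (hc : 0 < c)
    (x₀ : ℤ) (hx0 : 1 ≤ x₀) (hx1 : x₀ ≤ (a : ℤ) + b - 1) :
    (1 ≤ x₀ → x₀ ≤ min (a : ℤ) (b : ℤ) →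
      ∑ y ∈ Finset.Icc (0 : ℤ) ((a : ℤ) + c - 1), P a b c x₀ y = (x₀ : ℚ)) ∧
    (min (a : ℤ) (b : ℤ) ≤ x₀ → x₀ ≤ max (a : ℤ) (b : ℤ) →
      ∑ y ∈ Finset.Icc (0 : ℤ) ((a : ℤ) + c - 1), P a b c x₀ y
        = ((min (a : ℤ) (b : ℤ) : ℤ) : ℚ)) ∧
    (max (a : ℤ) (b : ℤ) ≤ x₀ → x₀ ≤ (a : ℤ) + b - 1 →
      ∑ y ∈ Finset.Icc (0 : ℤ) ((a : ℤ) + c - 1), P a b c x₀ y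
        = (a : ℚ) + b - (x₀ : ℚ)) := by
  have key : ∑ y ∈ Finset.Icc (0 : ℤ) ((a : ℤ) + c - 1), P a b c x₀ y
      = (((Finset.Icc (max 0 ((a : ℤ) - x₀))
            (min ((a : ℤ) - 1) ((a : ℤ) + b - 1 - x₀))).card : ℤ) : ℚ) := by
    rw [col_sum a b c x₀, diag_card a b x₀]
    norm_cast
  rw [Int.card_Icc] at key
  refine ⟨fun h1 h2 => ?_, fun h1 h2 => ?_, fun h1 h2 => ?_⟩
  · rw [key]
    have : ((min ((a:ℤ) - 1) ((a:ℤ) + b - 1 - x₀)) + 1 - max 0 ((a:ℤ) - x₀)).toNat = x₀.toNat := by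
      simp only [le_min_iff, min_le_iff, le_max_iff, max_le_iff] at *
      omega
    rw [this]
    have : ((x₀.toNat : ℤ) : ℚ) = (x₀ : ℚ) := by
      have : (x₀.toNat : ℤ) = x₀ := by omega
      exact_mod_cast congrArg (Int.cast : ℤ → ℚ) this
    exact_mod_cast this
  · rw [key]
    have : ((min ((a:ℤ) - 1) ((a:ℤ) + b - 1 - x₀)) + 1 - max 0 ((a:ℤ) - x₀)).toNat
        = (min (a:ℤ) (b:ℤ)).toNat := by
      simp only [le_min_iff, min_le_iff, le_max_iff, max_le_iff] at *
      omega
    rw [this]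
    have h3 : (((min (a:ℤ) (b:ℤ)).toNat : ℤ)) = min (a:ℤ) (b:ℤ) := by omega
    exact_mod_cast congrArg (Int.cast : ℤ → ℚ) h3
  · rw [key]
    have : ((min ((a:ℤ) - 1) ((a:ℤ) + b - 1 - x₀)) + 1 - max 0 ((a:ℤ) - x₀)).toNat
        = ((a:ℤ) + b - x₀).toNat := by
      simp only [le_min_iff, min_le_iff, le_max_iff, max_le_iff] at *
      omega
    rw [this]
    have h3 : ((((a:ℤ) + b - x₀).toNat : ℤ)) = (a:ℤ) + b - x₀ := by omega
    calc ((((a:ℤ) + b - x₀).toNat : ℤ) : ℚ) = (((a:ℤ) + b - x₀ : ℤ) : ℚ) := by exact_mod_cast congrArg (Int.cast : ℤ → ℚ) h3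
    _ = (a : ℚ) + b - x₀ := by push_cast; ring
end

section
/- Let a, b, c be positive integers with a ≤ b and let x₀ be an integer with 1 ≤ x₀ ≤ a+b−1. Then Σ_{y=0}^{a+c-1} P_{a,b,c}(x₀, y) · (y − (a+c−1)/2) equals (−a² − ab − ac + bc + a·x₀ + b·x₀)·x₀ / (2(a+b)) if 1 ≤ x₀ ≤ a; equals a·c·(a + b − 2x₀) / (2(a+b)) if a ≤ x₀ ≤ b; and equals (−b² − ab − bc + ac + a·x₀ + b·x₀)·(a + b − x₀) / (2(a+b)) if b ≤ x₀ ≤ a+b−1. -/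
open Finset

namespace PPaux

/-- extended entries: rows `≤ 0` and columns `≤ 0` give `c`, rows `> a` and columns `> b` give 0. -/
def ext (a b c : ℕ) (T : Fin a → Fin b → Fin (c + 1)) (i j : ℤ) : ℤ :=
  if hi : 1 ≤ i ∧ i ≤ (a : ℤ) then
    if hj : 1 ≤ j ∧ j ≤ (b : ℤ) then
      ((T ⟨(i - 1).toNat, by omega⟩ ⟨(j - 1).toNat, by omega⟩ : ℕ) : ℤ)
    else if j ≤ 0 then (c : ℤ) else 0
  else if i ≤ 0 then (c : ℤ) else 0

variable {a b c : ℕ}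

lemma mem_PP_iff {T : Fin a → Fin b → Fin (c + 1)} :
    T ∈ PlanePartitions a b c ↔
      ((∀ i : Fin a, ∀ j j' : Fin b, j ≤ j' → T i j' ≤ T i j) ∧
       (∀ i i' : Fin a, ∀ j : Fin b, i ≤ i' → T i' j ≤ T i j)) := by
  simp [PlanePartitions]

lemma ext_nonneg (T : Fin a → Fin b → Fin (c + 1)) (i j : ℤ) : 0 ≤ ext a b c T i j := by
  unfold ext; split_ifs <;> positivity

lemma ext_le_c (T : Fin a → Fin b → Fin (c + 1)) (i j : ℤ) : ext a b c T i j ≤ c := by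
  unfold ext
  split_ifs with h1 h2 h3
  · exact_mod_cast Nat.lt_succ_iff.mp (Fin.is_lt _)
  all_goals omega

lemma ext_real (T : Fin a → Fin b → Fin (c + 1)) (i : Fin a) (j : Fin b) :
    ext a b c T ((i : ℕ) + 1) ((j : ℕ) + 1) = (T i j : ℤ) := by
  rw [ext, dif_pos (by omega), dif_pos (by omega)]
  norm_num


lemma ext_eq_c_left (T : Fin a → Fin b → Fin (c + 1)) {i j : ℤ} (hi : i ≤ (a : ℤ)) (hj : j ≤ 0) :
    ext a b c T i j = c := by
  unfold ext; split_ifs <;> omega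

lemma ext_eq_c_top (T : Fin a → Fin b → Fin (c + 1)) {i : ℤ} (j : ℤ) (hi : i ≤ 0) :
    ext a b c T i j = c := by
  unfold ext; split_ifs <;> omega

lemma ext_eq_zero_right (T : Fin a → Fin b → Fin (c + 1)) {i j : ℤ} (hi : 1 ≤ i)
    (hj : (b : ℤ) + 1 ≤ j) : ext a b c T i j = 0 := by
  unfold ext; split_ifs <;> omega

lemma ext_eq_zero_bot (T : Fin a → Fin b → Fin (c + 1)) {i : ℤ} (j : ℤ) (hi : (a : ℤ) + 1 ≤ i) :
    ext a b c T i j = 0 := by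
  unfold ext; split_ifs <;> omega

lemma ext_anti_j {T : Fin a → Fin b → Fin (c + 1)} (hT : T ∈ PlanePartitions a b c)
    {i j j' : ℤ} (h : j ≤ j') : ext a b c T i j' ≤ ext a b c T i j := by
  obtain ⟨hrow, -⟩ := mem_PP_iff.mp hT
  unfold ext
  split_ifs
  all_goals first
    | omega
    | exact Int.ofNat_le.mpr (hrow _ _ _ (by simp [Fin.le_def]; omega))

lemma ext_anti_i {T : Fin a → Fin b → Fin (c + 1)} (hT : T ∈ PlanePartitions a b c)
    {i i' j : ℤ} (h : i ≤ i') : ext a b c T i' j ≤ ext a b c T i j := by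
  obtain ⟨-, hcol⟩ := mem_PP_iff.mp hT
  unfold ext
  split_ifs
  all_goals first
    | omega
    | exact Int.ofNat_le.mpr (hcol _ _ _ (by simp [Fin.le_def]; omega))


def hiB (a b c : ℕ) (T : Fin a → Fin b → Fin (c + 1)) (i j : ℤ) : ℤ :=
  min (ext a b c T i (j - 1)) (ext a b c T (i - 1) j)

def loB (a b c : ℕ) (T : Fin a → Fin b → Fin (c + 1)) (i j : ℤ) : ℤ :=
  max (ext a b c T i (j + 1)) (ext a b c T (i + 1) j)

/-- the "complement on the diagonal x₀" involution. -/
def invol (a b c : ℕ) (x₀ : ℤ) (T : Fin a → Fin b → Fin (c + 1)) :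
    Fin a → Fin b → Fin (c + 1) :=
  fun i j =>
    if ((j : ℕ) : ℤ) - ((i : ℕ) : ℤ) + (a : ℤ) = x₀ then
      ⟨(hiB a b c T ((i : ℕ) + 1) ((j : ℕ) + 1) + loB a b c T ((i : ℕ) + 1) ((j : ℕ) + 1)
          - ((T i j : ℕ) : ℤ)).toNat ⊓ c, by omega⟩
    else T i j

variable {T : Fin a → Fin b → Fin (c + 1)} {x₀ : ℤ}

lemma le_hiB (hT : T ∈ PlanePartitions a b c) (i : Fin a) (j : Fin b) :
    ((T i j : ℕ) : ℤ) ≤ hiB a b c T ((i : ℕ) + 1) ((j : ℕ) + 1) := by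
  rw [← ext_real (T := T) i j]
  exact le_min (ext_anti_j hT (by omega)) (ext_anti_i hT (by omega))

lemma loB_le (hT : T ∈ PlanePartitions a b c) (i : Fin a) (j : Fin b) :
    loB a b c T ((i : ℕ) + 1) ((j : ℕ) + 1) ≤ ((T i j : ℕ) : ℤ) := by
  rw [← ext_real (T := T) i j]
  exact max_le (ext_anti_j hT (by omega)) (ext_anti_i hT (by omega))

lemma hiB_le_c (i j : ℤ) : hiB a b c T i j ≤ c :=
  le_trans (min_le_left _ _) (ext_le_c _ _ _)

lemma loB_nonneg (i j : ℤ) : 0 ≤ loB a b c T i j :=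
  le_trans (ext_nonneg _ _ _) (le_max_left _ _)

lemma invol_apply_off (i : Fin a) (j : Fin b)
    (hd : ((j : ℕ) : ℤ) - ((i : ℕ) : ℤ) + (a : ℤ) ≠ x₀) :
    invol a b c x₀ T i j = T i j := by
  rw [invol, if_neg hd]

lemma invol_apply_diag (hT : T ∈ PlanePartitions a b c) (i : Fin a) (j : Fin b)
    (hd : ((j : ℕ) : ℤ) - ((i : ℕ) : ℤ) + (a : ℤ) = x₀) :
    ((invol a b c x₀ T i j : ℕ) : ℤ)
      = hiB a b c T ((i : ℕ) + 1) ((j : ℕ) + 1) + loB a b c T ((i : ℕ) + 1) ((j : ℕ) + 1)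
        - ((T i j : ℕ) : ℤ) := by
  have h1 := le_hiB hT i j
  have h2 := loB_le hT i j
  have h3 := hiB_le_c (T := T) ((i : ℕ) + 1 : ℤ) ((j : ℕ) + 1 : ℤ)
  have h4 := loB_nonneg (T := T) ((i : ℕ) + 1 : ℤ) ((j : ℕ) + 1 : ℤ)
  rw [invol, if_pos hd]
  simp only [Fin.val_mk]
  push_cast
  omega

lemma ext_invol_off (i j : ℤ) (hd : j - i + (a : ℤ) ≠ x₀) :
    ext a b c (invol a b c x₀ T) i j = ext a b c T i j := by
  unfold ext
  split_ifs with h1 h2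
  · have : invol a b c x₀ T ⟨(i - 1).toNat, by omega⟩ ⟨(j - 1).toNat, by omega⟩
        = T ⟨(i - 1).toNat, by omega⟩ ⟨(j - 1).toNat, by omega⟩ := by
      apply invol_apply_off
      simp only [Fin.val_mk]
      omega
    rw [this]
  all_goals rfl

lemma hiB_invol (i j : ℤ) (hd : j - i + (a : ℤ) = x₀) :
    hiB a b c (invol a b c x₀ T) i j = hiB a b c T i j := by
  unfold hiB
  rw [ext_invol_off _ _ (by omega), ext_invol_off _ _ (by omega)]

lemma loB_invol (i j : ℤ) (hd : j - i + (a : ℤ) = x₀) :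
    loB a b c (invol a b c x₀ T) i j = loB a b c T i j := by
  unfold loB
  rw [ext_invol_off _ _ (by omega), ext_invol_off _ _ (by omega)]

lemma invol_mem (hT : T ∈ PlanePartitions a b c) :
    invol a b c x₀ T ∈ PlanePartitions a b c := by
  obtain ⟨hrow, hcol⟩ := mem_PP_iff.mp hT
  rw [mem_PP_iff]
  constructor
  · intro i j j' hjj'
    rcases eq_or_lt_of_le hjj' with rfl | hlt
    · exact le_refl _
    have hlt' : ((j : ℕ) : ℤ) < ((j' : ℕ) : ℤ) := by exact_mod_cast hlt
    by_cases hd : ((j : ℕ) : ℤ) - ((i : ℕ) : ℤ) + (a : ℤ) = x₀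
    · have hd' : ((j' : ℕ) : ℤ) - ((i : ℕ) : ℤ) + (a : ℤ) ≠ x₀ := by omega
      rw [invol_apply_off i j' hd']
      rw [Fin.le_def, ← Nat.cast_le (α := ℤ)]
      rw [invol_apply_diag hT i j hd]
      have e1 : ((T i j' : ℕ) : ℤ) ≤ loB a b c T ((i : ℕ) + 1) ((j : ℕ) + 1) := by
        refine le_trans ?_ (le_max_left _ _)
        rw [← ext_real (T := T) i j']
        exact ext_anti_j hT (by omega)
      have e2 := le_hiB hT i j
      omega
    · by_cases hd' : ((j' : ℕ) : ℤ) - ((i : ℕ) : ℤ) + (a : ℤ) = x₀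
      · rw [invol_apply_off i j hd]
        rw [Fin.le_def, ← Nat.cast_le (α := ℤ)]
        rw [invol_apply_diag hT i j' hd']
        have e1 : hiB a b c T ((i : ℕ) + 1) ((j' : ℕ) + 1) ≤ ((T i j : ℕ) : ℤ) := by
          refine le_trans (min_le_left _ _) ?_
          rw [← ext_real (T := T) i j]
          exact ext_anti_j hT (by omega)
        have e2 := loB_le hT i j'
        omega
      · rw [invol_apply_off i j hd, invol_apply_off i j' hd']
        exact hrow i j j' hjj'
  · intro i i' j hii'
    rcases eq_or_lt_of_le hii' with rfl | hlt
    · exact le_refl _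
    have hlt' : ((i : ℕ) : ℤ) < ((i' : ℕ) : ℤ) := by exact_mod_cast hlt
    by_cases hd : ((j : ℕ) : ℤ) - ((i : ℕ) : ℤ) + (a : ℤ) = x₀
    · have hd' : ((j : ℕ) : ℤ) - ((i' : ℕ) : ℤ) + (a : ℤ) ≠ x₀ := by omega
      rw [invol_apply_off i' j hd']
      rw [Fin.le_def, ← Nat.cast_le (α := ℤ)]
      rw [invol_apply_diag hT i j hd]
      have e1 : ((T i' j : ℕ) : ℤ) ≤ loB a b c T ((i : ℕ) + 1) ((j : ℕ) + 1) := by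
        refine le_trans ?_ (le_max_right _ _)
        rw [← ext_real (T := T) i' j]
        exact ext_anti_i hT (by omega)
      have e2 := le_hiB hT i j
      omega
    · by_cases hd' : ((j : ℕ) : ℤ) - ((i' : ℕ) : ℤ) + (a : ℤ) = x₀
      · rw [invol_apply_off i j hd]
        rw [Fin.le_def, ← Nat.cast_le (α := ℤ)]
        rw [invol_apply_diag hT i' j hd']
        have e1 : hiB a b c T ((i' : ℕ) + 1) ((j : ℕ) + 1) ≤ ((T i j : ℕ) : ℤ) := by
          refine le_trans (min_le_right _ _) ?_
          rw [← ext_real (T := T) i j]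
          exact ext_anti_i hT (by omega)
        have e2 := loB_le hT i' j
        omega
      · rw [invol_apply_off i j hd, invol_apply_off i' j hd']
        exact hcol i i' j hii'

lemma invol_invol (hT : T ∈ PlanePartitions a b c) :
    invol a b c x₀ (invol a b c x₀ T) = T := by
  funext i j
  by_cases hd : ((j : ℕ) : ℤ) - ((i : ℕ) : ℤ) + (a : ℤ) = x₀
  · apply Fin.ext
    rw [← Nat.cast_inj (R := ℤ)]
    have h1 := invol_apply_diag (x₀ := x₀) (invol_mem (x₀ := x₀) hT) i j hd
    rw [hiB_invol _ _ (by omega), loB_invol _ _ (by omega), invol_apply_diag hT i j hd] at h1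
    omega
  · rw [invol_apply_off i j hd, invol_apply_off i j hd]


lemma ext_congr {T : Fin a → Fin b → Fin (c + 1)} {i i' j j' : ℤ} (h1 : i = i') (h2 : j = j') :
    ext a b c T i j = ext a b c T i' j' := by rw [h1, h2]

/-- the (extended) diagonal sum along the vertical line `x`. -/
def R (a b c : ℕ) (T : Fin a → Fin b → Fin (c + 1)) (x : ℤ) : ℤ :=
  ∑ k ∈ Finset.range a, ext a b c T ((k : ℤ) + 1) (x - (a : ℤ) + ((k : ℤ) + 1))

lemma key_cell (hT : T ∈ PlanePartitions a b c) (hx0 : 1 ≤ x₀) (hx1 : x₀ ≤ (a : ℤ) + b - 1)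
    (i : ℤ) (hi1 : 1 ≤ i) (hi2 : i ≤ (a : ℤ)) :
    ext a b c T i (x₀ - a + i) + ext a b c (invol a b c x₀ T) i (x₀ - a + i)
      = hiB a b c T i (x₀ - a + i) + loB a b c T i (x₀ - a + i) := by
  set j := x₀ - (a : ℤ) + i with hj
  rcases le_or_gt j 0 with hc1 | hc1
  · have y1 : ext a b c T i j = c := ext_eq_c_left T hi2 hc1
    have y1' : ext a b c (invol a b c x₀ T) i j = c := ext_eq_c_left _ hi2 hc1
    have y2 : ext a b c T i (j - 1) = c := ext_eq_c_left T hi2 (by omega)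
    have y3 : ext a b c T (i - 1) j = c := ext_eq_c_left T (by omega) hc1
    have y4 : ext a b c T (i + 1) j = c := ext_eq_c_left T (by omega) hc1
    unfold hiB loB
    rw [y1, y1', y2, y3, y4]
    have := ext_le_c T i (j + 1)
    omega
  rcases le_or_gt j (b : ℤ) with hc2 | hc2
  · have hj1 : 1 ≤ j := hc1
    set iF : Fin a := ⟨(i - 1).toNat, by omega⟩ with hiF
    set jF : Fin b := ⟨(j - 1).toNat, by omega⟩ with hjF
    have hvi : ((iF : ℕ) : ℤ) = i - 1 := by rw [hiF]; simp; omega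
    have hvj : ((jF : ℕ) : ℤ) = j - 1 := by rw [hjF]; simp; omega
    have hd : ((jF : ℕ) : ℤ) - ((iF : ℕ) : ℤ) + (a : ℤ) = x₀ := by rw [hvi, hvj]; omega
    have e0 : ext a b c T i j = ((T iF jF : ℕ) : ℤ) := by
      rw [ext, dif_pos ⟨hi1, hi2⟩, dif_pos ⟨hj1, hc2⟩]
    have e0' : ext a b c (invol a b c x₀ T) i j = ((invol a b c x₀ T iF jF : ℕ) : ℤ) := by
      rw [ext, dif_pos ⟨hi1, hi2⟩, dif_pos ⟨hj1, hc2⟩]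
    have e1 := invol_apply_diag hT iF jF hd
    have hvi1 : ((iF : ℕ) : ℤ) + 1 = i := by omega
    have hvj1 : ((jF : ℕ) : ℤ) + 1 = j := by omega
    rw [hvi1, hvj1] at e1
    rw [e0, e0', e1]
    ring
  · have hi2' : 2 ≤ i := by omega
    have z1 : ext a b c T i j = 0 := ext_eq_zero_right T hi1 (by omega)
    have z1' : ext a b c (invol a b c x₀ T) i j = 0 := ext_eq_zero_right _ hi1 (by omega)
    have z2 : ext a b c T i (j + 1) = 0 := ext_eq_zero_right T hi1 (by omega)
    have z3 : ext a b c T (i - 1) j = 0 := ext_eq_zero_right T (by omega) (by omega)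
    have z4 : ext a b c T (i + 1) j = 0 := ext_eq_zero_right T (by omega) (by omega)
    unfold hiB loB
    rw [z1, z1', z2, z3, z4]
    have := ext_nonneg T i (j - 1)
    omega

lemma R_invol_ne {y : ℤ} (hy : y ≠ x₀) :
    R a b c (invol a b c x₀ T) y = R a b c T y := by
  unfold R
  refine Finset.sum_congr rfl (fun k _ => ?_)
  exact ext_invol_off _ _ (by omega)

lemma R_invol (hT : T ∈ PlanePartitions a b c) (hx0 : 1 ≤ x₀) (hx1 : x₀ ≤ (a : ℤ) + b - 1) :
    R a b c T x₀ + R a b c (invol a b c x₀ T) x₀ = R a b c T (x₀ - 1) + R a b c T (x₀ + 1) := by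
  classical
  have hstep : ∀ k ∈ Finset.range a,
      ext a b c T ((k : ℤ) + 1) (x₀ - (a : ℤ) + ((k : ℤ) + 1))
        + ext a b c (invol a b c x₀ T) ((k : ℤ) + 1) (x₀ - (a : ℤ) + ((k : ℤ) + 1))
      = (ext a b c T ((k : ℤ) + 1) ((x₀ - 1) - (a : ℤ) + ((k : ℤ) + 1))
          + ext a b c T ((k : ℤ)) ((x₀ + 1) - (a : ℤ) + ((k : ℤ))))
        + ((max (ext a b c T ((k : ℤ) + 1 + 1) ((x₀ - 1) - (a : ℤ) + ((k : ℤ) + 1 + 1)))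
              (ext a b c T ((k : ℤ) + 1) ((x₀ + 1) - (a : ℤ) + ((k : ℤ) + 1))))
            - (max (ext a b c T ((k : ℤ) + 1) ((x₀ - 1) - (a : ℤ) + ((k : ℤ) + 1)))
              (ext a b c T ((k : ℤ)) ((x₀ + 1) - (a : ℤ) + ((k : ℤ)))))) := by
    intro k hk
    have hk' : (k : ℤ) < a := by exact_mod_cast Finset.mem_range.mp hk
    have key := key_cell hT hx0 hx1 ((k : ℤ) + 1) (by omega) (by omega)
    unfold hiB loB at key
    rw [ext_congr (T := T) (rfl : ((k:ℤ)+1) = ((k:ℤ)+1)) (by ring :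
          x₀ - (a : ℤ) + ((k : ℤ) + 1) - 1 = (x₀ - 1) - (a : ℤ) + ((k : ℤ) + 1)),
        ext_congr (T := T) (by ring : ((k:ℤ)+1) - 1 = ((k:ℤ))) (by ring :
          x₀ - (a : ℤ) + ((k : ℤ) + 1) = (x₀ + 1) - (a : ℤ) + ((k : ℤ))),
        ext_congr (T := T) (rfl : ((k:ℤ)+1) = ((k:ℤ)+1)) (by ring :
          x₀ - (a : ℤ) + ((k : ℤ) + 1) + 1 = (x₀ + 1) - (a : ℤ) + ((k : ℤ) + 1)),
        ext_congr (T := T) (rfl : ((k:ℤ)+1+1) = ((k:ℤ)+1+1)) (by ring :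
          x₀ - (a : ℤ) + ((k : ℤ) + 1) = (x₀ - 1) - (a : ℤ) + ((k : ℤ) + 1 + 1))] at key
    omega
  unfold R
  rw [← Finset.sum_add_distrib, Finset.sum_congr rfl hstep, Finset.sum_add_distrib,
    Finset.sum_add_distrib]
  have htel : ∑ k ∈ Finset.range a,
      ((max (ext a b c T ((k : ℤ) + 1 + 1) ((x₀ - 1) - (a : ℤ) + ((k : ℤ) + 1 + 1)))
          (ext a b c T ((k : ℤ) + 1) ((x₀ + 1) - (a : ℤ) + ((k : ℤ) + 1))))
        - (max (ext a b c T ((k : ℤ) + 1) ((x₀ - 1) - (a : ℤ) + ((k : ℤ) + 1)))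
          (ext a b c T ((k : ℤ)) ((x₀ + 1) - (a : ℤ) + ((k : ℤ)))))) =
      (max (ext a b c T ((a : ℤ) + 1) ((x₀ - 1) - (a : ℤ) + ((a : ℤ) + 1)))
          (ext a b c T ((a : ℤ)) ((x₀ + 1) - (a : ℤ) + ((a : ℤ)))))
        - (max (ext a b c T (((0:ℕ) : ℤ) + 1) ((x₀ - 1) - (a : ℤ) + (((0:ℕ) : ℤ) + 1)))
          (ext a b c T (((0:ℕ) : ℤ)) ((x₀ + 1) - (a : ℤ) + (((0:ℕ) : ℤ))))) := by
    have := Finset.sum_range_sub (f := fun n : ℕ =>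
      (max (ext a b c T ((n : ℤ) + 1) ((x₀ - 1) - (a : ℤ) + ((n : ℤ) + 1)))
        (ext a b c T ((n : ℤ)) ((x₀ + 1) - (a : ℤ) + ((n : ℤ)))))) a
    rw [← this]
    refine Finset.sum_congr rfl (fun k _ => ?_)
    push_cast
    ring_nf
  rw [htel]
  have hshift : ∑ k ∈ Finset.range a,
      ext a b c T ((k : ℤ)) ((x₀ + 1) - (a : ℤ) + ((k : ℤ))) =
      (∑ k ∈ Finset.range a, ext a b c T ((k : ℤ) + 1) ((x₀ + 1) - (a : ℤ) + ((k : ℤ) + 1)))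
        + ext a b c T (((0:ℕ) : ℤ)) ((x₀ + 1) - (a : ℤ) + (((0:ℕ) : ℤ)))
        - ext a b c T ((a : ℤ)) ((x₀ + 1) - (a : ℤ) + ((a : ℤ))) := by
    have h1 := Finset.sum_range_succ (f := fun n : ℕ =>
      ext a b c T ((n : ℤ)) ((x₀ + 1) - (a : ℤ) + ((n : ℤ)))) a
    have h2 := Finset.sum_range_succ' (f := fun n : ℕ =>
      ext a b c T ((n : ℤ)) ((x₀ + 1) - (a : ℤ) + ((n : ℤ)))) a
    have h3 : ∀ k : ℕ, ext a b c T (((k+1 : ℕ) : ℤ)) ((x₀ + 1) - (a : ℤ) + (((k+1:ℕ) : ℤ))) =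
        ext a b c T ((k : ℤ) + 1) ((x₀ + 1) - (a : ℤ) + ((k : ℤ) + 1)) := by
      intro k; exact ext_congr (by push_cast; ring) (by push_cast; ring)
    rw [Finset.sum_congr rfl (fun k _ => h3 k)] at h2
    omega
  rw [hshift]
  have hz1 : ext a b c T ((a : ℤ) + 1) ((x₀ - 1) - (a : ℤ) + ((a : ℤ) + 1)) = 0 :=
    ext_eq_zero_bot T _ (by omega)
  have hz2 : ext a b c T (((0:ℕ) : ℤ)) ((x₀ + 1) - (a : ℤ) + (((0:ℕ) : ℤ))) = c :=
    ext_eq_c_top T _ (by omega)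
  have hz3 : ext a b c T (((0:ℕ) : ℤ) + 1) ((x₀ - 1) - (a : ℤ) + (((0:ℕ) : ℤ) + 1)) ≤ c :=
    ext_le_c T _ _
  have hz4 : 0 ≤ ext a b c T ((a : ℤ)) ((x₀ + 1) - (a : ℤ) + ((a : ℤ))) :=
    ext_nonneg T _ _
  omega


def S (a b c : ℕ) (x : ℤ) : ℤ := ∑ T ∈ PlanePartitions a b c, R a b c T x

lemma S_rec (a b c : ℕ) (x₀ : ℤ) (hx0 : 1 ≤ x₀) (hx1 : x₀ ≤ (a : ℤ) + b - 1) :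
    2 * S a b c x₀ = S a b c (x₀ - 1) + S a b c (x₀ + 1) := by
  classical
  have h0 : ∑ T ∈ PlanePartitions a b c,
      (2 * R a b c T x₀ - (R a b c T (x₀ - 1) + R a b c T (x₀ + 1))) = 0 := by
    refine Finset.sum_involution (fun T _ => invol a b c x₀ T) ?_ ?_ ?_ ?_
    · intro T hT
      have key := R_invol (hT := hT) (x₀ := x₀) hx0 hx1
      have e1 : R a b c (invol a b c x₀ T) (x₀ - 1) = R a b c T (x₀ - 1) :=
        R_invol_ne (by omega)
      have e2 : R a b c (invol a b c x₀ T) (x₀ + 1) = R a b c T (x₀ + 1) :=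
        R_invol_ne (by omega)
      rw [e1, e2]
      beta_reduce
      omega
    · intro T hT hne
      intro hfix
      apply hne
      have key := R_invol (hT := hT) (x₀ := x₀) hx0 hx1
      have hfix' : invol a b c x₀ T = T := hfix
      rw [hfix'] at key
      omega
    · intro T hT
      exact invol_mem hT
    · intro T hT
      exact invol_invol hT
  have h1 : ∑ T ∈ PlanePartitions a b c,
      (2 * R a b c T x₀ - (R a b c T (x₀ - 1) + R a b c T (x₀ + 1)))
      = 2 * S a b c x₀ - (S a b c (x₀ - 1) + S a b c (x₀ + 1)) := by
    rw [Finset.sum_sub_distrib, Finset.sum_add_distrib, ← Finset.mul_sum]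
    rfl
  omega

lemma R_zero (T : Fin a → Fin b → Fin (c + 1)) : R a b c T 0 = (a : ℤ) * c := by
  unfold R
  rw [Finset.sum_congr rfl (fun k hk => ext_eq_c_left T
    (by have := Finset.mem_range.mp hk; omega) (by have := Finset.mem_range.mp hk; omega))]
  simp [mul_comm]

lemma R_ab (T : Fin a → Fin b → Fin (c + 1)) : R a b c T ((a : ℤ) + b) = 0 := by
  unfold R
  rw [Finset.sum_congr rfl (fun k hk => ext_eq_zero_right T (by omega) (by omega))]
  simp

lemma S_zero (a b c : ℕ) : S a b c 0 = ((PlanePartitions a b c).card : ℤ) * a * c := by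
  unfold S
  rw [Finset.sum_congr rfl (fun T _ => R_zero T)]
  rw [Finset.sum_const]
  push_cast
  ring

lemma S_ab (a b c : ℕ) : S a b c ((a : ℤ) + b) = 0 := by
  unfold S
  rw [Finset.sum_congr rfl (fun T _ => R_ab T)]
  simp

lemma S_linear (a b c : ℕ) : ∀ n : ℕ, (n : ℤ) ≤ (a : ℤ) + b →
    S a b c (n : ℤ) = S a b c 0 + (n : ℤ) * (S a b c 1 - S a b c 0) := by
  intro n
  induction n using Nat.strong_induction_on with
  | _ n ih =>
    match n with
    | 0 => intro _; simp
    | 1 => intro _; push_cast; ring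
    | (m + 2) =>
      intro hn
      have hm2 : ((m : ℤ) + 2) ≤ (a : ℤ) + b := by push_cast at hn ⊢; omega
      have h1 := ih (m + 1) (by omega) (by push_cast; omega)
      have h2 := ih m (by omega) (by push_cast at hn ⊢; omega)
      have hr := S_rec a b c ((m : ℤ) + 1) (by omega) (by omega)
      have e1 : ((m : ℤ) + 1) - 1 = (m : ℤ) := by ring
      have e2 : ((m : ℤ) + 1) + 1 = ((m + 2 : ℕ) : ℤ) := by push_cast; ring
      have e3 : (((m + 1 : ℕ)) : ℤ) = (m : ℤ) + 1 := by push_cast; ring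
      rw [e1, e2] at hr
      rw [e3] at h1
      push_cast at h1 h2 hr ⊢
      linear_combination (-1 : ℤ) * hr + 2 * h1 - h2

lemma S_eval (a b c : ℕ) (x : ℤ) (hx0 : 0 ≤ x) (hx1 : x ≤ (a : ℤ) + b) :
    ((a : ℤ) + b) * S a b c x
      = ((PlanePartitions a b c).card : ℤ) * a * c * ((a : ℤ) + b - x) := by
  have h1 := S_linear a b c x.toNat (by omega)
  have hx' : ((x.toNat : ℕ) : ℤ) = x := by omega
  rw [hx'] at h1
  have h2 := S_linear a b c (a + b) (by push_cast; omega)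
  have h3 : ((a + b : ℕ) : ℤ) = (a : ℤ) + b := by push_cast; ring
  rw [h3, S_ab] at h2
  have h4 := S_zero a b c
  linear_combination ((a : ℤ) + (b : ℤ)) * h1 + (-x) * h2 + (((a : ℤ) + (b : ℤ)) - x) * h4


lemma card_PP_pos (a b c : ℕ) : 0 < (PlanePartitions a b c).card := by
  refine Finset.card_pos.mpr ⟨fun _ _ => ⟨0, by omega⟩, ?_⟩
  rw [mem_PP_iff]
  exact ⟨fun _ _ _ _ => le_refl _, fun _ _ _ _ => le_refl _⟩

/-- collapsing the y-sum for a fixed plane partition. -/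
lemma collapse (T : Fin a → Fin b → Fin (c + 1)) (x₀ : ℤ) (μ : ℚ) :
    ∑ y ∈ Finset.Icc (0 : ℤ) ((a : ℤ) + c - 1),
      ((Finset.univ.filter (fun p : Fin a × Fin b =>
          ((p.2 : ℕ) : ℤ) - ((p.1 : ℕ) : ℤ) + (a : ℤ) = x₀ ∧
          ((T p.1 p.2 : ℕ) : ℤ) + (a : ℤ) - (((p.1 : ℕ) : ℤ) + 1) = y)).card : ℚ) * ((y : ℚ) - μ)
    = ∑ p ∈ Finset.univ.filter (fun p : Fin a × Fin b =>
          ((p.2 : ℕ) : ℤ) - ((p.1 : ℕ) : ℤ) + (a : ℤ) = x₀),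
        (((T p.1 p.2 : ℕ) : ℚ) + (a : ℚ) - (((p.1 : ℕ) : ℚ) + 1) - μ) := by
  classical
  have step1 : ∀ y ∈ Finset.Icc (0 : ℤ) ((a : ℤ) + c - 1),
      ((Finset.univ.filter (fun p : Fin a × Fin b =>
          ((p.2 : ℕ) : ℤ) - ((p.1 : ℕ) : ℤ) + (a : ℤ) = x₀ ∧
          ((T p.1 p.2 : ℕ) : ℤ) + (a : ℤ) - (((p.1 : ℕ) : ℤ) + 1) = y)).card : ℚ) * ((y : ℚ) - μ)
      = ∑ p : Fin a × Fin b,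
          (if ((p.2 : ℕ) : ℤ) - ((p.1 : ℕ) : ℤ) + (a : ℤ) = x₀ ∧
              ((T p.1 p.2 : ℕ) : ℤ) + (a : ℤ) - (((p.1 : ℕ) : ℤ) + 1) = y
            then ((y : ℚ) - μ) else 0) := by
    intro y _
    rw [Finset.card_filter]
    push_cast
    rw [Finset.sum_mul]
    refine Finset.sum_congr rfl (fun p _ => ?_)
    by_cases h : ((p.2 : ℕ) : ℤ) - ((p.1 : ℕ) : ℤ) + (a : ℤ) = x₀ ∧
        ((T p.1 p.2 : ℕ) : ℤ) + (a : ℤ) - (((p.1 : ℕ) : ℤ) + 1) = y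
    · simp [h]
    · simp [h]
  rw [Finset.sum_congr rfl step1, Finset.sum_comm]
  rw [Finset.sum_filter]
  refine Finset.sum_congr rfl (fun p _ => ?_)
  by_cases h1 : ((p.2 : ℕ) : ℤ) - ((p.1 : ℕ) : ℤ) + (a : ℤ) = x₀
  · simp only [h1, true_and, if_true]
    have hy : (((T p.1 p.2 : ℕ) : ℤ) + (a : ℤ) - (((p.1 : ℕ) : ℤ) + 1))
        ∈ Finset.Icc (0 : ℤ) ((a : ℤ) + c - 1) := by
      rw [Finset.mem_Icc]
      have h2 : ((T p.1 p.2 : ℕ)) < c + 1 := Fin.is_lt _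
      have h3 : ((p.1 : ℕ)) < a := Fin.is_lt _
      omega
    rw [Finset.sum_ite_eq (Finset.Icc (0 : ℤ) ((a : ℤ) + c - 1))
      (((T p.1 p.2 : ℕ) : ℤ) + (a : ℤ) - (((p.1 : ℕ) : ℤ) + 1)) (fun y => ((y : ℚ) - μ)),
      if_pos hy]
    push_cast
    ring
  · simp [h1]

/-- the diagonal cell sum in terms of `R`. -/
lemma W_eq_R (hT : T ∈ PlanePartitions a b c) (hx0 : 1 ≤ x₀) (hx1 : x₀ ≤ (a : ℤ) + b - 1) :
    ∑ p ∈ Finset.univ.filter (fun p : Fin a × Fin b =>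
        ((p.2 : ℕ) : ℤ) - ((p.1 : ℕ) : ℤ) + (a : ℤ) = x₀), ((T p.1 p.2 : ℕ) : ℤ)
    = R a b c T x₀ - (c : ℤ) * max ((a : ℤ) - x₀) 0 := by
  classical
  rw [Finset.sum_filter, Fintype.sum_prod_type]
  have inner : ∀ i : Fin a,
      (∑ j : Fin b, if ((j : ℕ) : ℤ) - ((i : ℕ) : ℤ) + (a : ℤ) = x₀
          then ((T i j : ℕ) : ℤ) else 0)
      = ext a b c T (((i : ℕ) : ℤ) + 1) (x₀ - (a : ℤ) + (((i : ℕ) : ℤ) + 1))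
        - (if ((i : ℕ) : ℤ) + 1 ≤ (a : ℤ) - x₀ then (c : ℤ) else 0) := by
    intro i
    set jv : ℤ := x₀ - (a : ℤ) + ((i : ℕ) : ℤ) with hjv
    rcases lt_or_ge jv 0 with hc1 | hc1
    · have hsum : (∑ j : Fin b, if ((j : ℕ) : ℤ) - ((i : ℕ) : ℤ) + (a : ℤ) = x₀
          then ((T i j : ℕ) : ℤ) else 0) = 0 := by
        refine Finset.sum_eq_zero (fun j _ => if_neg ?_)
        have : (0 : ℤ) ≤ ((j : ℕ) : ℤ) := Int.ofNat_nonneg _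
        omega
      rw [hsum, ext_eq_c_left T (by omega) (by omega), if_pos (by omega)]
      ring
    rcases lt_or_ge jv (b : ℤ) with hc2 | hc2
    · set j₀ : Fin b := ⟨jv.toNat, by omega⟩ with hj₀
      have hvj : ((j₀ : ℕ) : ℤ) = jv := by rw [hj₀]; simp; omega
      have hsum : (∑ j : Fin b, if ((j : ℕ) : ℤ) - ((i : ℕ) : ℤ) + (a : ℤ) = x₀
          then ((T i j : ℕ) : ℤ) else 0) = ((T i j₀ : ℕ) : ℤ) := by
        rw [Finset.sum_eq_single_of_mem j₀ (Finset.mem_univ _)]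
        · rw [if_pos (by omega)]
        · intro j _ hne
          refine if_neg (fun hcon => hne ?_)
          apply Fin.ext
          have : ((j : ℕ) : ℤ) = ((j₀ : ℕ) : ℤ) := by omega
          exact_mod_cast this
      rw [hsum]
      have hext : ext a b c T (((i : ℕ) : ℤ) + 1) (x₀ - (a : ℤ) + (((i : ℕ) : ℤ) + 1))
          = ((T i j₀ : ℕ) : ℤ) := by
        have h1 : (1 : ℤ) ≤ ((i : ℕ) : ℤ) + 1 ∧ ((i : ℕ) : ℤ) + 1 ≤ (a : ℤ) := by
          have := Fin.is_lt i; omega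
        have h2 : (1 : ℤ) ≤ x₀ - (a : ℤ) + (((i : ℕ) : ℤ) + 1) ∧
            x₀ - (a : ℤ) + (((i : ℕ) : ℤ) + 1) ≤ (b : ℤ) := by omega
        rw [ext, dif_pos h1, dif_pos h2]
        have eA : (⟨((((i : ℕ) : ℤ) + 1) - 1).toNat, by omega⟩ : Fin a) = i := by
          apply Fin.ext; simp
        have eB : (⟨((x₀ - (a : ℤ) + (((i : ℕ) : ℤ) + 1)) - 1).toNat, by omega⟩ : Fin b) = j₀ := by
          apply Fin.ext
          show (x₀ - (a : ℤ) + (((i : ℕ) : ℤ) + 1) - 1).toNat = jv.toNat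
          omega
        rw [eA, eB]
      rw [hext, if_neg (by omega)]
      ring
    · have hsum : (∑ j : Fin b, if ((j : ℕ) : ℤ) - ((i : ℕ) : ℤ) + (a : ℤ) = x₀
          then ((T i j : ℕ) : ℤ) else 0) = 0 := by
        refine Finset.sum_eq_zero (fun j _ => if_neg ?_)
        have : ((j : ℕ) : ℤ) < (b : ℤ) := by exact_mod_cast Fin.is_lt j
        omega
      rw [hsum, ext_eq_zero_right T (by omega) (by omega), if_neg (by omega)]
      ring
  rw [Finset.sum_congr rfl (fun i _ => inner i), Finset.sum_sub_distrib]
  have hR : (∑ i : Fin a, ext a b c T (((i : ℕ) : ℤ) + 1)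
      (x₀ - (a : ℤ) + (((i : ℕ) : ℤ) + 1))) = R a b c T x₀ := by
    rw [R]
    exact Fin.sum_univ_eq_sum_range
      (fun k => ext a b c T ((k : ℤ) + 1) (x₀ - (a : ℤ) + ((k : ℤ) + 1))) a
  have hC : (∑ i : Fin a, if ((i : ℕ) : ℤ) + 1 ≤ (a : ℤ) - x₀ then (c : ℤ) else 0)
      = (c : ℤ) * max ((a : ℤ) - x₀) 0 := by
    rw [Fin.sum_univ_eq_sum_range (fun k => if ((k : ℕ) : ℤ) + 1 ≤ (a : ℤ) - x₀
      then (c : ℤ) else 0) a]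
    set m : ℕ := ((a : ℤ) - x₀).toNat with hm
    have hma : m ≤ a := by omega
    have e1 : ∀ k ∈ Finset.range a, (if ((k : ℕ) : ℤ) + 1 ≤ (a : ℤ) - x₀
        then (c : ℤ) else 0) = (if k < m then (c : ℤ) else 0) := by
      intro k _
      by_cases h : k < m
      · rw [if_pos h, if_pos (by omega)]
      · rw [if_neg h, if_neg (by omega)]
    rw [Finset.sum_congr rfl e1]
    rw [← Finset.sum_subset (Finset.range_subset_range.mpr hma)
      (fun x _ hnx => if_neg (by simp at hnx ⊢; omega))]
    rw [Finset.sum_congr rfl (fun k hk => if_pos (Finset.mem_range.mp hk))]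
    rw [Finset.sum_const, Finset.card_range]
    have : ((m : ℕ) : ℤ) = max ((a : ℤ) - x₀) 0 := by omega
    simp [this.symm, mul_comm]
  rw [hR, hC]


lemma K_eq (a b : ℕ) (x₀ : ℤ) (hx0 : 1 ≤ x₀) (hx1 : x₀ ≤ (a : ℤ) + b - 1) (g : ℕ → ℚ) :
    ∑ p ∈ Finset.univ.filter (fun p : Fin a × Fin b =>
        ((p.2 : ℕ) : ℤ) - ((p.1 : ℕ) : ℤ) + (a : ℤ) = x₀), g (p.1 : ℕ)
    = ∑ k ∈ Finset.Ico (((a : ℤ) - x₀).toNat) (min a (((a : ℤ) + b - x₀).toNat)), g k := by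
  classical
  rw [Finset.sum_filter, Fintype.sum_prod_type]
  set l : ℕ := (((a : ℤ) - x₀)).toNat with hl
  set u : ℕ := min a (((a : ℤ) + b - x₀).toNat) with hu
  have hua : u ≤ a := by omega
  have inner : ∀ i : Fin a,
      (∑ j : Fin b, if ((j : ℕ) : ℤ) - ((i : ℕ) : ℤ) + (a : ℤ) = x₀ then g (i : ℕ) else 0)
      = (if l ≤ (i : ℕ) ∧ (i : ℕ) < u then g (i : ℕ) else 0) := by
    intro i
    set jv : ℤ := x₀ - (a : ℤ) + ((i : ℕ) : ℤ) with hjv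
    rcases lt_or_ge jv 0 with hc1 | hc1
    · rw [Finset.sum_eq_zero (fun j _ => if_neg (by
        have : (0 : ℤ) ≤ ((j : ℕ) : ℤ) := Int.ofNat_nonneg _
        omega))]
      rw [if_neg (by omega)]
    rcases lt_or_ge jv (b : ℤ) with hc2 | hc2
    · set j₀ : Fin b := ⟨jv.toNat, by omega⟩ with hj₀
      have hvj : ((j₀ : ℕ) : ℤ) = jv := by
        show ((jv.toNat : ℕ) : ℤ) = jv
        omega
      rw [Finset.sum_eq_single_of_mem j₀ (Finset.mem_univ _)
        (fun j _ hne => if_neg (fun hcon => hne (Fin.ext (by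
          have : ((j : ℕ) : ℤ) = ((j₀ : ℕ) : ℤ) := by omega
          exact_mod_cast this))))]
      rw [if_pos (by omega), if_pos (by
        constructor
        · omega
        · have := Fin.is_lt i; omega)]
    · rw [Finset.sum_eq_zero (fun j _ => if_neg (by
        have : ((j : ℕ) : ℤ) < (b : ℤ) := by exact_mod_cast Fin.is_lt j
        omega))]
      rw [if_neg (by have := Fin.is_lt i; omega)]
  rw [Finset.sum_congr rfl (fun i _ => inner i)]
  rw [Fin.sum_univ_eq_sum_range (fun k => if l ≤ k ∧ k < u then g k else 0) a]
  rw [← Finset.sum_filter]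
  congr 1
  ext k
  simp only [Finset.mem_filter, Finset.mem_range, Finset.mem_Ico]
  omega

lemma main_value (a b c : ℕ) (x₀ : ℤ) (hx0 : 1 ≤ x₀) (hx1 : x₀ ≤ (a : ℤ) + b - 1) :
    ∑ y ∈ Finset.Icc (0 : ℤ) ((a : ℤ) + c - 1),
        P a b c x₀ y * ((y : ℚ) - ((a : ℚ) + c - 1) / 2)
    = (((S a b c x₀ : ℤ) : ℚ)
        + ((PlanePartitions a b c).card : ℚ) *
          ((∑ k ∈ Finset.Ico (((a : ℤ) - x₀).toNat) (min a (((a : ℤ) + b - x₀).toNat)),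
              ((a : ℚ) - (k : ℚ) - 1 - ((a : ℚ) + c - 1) / 2))
            - (c : ℚ) * ((max ((a : ℤ) - x₀) 0 : ℤ) : ℚ)))
      / ((PlanePartitions a b c).card : ℚ) := by
  classical
  set μ : ℚ := ((a : ℚ) + c - 1) / 2 with hμ
  set N : ℕ := (PlanePartitions a b c).card with hN
  unfold P
  rw [Finset.sum_congr rfl (fun y _ => div_mul_eq_mul_div _ _ _), ← Finset.sum_div]
  congr 1
  rw [Finset.sum_congr rfl (fun y _ => Finset.sum_mul _ _ _), Finset.sum_comm]
  have per_T : ∀ T ∈ PlanePartitions a b c,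
      (∑ y ∈ Finset.Icc (0 : ℤ) ((a : ℤ) + c - 1),
        ((Finset.univ.filter (fun p : Fin a × Fin b =>
            ((p.2 : ℕ) : ℤ) - ((p.1 : ℕ) : ℤ) + (a : ℤ) = x₀ ∧
            ((T p.1 p.2 : ℕ) : ℤ) + (a : ℤ) - (((p.1 : ℕ) : ℤ) + 1) = y)).card : ℚ)
          * ((y : ℚ) - μ))
      = ((R a b c T x₀ : ℤ) : ℚ)
        + ((∑ k ∈ Finset.Ico (((a : ℤ) - x₀).toNat) (min a (((a : ℤ) + b - x₀).toNat)),
            ((a : ℚ) - (k : ℚ) - 1 - μ))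
          - (c : ℚ) * ((max ((a : ℤ) - x₀) 0 : ℤ) : ℚ)) := by
    intro T hT
    rw [collapse T x₀ μ]
    have split : ∀ p : Fin a × Fin b,
        (((T p.1 p.2 : ℕ) : ℚ) + (a : ℚ) - (((p.1 : ℕ) : ℚ) + 1) - μ)
        = ((T p.1 p.2 : ℕ) : ℚ) + ((a : ℚ) - ((p.1 : ℕ) : ℚ) - 1 - μ) := by
      intro p; ring
    rw [Finset.sum_congr rfl (fun p _ => split p), Finset.sum_add_distrib]
    have part1 : (∑ p ∈ Finset.univ.filter (fun p : Fin a × Fin b =>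
          ((p.2 : ℕ) : ℤ) - ((p.1 : ℕ) : ℤ) + (a : ℤ) = x₀), ((T p.1 p.2 : ℕ) : ℚ))
        = ((R a b c T x₀ : ℤ) : ℚ) - (c : ℚ) * ((max ((a : ℤ) - x₀) 0 : ℤ) : ℚ) := by
      have hW := W_eq_R (hT := hT) hx0 hx1
      have : (∑ p ∈ Finset.univ.filter (fun p : Fin a × Fin b =>
          ((p.2 : ℕ) : ℤ) - ((p.1 : ℕ) : ℤ) + (a : ℤ) = x₀),
          ((T p.1 p.2 : ℕ) : ℚ))
          = (((∑ p ∈ Finset.univ.filter (fun p : Fin a × Fin b =>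
          ((p.2 : ℕ) : ℤ) - ((p.1 : ℕ) : ℤ) + (a : ℤ) = x₀),
          ((T p.1 p.2 : ℕ) : ℤ)) : ℤ) : ℚ) := by
        push_cast
        rfl
      rw [this, hW]
      push_cast
      ring
    have part2 := K_eq a b x₀ hx0 hx1 (fun k => (a : ℚ) - ((k : ℕ) : ℚ) - 1 - μ)
    rw [part1, part2]
    ring
  rw [Finset.sum_congr rfl per_T, Finset.sum_add_distrib, Finset.sum_const]
  unfold S
  push_cast
  ring


lemma gauss : ∀ n : ℕ, 2 * ∑ k ∈ Finset.range n, (k : ℚ) = (n : ℚ) * ((n : ℚ) - 1)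
  | 0 => by simp
  | (n + 1) => by
      rw [Finset.sum_range_succ, mul_add]
      push_cast
      linear_combination gauss n

lemma ico_eval (l u : ℕ) (h : l ≤ u) (α : ℚ) :
    ∑ k ∈ Finset.Ico l u, (α - (k : ℚ))
      = ((u : ℚ) - (l : ℚ)) * α - ((u : ℚ) * ((u : ℚ) - 1) - (l : ℚ) * ((l : ℚ) - 1)) / 2 := by
  rw [Finset.sum_sub_distrib, Finset.sum_const, Nat.card_Ico,
    Finset.sum_Ico_eq_sub _ h, nsmul_eq_mul]
  have hc : ((u - l : ℕ) : ℚ) = (u : ℚ) - (l : ℚ) := by push_cast [h]; ring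
  rw [hc]
  linear_combination (-(1 : ℚ) / 2) * gauss u + ((1 : ℚ) / 2) * gauss l

end PPaux

theorem weighted_column_sum_a_le_b (a b c : ℕ) (ha : 0 < a) (hb : 0 < b) (hc : 0 < c)
    (hab : a ≤ b) (x₀ : ℤ) (hx0 : 1 ≤ x₀) (hx1 : x₀ ≤ (a : ℤ) + b - 1) :
    (1 ≤ x₀ → x₀ ≤ (a : ℤ) →
      ∑ y ∈ Finset.Icc (0 : ℤ) ((a : ℤ) + c - 1),
          P a b c x₀ y * ((y : ℚ) - ((a : ℚ) + c - 1) / 2)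
        = (-(a : ℚ) ^ 2 - a * b - a * c + b * c + a * (x₀ : ℚ) + b * (x₀ : ℚ)) * (x₀ : ℚ)
            / (2 * ((a : ℚ) + b))) ∧
    ((a : ℤ) ≤ x₀ → x₀ ≤ (b : ℤ) →
      ∑ y ∈ Finset.Icc (0 : ℤ) ((a : ℤ) + c - 1),
          P a b c x₀ y * ((y : ℚ) - ((a : ℚ) + c - 1) / 2)
        = (a : ℚ) * c * ((a : ℚ) + b - 2 * (x₀ : ℚ)) / (2 * ((a : ℚ) + b))) ∧
    ((b : ℤ) ≤ x₀ → x₀ ≤ (a : ℤ) + b - 1 →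
      ∑ y ∈ Finset.Icc (0 : ℤ) ((a : ℤ) + c - 1),
          P a b c x₀ y * ((y : ℚ) - ((a : ℚ) + c - 1) / 2)
        = (-(b : ℚ) ^ 2 - a * b - b * c + a * c + a * (x₀ : ℚ) + b * (x₀ : ℚ))
            * ((a : ℚ) + b - (x₀ : ℚ)) / (2 * ((a : ℚ) + b))) := by
  have hNpos := PPaux.card_PP_pos a b c
  have hN0 : (((PlanePartitions a b c).card : ℕ) : ℚ) ≠ 0 := by
    have : ((PlanePartitions a b c).card : ℕ) ≠ 0 := by omega
    exact_mod_cast this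
  have hab0 : (a : ℚ) + b ≠ 0 := by positivity
  have hS := PPaux.S_eval a b c x₀ (by omega) (by omega)
  have hSq : ((PPaux.S a b c x₀ : ℤ) : ℚ)
      = ((PlanePartitions a b c).card : ℚ) * a * c * ((a : ℚ) + b - (x₀ : ℚ))
        / ((a : ℚ) + b) := by
    rw [eq_div_iff hab0]
    have hq : ((a : ℚ) + b) * ((PPaux.S a b c x₀ : ℤ) : ℚ)
        = ((PlanePartitions a b c).card : ℚ) * a * c * ((a : ℚ) + b - (x₀ : ℚ)) := by
      exact_mod_cast congrArg (fun z : ℤ => (z : ℚ)) hS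
    linear_combination hq
  refine ⟨?_, ?_, ?_⟩
  · -- case 1 : 1 ≤ x₀ ≤ a
    intro h1 h2
    rw [PPaux.main_value a b c x₀ hx0 hx1]
    have hmin : min a (((a : ℤ) + b - x₀).toNat) = a := by omega
    have hmax : (max ((a : ℤ) - x₀) 0) = (a : ℤ) - x₀ := by omega
    rw [hmin, hmax]
    set l : ℕ := ((a : ℤ) - x₀).toNat with hldef
    have hla : l ≤ a := by omega
    have hrw : (∑ k ∈ Finset.Ico l a, ((a : ℚ) - (k : ℚ) - 1 - ((a : ℚ) + c - 1) / 2))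
        = ∑ k ∈ Finset.Ico l a, (((a : ℚ) - 1 - ((a : ℚ) + c - 1) / 2) - (k : ℚ)) :=
      Finset.sum_congr rfl (fun k _ => by ring)
    rw [hrw, PPaux.ico_eval l a hla _]
    have hlz : ((l : ℕ) : ℤ) = (a : ℤ) - x₀ := by omega
    have hl : ((l : ℕ) : ℚ) = (a : ℚ) - (x₀ : ℚ) := by exact_mod_cast hlz
    rw [hl, hSq]
    have hmc : (((a : ℤ) - x₀ : ℤ) : ℚ) = (a : ℚ) - (x₀ : ℚ) := by push_cast; ring
    rw [hmc]
    field_simp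
    ring
  · -- case 2 : a ≤ x₀ ≤ b
    intro h1 h2
    rw [PPaux.main_value a b c x₀ hx0 hx1]
    have hmin : min a (((a : ℤ) + b - x₀).toNat) = a := by omega
    have hmax : (max ((a : ℤ) - x₀) 0) = 0 := by omega
    have hl0 : ((a : ℤ) - x₀).toNat = 0 := by omega
    rw [hmin, hmax, hl0]
    have hrw : (∑ k ∈ Finset.Ico 0 a, ((a : ℚ) - (k : ℚ) - 1 - ((a : ℚ) + c - 1) / 2))
        = ∑ k ∈ Finset.Ico 0 a, (((a : ℚ) - 1 - ((a : ℚ) + c - 1) / 2) - (k : ℚ)) :=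
      Finset.sum_congr rfl (fun k _ => by ring)
    rw [hrw, PPaux.ico_eval 0 a (Nat.zero_le a) _, hSq]
    push_cast
    field_simp
    ring
  · -- case 3 : b ≤ x₀ ≤ a + b - 1
    intro h1 h2
    rw [PPaux.main_value a b c x₀ hx0 hx1]
    set u : ℕ := ((a : ℤ) + b - x₀).toNat with hudef
    have hmin : min a u = u := by omega
    have hmax : (max ((a : ℤ) - x₀) 0) = 0 := by omega
    have hl0 : ((a : ℤ) - x₀).toNat = 0 := by omega
    rw [hmin, hmax, hl0]
    have hrw : (∑ k ∈ Finset.Ico 0 u, ((a : ℚ) - (k : ℚ) - 1 - ((a : ℚ) + c - 1) / 2))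
        = ∑ k ∈ Finset.Ico 0 u, (((a : ℚ) - 1 - ((a : ℚ) + c - 1) / 2) - (k : ℚ)) :=
      Finset.sum_congr rfl (fun k _ => by ring)
    rw [hrw, PPaux.ico_eval 0 u (Nat.zero_le u) _, hSq]
    have huz : ((u : ℕ) : ℤ) = (a : ℤ) + b - x₀ := by omega
    have hu : ((u : ℕ) : ℚ) = (a : ℚ) + b - (x₀ : ℚ) := by exact_mod_cast huz
    rw [hu]
    push_cast
    field_simp
    ring
end

section
/- Let a, b, c be positive integers with a ≥ b and let x₀ be an integer with 1 ≤ x₀ ≤ a+b−1. Then Σ_{y=0}^{a+c-1} P_{a,b,c}(x₀, y) · (y − (a+c−1)/2) equals (−a² − ab − ac + bc + a·x₀ + b·x₀)·x₀ / (2(a+b)) if 1 ≤ x₀ ≤ b; equals −b·(a + b + c)·(a + b − 2x₀) / (2(a+b)) if b ≤ x₀ ≤ a; and equals (−b² − ab − bc + ac + a·x₀ + b·x₀)·(a + b − x₀) / (2(a+b)) if a ≤ x₀ ≤ a+b−1. -/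
open Finset

namespace WCS


variable {a b c : ℕ}

def ext (T : Fin a → Fin b → Fin (c + 1)) (i j : ℤ) : ℤ :=
  if h1 : (a : ℤ) < i ∨ (b : ℤ) < j then 0
  else if h2 : i ≤ 0 ∨ j ≤ 0 then (c : ℤ)
  else ((T ⟨(i - 1).toNat, by omega⟩ ⟨(j - 1).toNat, by omega⟩ : Fin (c+1)) : ℤ)

lemma ext_nonneg (T : Fin a → Fin b → Fin (c + 1)) (i j : ℤ) : 0 ≤ ext T i j := by
  unfold ext; split_ifs <;> positivity

lemma ext_le (T : Fin a → Fin b → Fin (c + 1)) (i j : ℤ) : ext T i j ≤ c := by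
  unfold ext; split_ifs with h1 h2
  · positivity
  · exact le_refl _
  · exact_mod_cast Nat.le_of_lt_succ (Fin.is_lt _)

lemma ext_eq_zero (T : Fin a → Fin b → Fin (c + 1)) {i j : ℤ} (h : (a:ℤ) < i ∨ (b:ℤ) < j) :
    ext T i j = 0 := by unfold ext; rw [dif_pos h]

lemma ext_eq_c (T : Fin a → Fin b → Fin (c + 1)) {i j : ℤ} (h1 : i ≤ (a:ℤ) ∧ j ≤ (b:ℤ))
    (h2 : i ≤ 0 ∨ j ≤ 0) : ext T i j = c := by
  unfold ext
  rw [dif_neg (by omega), dif_pos h2]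

lemma ext_eq_val (T : Fin a → Fin b → Fin (c + 1)) {i j : ℤ}
    (h1 : 1 ≤ i ∧ i ≤ (a:ℤ)) (h2 : 1 ≤ j ∧ j ≤ (b:ℤ)) :
    ext T i j = ((T ⟨(i - 1).toNat, by omega⟩ ⟨(j - 1).toNat, by omega⟩ : Fin (c+1)) : ℤ) := by
  unfold ext
  rw [dif_neg (by omega), dif_neg (by omega)]

lemma ext_fin (T : Fin a → Fin b → Fin (c + 1)) (i : Fin a) (j : Fin b) :
    ext T ((i:ℤ)+1) ((j:ℤ)+1) = ((T i j : ℕ) : ℤ) := by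
  rw [ext_eq_val T (by omega) (by omega)]
  have key : ∀ (x : Fin a) (y : Fin b), x = i → y = j → ((T x y : ℕ):ℤ) = ((T i j : ℕ):ℤ) := by
    rintro x y rfl rfl; rfl
  refine key _ _ (Fin.ext ?_) (Fin.ext ?_) <;> simp

lemma mem_PP_iff {T : Fin a → Fin b → Fin (c+1)} :
    T ∈ PlanePartitions a b c ↔
      ((∀ i : Fin a, ∀ j j' : Fin b, j ≤ j' → T i j' ≤ T i j) ∧
       (∀ i i' : Fin a, ∀ j : Fin b, i ≤ i' → T i' j ≤ T i j)) := by
  simp [PlanePartitions]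

lemma ext_anti_row {T : Fin a → Fin b → Fin (c+1)} (hT : T ∈ PlanePartitions a b c)
    (i : ℤ) {j j' : ℤ} (h : j ≤ j') : ext T i j' ≤ ext T i j := by
  rw [mem_PP_iff] at hT
  by_cases hz : (a:ℤ) < i ∨ (b:ℤ) < j'
  · rw [ext_eq_zero T hz]; exact ext_nonneg T i j
  · push_neg at hz
    by_cases hc : i ≤ 0 ∨ j ≤ 0
    · rw [ext_eq_c T ⟨hz.1, by omega⟩ hc]; exact ext_le T i j'
    · push_neg at hc
      rw [ext_eq_val T (by omega) (by omega), ext_eq_val T (by omega) (by omega)]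
      have hle : (⟨(j-1).toNat, by omega⟩ : Fin b) ≤ ⟨(j'-1).toNat, by omega⟩ :=
        Fin.mk_le_mk.mpr (by omega)
      have h9 := hT.1 ⟨(i-1).toNat, by omega⟩ _ _ hle
      exact_mod_cast h9

lemma ext_anti_col {T : Fin a → Fin b → Fin (c+1)} (hT : T ∈ PlanePartitions a b c)
    {i i' : ℤ} (j : ℤ) (h : i ≤ i') : ext T i' j ≤ ext T i j := by
  rw [mem_PP_iff] at hT
  by_cases hz : (a:ℤ) < i' ∨ (b:ℤ) < j
  · rw [ext_eq_zero T hz]; exact ext_nonneg T i j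
  · push_neg at hz
    by_cases hc : i ≤ 0 ∨ j ≤ 0
    · rw [ext_eq_c T ⟨by omega, hz.2⟩ hc]; exact ext_le T i' j
    · push_neg at hc
      rw [ext_eq_val T (by omega) (by omega), ext_eq_val T (by omega) (by omega)]
      have hle : (⟨(i-1).toNat, by omega⟩ : Fin a) ≤ ⟨(i'-1).toNat, by omega⟩ :=
        Fin.mk_le_mk.mpr (by omega)
      have h9 := hT.2 _ _ ⟨(j-1).toNat, by omega⟩ hle
      exact_mod_cast h9

end WCS

-- appended to part1 content for testing
section
open Finset WCS
variable {a b c : ℕ}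
namespace WCS

/-- cells on diagonal `k` (zero-based: j - i = k). -/
def dF (a b : ℕ) (k : ℤ) : Finset (Fin a × Fin b) :=
  univ.filter (fun p => ((p.2 : ℕ) : ℤ) - ((p.1 : ℕ) : ℤ) = k)

lemma dF_sum {E : Type*} [AddCommMonoid E] (k : ℤ) (T : Fin a → Fin b → Fin (c+1))
    (φ : ℤ → ℤ → E) :
    ∑ p ∈ dF a b k, φ ((p.1 : ℕ) : ℤ) (((T p.1 p.2 : ℕ) : ℤ)) =
      ∑ i ∈ Finset.Icc (max 1 (1 - k)) (min (a:ℤ) ((b:ℤ) - k)), φ (i - 1) (ext T i (i + k)) := by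
  refine Finset.sum_bij' (fun p _ => ((p.1 : ℕ) : ℤ) + 1)
    (fun i hi => (⟨(i-1).toNat, ?_⟩, ⟨(i-1+k).toNat, ?_⟩)) ?_ ?_ ?_ ?_ ?_
  · simp only [Finset.mem_Icc] at hi; omega
  · simp only [Finset.mem_Icc] at hi; omega
  · intro p hp
    simp only [dF, Finset.mem_filter, Finset.mem_univ, true_and] at hp
    simp only [Finset.mem_Icc]
    have h1 := p.1.is_lt
    have h2 := p.2.is_lt
    have h3 : (0:ℤ) ≤ ((p.2 : ℕ) : ℤ) := by positivity
    omega
  · intro i hi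
    simp only [dF, Finset.mem_filter, Finset.mem_univ, true_and]
    simp only [Finset.mem_Icc] at hi
    omega
  · intro p hp
    simp only [dF, Finset.mem_filter, Finset.mem_univ, true_and] at hp
    have h1 := p.1.is_lt
    have h2 := p.2.is_lt
    obtain ⟨p1, p2⟩ := p
    simp only [Prod.mk.injEq]
    constructor <;> (apply Fin.ext; simp only [Fin.val_mk]) <;> simp only at hp h1 h2 <;> omega
  · intro i hi
    simp only [Finset.mem_Icc] at hi
    simp only [Fin.val_mk]
    omega
  · intro p hp
    simp only [dF, Finset.mem_filter, Finset.mem_univ, true_and] at hp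
    have h1 := p.1.is_lt
    have h2 := p.2.is_lt
    have hv : ext T (((p.1:ℕ):ℤ) + 1) ((((p.1:ℕ):ℤ) + 1) + k) = ((T p.1 p.2 : ℕ) : ℤ) := by
      rw [show (((p.1:ℕ):ℤ) + 1) + k = ((p.2:ℕ):ℤ) + 1 by omega]
      exact ext_fin T p.1 p.2
    rw [show ((p.1:ℕ):ℤ) + 1 - 1 = ((p.1:ℕ):ℤ) by ring, hv]

noncomputable def gg (T : Fin a → Fin b → Fin (c+1)) (m : ℤ) : ℤ :=
  ∑ i ∈ Finset.Icc (1:ℤ) (a:ℤ), ext T i (i + m)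

lemma sum_Ioc_split {M : Type*} [AddCommMonoid M] (f : ℤ → M) {x y z : ℤ} (h1 : x ≤ y) (h2 : y ≤ z) :
    ∑ i ∈ Finset.Ioc x y, f i + ∑ i ∈ Finset.Ioc y z, f i = ∑ i ∈ Finset.Ioc x z, f i := by
  rw [← Finset.sum_union (by
    rw [Finset.disjoint_left]
    intro t ht1 ht2
    simp only [Finset.mem_Ioc] at ht1 ht2
    omega), Finset.Ioc_union_Ioc_eq_Ioc h1 h2]

lemma Icc_eq_Ioc (lo hi : ℤ) : Finset.Icc lo hi = Finset.Ioc (lo - 1) hi := by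
  ext x; simp only [Finset.mem_Icc, Finset.mem_Ioc]; omega

lemma gg_split (T : Fin a → Fin b → Fin (c+1)) {k : ℤ} (hk1 : -(a:ℤ) ≤ k) (hk2 : k ≤ 0) :
    gg T k = (c:ℤ) * (-k) + ∑ i ∈ Finset.Icc (max 1 (1 - k)) (min (a:ℤ) ((b:ℤ) - k)),
      ext T i (i + k) := by
  have h1 : (0:ℤ) ≤ -k := by omega
  have e1 : Finset.Icc (1:ℤ) (a:ℤ) = Finset.Ioc (0:ℤ) (a:ℤ) := Icc_eq_Ioc 1 a
  have e2 : ∑ i ∈ Finset.Ioc (0:ℤ) (-k), ext T i (i+k) + ∑ i ∈ Finset.Ioc (-k) (a:ℤ), ext T i (i+k)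
      = ∑ i ∈ Finset.Ioc (0:ℤ) (a:ℤ), ext T i (i+k) :=
    sum_Ioc_split (fun i => ext T i (i+k))
      (show (0:ℤ) ≤ -k by omega) (show -k ≤ (a:ℤ) by omega)
  have e3 : ∑ i ∈ Finset.Ioc (0:ℤ) (-k), ext T i (i+k) = (c:ℤ) * (-k) := by
    have hcongr : ∀ i ∈ Finset.Ioc (0:ℤ) (-k), ext T i (i+k) = (c:ℤ) := by
      intro i hi
      simp only [Finset.mem_Ioc] at hi
      exact ext_eq_c T ⟨by omega, by omega⟩ (by omega)
    rw [Finset.sum_congr rfl hcongr, Finset.sum_const, Int.card_Ioc, nsmul_eq_mul]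
    have htn : (((-k - 0).toNat : ℕ) : ℤ) = -k := by omega
    rw [htn]; ring
  have e4 : ∑ i ∈ Finset.Ioc (-k) (min (a:ℤ) ((b:ℤ)-k)), ext T i (i+k)
      + ∑ i ∈ Finset.Ioc (min (a:ℤ) ((b:ℤ)-k)) (a:ℤ), ext T i (i+k)
      = ∑ i ∈ Finset.Ioc (-k) (a:ℤ), ext T i (i+k) :=
    sum_Ioc_split (fun i => ext T i (i+k))
      (show -k ≤ min (a:ℤ) ((b:ℤ)-k) by omega) (show min (a:ℤ) ((b:ℤ)-k) ≤ (a:ℤ) by omega)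
  have e5 : ∑ i ∈ Finset.Ioc (min (a:ℤ) ((b:ℤ)-k)) (a:ℤ), ext T i (i+k) = 0 := by
    have hcongr : ∀ i ∈ Finset.Ioc (min (a:ℤ) ((b:ℤ)-k)) (a:ℤ), ext T i (i+k) = 0 := by
      intro i hi
      simp only [Finset.mem_Ioc] at hi
      exact ext_eq_zero T (by omega)
    rw [Finset.sum_congr rfl hcongr, Finset.sum_const, smul_zero]
  have e6 : Finset.Ioc (-k) (min (a:ℤ) ((b:ℤ)-k)) = Finset.Icc (max 1 (1-k)) (min (a:ℤ) ((b:ℤ)-k)) := by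
    ext x; simp only [Finset.mem_Icc, Finset.mem_Ioc]; omega
  unfold gg
  rw [e1, ← e2, e3, ← e4, e5, e6]
  ring

end WCS
end

namespace WCS
variable {a b c : ℕ}

/-- complementation: reverse both indices and replace value `v` by `c - v`. -/
def comp (T : Fin a → Fin b → Fin (c+1)) : Fin a → Fin b → Fin (c+1) :=
  fun i j => ⟨c - (T i.rev j.rev : ℕ), by omega⟩

lemma comp_mem {T : Fin a → Fin b → Fin (c+1)} (hT : T ∈ PlanePartitions a b c) :
    comp T ∈ PlanePartitions a b c := by
  rw [mem_PP_iff] at hT ⊢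
  constructor
  · intro i j j' hle
    have h1 : j'.rev ≤ j.rev := Fin.rev_le_rev.mpr hle
    have h2 := hT.1 i.rev j'.rev j.rev h1
    simp only [comp, Fin.mk_le_mk]
    have h3 := Fin.le_def.mp h2
    have h4 := (T i.rev j.rev).is_lt
    omega
  · intro i i' j hle
    have h1 : i'.rev ≤ i.rev := Fin.rev_le_rev.mpr hle
    have h2 := hT.2 i'.rev i.rev j.rev h1
    simp only [comp, Fin.mk_le_mk]
    have h3 := Fin.le_def.mp h2
    have h4 := (T i.rev j.rev).is_lt
    omega

lemma comp_comp (T : Fin a → Fin b → Fin (c+1)) : comp (comp T) = T := by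
  funext i j
  simp only [comp, Fin.rev_rev]
  have h4 := (T i j).is_lt
  apply Fin.ext
  simp only [Fin.val_mk]
  omega

lemma ext_comp (T : Fin a → Fin b → Fin (c+1)) {i : ℤ} (j : ℤ) (hi : 1 ≤ i ∧ i ≤ (a:ℤ)) :
    ext (comp T) i j = (c:ℤ) - ext T ((a:ℤ) + 1 - i) ((b:ℤ) + 1 - j) := by
  by_cases hj1 : (b:ℤ) < j
  · rw [ext_eq_zero (comp T) (Or.inr hj1), ext_eq_c T ⟨by omega, by omega⟩ (by omega)]
    ring
  · by_cases hj2 : j ≤ 0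
    · rw [ext_eq_c (comp T) ⟨by omega, by omega⟩ (Or.inr hj2),
        ext_eq_zero T (Or.inr (by omega))]
      ring
    · rw [ext_eq_val (comp T) (by omega) (by omega), ext_eq_val T (by omega) (by omega)]
      simp only [comp, Fin.val_mk]
      have key : ∀ (x : Fin a) (y : Fin b) (x' : Fin a) (y' : Fin b), x' = x.rev → y' = y.rev →
          (((c - (T x.rev y.rev : ℕ) : ℕ)):ℤ) = (c:ℤ) - ((T x' y' : ℕ) : ℤ) := by
        rintro x y x' y' rfl rfl
        have h4 := (T x.rev y.rev).is_lt
        omega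
      exact key _ _ _ _ (Fin.ext (by simp [Fin.rev]; omega)) (Fin.ext (by simp [Fin.rev]; omega))

lemma gg_comp (T : Fin a → Fin b → Fin (c+1)) (k : ℤ) :
    gg (comp T) k = (c:ℤ) * a - gg T ((b:ℤ) - (a:ℤ) - k) := by
  unfold gg
  have step : ∀ i ∈ Finset.Icc (1:ℤ) (a:ℤ), ext (comp T) i (i+k)
      = (c:ℤ) - ext T ((a:ℤ)+1-i) (((a:ℤ)+1-i) + ((b:ℤ) - a - k)) := by
    intro i hi
    simp only [Finset.mem_Icc] at hi
    rw [ext_comp T (i+k) ⟨hi.1, hi.2⟩]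
    congr 1
    ring
  rw [Finset.sum_congr rfl step, Finset.sum_sub_distrib, Finset.sum_const, Int.card_Icc,
    nsmul_eq_mul]
  have htn : ((((a:ℤ) + 1 - 1).toNat : ℕ) : ℤ) = (a:ℤ) := by omega
  rw [htn]
  have reidx : ∑ i ∈ Finset.Icc (1:ℤ) (a:ℤ), ext T ((a:ℤ)+1-i) (((a:ℤ)+1-i) + ((b:ℤ) - a - k))
      = ∑ i ∈ Finset.Icc (1:ℤ) (a:ℤ), ext T i (i + ((b:ℤ) - a - k)) := by
    refine Finset.sum_bij' (fun i _ => (a:ℤ) + 1 - i) (fun i _ => (a:ℤ) + 1 - i) ?_ ?_ ?_ ?_ ?_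
    · intro i hi; simp only [Finset.mem_Icc] at hi ⊢; omega
    · intro i hi; simp only [Finset.mem_Icc] at hi ⊢; omega
    · intro i hi; ring
    · intro i hi; ring
    · intro i hi; rfl
  rw [reidx]
  ring

end WCS

namespace WCS
variable {a b c : ℕ}

lemma sum_Icc_top {M : Type*} [AddCommMonoid M] (f : ℤ → M) {lo hi : ℤ} (h : lo ≤ hi) :
    ∑ i ∈ Finset.Icc lo hi, f i = ∑ i ∈ Finset.Icc lo (hi-1), f i + f hi := by
  rw [Icc_eq_Ioc, Icc_eq_Ioc,
    ← sum_Ioc_split f (show lo - 1 ≤ hi - 1 by omega) (show hi - 1 ≤ hi by omega)]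
  congr 1
  have : Finset.Ioc (hi-1) hi = {hi} := by
    ext x; simp only [Finset.mem_Ioc, Finset.mem_singleton]; omega
  rw [this, Finset.sum_singleton]

lemma sum_Icc_bot {M : Type*} [AddCommMonoid M] (f : ℤ → M) {lo hi : ℤ} (h : lo ≤ hi) :
    ∑ i ∈ Finset.Icc lo hi, f i = f lo + ∑ i ∈ Finset.Icc (lo+1) hi, f i := by
  rw [Icc_eq_Ioc, Icc_eq_Ioc,
    ← sum_Ioc_split f (show lo - 1 ≤ lo by omega) (show lo ≤ hi by omega)]
  congr 1
  · have : Finset.Ioc (lo-1) lo = {lo} := by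
      ext x; simp only [Finset.mem_Ioc, Finset.mem_singleton]; omega
    rw [this, Finset.sum_singleton]
  · have : Finset.Ioc lo hi = Finset.Icc (lo+1) hi := by
      ext x; simp only [Finset.mem_Ioc, Finset.mem_Icc]; omega
    rw [this, Icc_eq_Ioc]

lemma tele (u v : ℤ → ℤ) (n : ℕ) :
    ∑ i ∈ Finset.Icc (1:ℤ) ((n:ℤ)+1), (min (u i) (v i) + max (u (i+1)) (v (i+1)))
      = min (u 1) (v 1) + max (u ((n:ℤ)+2)) (v ((n:ℤ)+2))
        + ∑ i ∈ Finset.Icc (2:ℤ) ((n:ℤ)+1), (u i + v i) := by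
  induction n with
  | zero =>
      have h1 : Finset.Icc (1:ℤ) ((0:ℕ)+1:ℤ) = {1} := by
        push_cast; ext x; simp only [Finset.mem_Icc, Finset.mem_singleton]; omega
      have h2 : Finset.Icc (2:ℤ) ((0:ℕ)+1:ℤ) = ∅ := by
        push_cast; ext x; simp only [Finset.mem_Icc, Finset.notMem_empty, iff_false]; omega
      rw [h1, h2, Finset.sum_singleton, Finset.sum_empty]
      push_cast
      norm_num
  | succ n ih =>
      have hc : ((n:ℤ)+1)+1 = ((n+1:ℕ):ℤ)+1 - 1 + 1 := by push_cast; ring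
      rw [sum_Icc_top _ (show (1:ℤ) ≤ ((n+1:ℕ):ℤ)+1 by push_cast; omega),
          sum_Icc_top _ (show (2:ℤ) ≤ ((n+1:ℕ):ℤ)+1 by push_cast; omega)]
      have e1 : ((n+1:ℕ):ℤ)+1-1 = (n:ℤ)+1 := by push_cast; ring
      rw [e1, ih]
      have e2 : ((n+1:ℕ):ℤ)+1 = (n:ℤ)+2 := by push_cast; ring
      have e3 : ((n+1:ℕ):ℤ)+2 = ((n:ℤ)+2)+1 := by push_cast; ring
      rw [e2, e3]
      have := min_add_max (u ((n:ℤ)+2)) (v ((n:ℤ)+2))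
      omega

/-- upper bound for a toggled cell, 1-based cell (I,J) -/
def togU (T : Fin a → Fin b → Fin (c+1)) (I J : ℤ) : ℤ :=
  min (ext T (I-1) J) (ext T I (J-1))

/-- lower bound for a toggled cell, 1-based cell (I,J) -/
def togL (T : Fin a → Fin b → Fin (c+1)) (I J : ℤ) : ℤ :=
  max (ext T (I+1) J) (ext T I (J+1))

/-- the diagonal toggle (Bender–Knuth style involution) on diagonal `k` (zero-based). -/
def tog (k : ℤ) (T : Fin a → Fin b → Fin (c+1)) : Fin a → Fin b → Fin (c+1) :=
  fun i j =>
    if ((j:ℕ):ℤ) - ((i:ℕ):ℤ) = k then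
      ⟨min ((togU T ((i:ℤ)+1) ((j:ℤ)+1) + togL T ((i:ℤ)+1) ((j:ℤ)+1)
        - ((T i j : ℕ):ℤ)).toNat) c, by omega⟩
    else T i j

lemma le_togU {T : Fin a → Fin b → Fin (c+1)} (hT : T ∈ PlanePartitions a b c)
    (i : Fin a) (j : Fin b) : ((T i j : ℕ):ℤ) ≤ togU T ((i:ℤ)+1) ((j:ℤ)+1) := by
  rw [← ext_fin T i j]
  exact le_min (ext_anti_col hT _ (by omega)) (ext_anti_row hT _ (by omega))

lemma togL_le {T : Fin a → Fin b → Fin (c+1)} (hT : T ∈ PlanePartitions a b c)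
    (i : Fin a) (j : Fin b) : togL T ((i:ℤ)+1) ((j:ℤ)+1) ≤ ((T i j : ℕ):ℤ) := by
  rw [← ext_fin T i j]
  exact max_le (ext_anti_col hT _ (by omega)) (ext_anti_row hT _ (by omega))

lemma togU_le_c (T : Fin a → Fin b → Fin (c+1)) (I J : ℤ) : togU T I J ≤ c :=
  le_trans (min_le_left _ _) (ext_le T _ _)

lemma togL_nonneg (T : Fin a → Fin b → Fin (c+1)) (I J : ℤ) : 0 ≤ togL T I J :=
  le_trans (ext_nonneg T _ _) (le_max_left _ _)

lemma tog_val {k : ℤ} {T : Fin a → Fin b → Fin (c+1)} (hT : T ∈ PlanePartitions a b c)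
    {i : Fin a} {j : Fin b} (hd : ((j:ℕ):ℤ) - ((i:ℕ):ℤ) = k) :
    ((tog k T i j : ℕ):ℤ)
      = togU T ((i:ℤ)+1) ((j:ℤ)+1) + togL T ((i:ℤ)+1) ((j:ℤ)+1) - ((T i j : ℕ):ℤ) := by
  have h1 := le_togU hT i j
  have h2 := togL_le hT i j
  have h3 := togU_le_c T ((i:ℤ)+1) ((j:ℤ)+1)
  have h4 := togL_nonneg T ((i:ℤ)+1) ((j:ℤ)+1)
  simp only [tog, if_pos hd, Fin.val_mk]
  omega

lemma tog_offdiag {k : ℤ} (T : Fin a → Fin b → Fin (c+1))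
    {i : Fin a} {j : Fin b} (hd : ((j:ℕ):ℤ) - ((i:ℕ):ℤ) ≠ k) :
    tog k T i j = T i j := by
  simp only [tog, if_neg hd]

lemma ext_tog_offdiag {k : ℤ} (T : Fin a → Fin b → Fin (c+1))
    {I J : ℤ} (hd : J - I ≠ k) : ext (tog k T) I J = ext T I J := by
  unfold ext
  split_ifs with h1 h2
  · rfl
  · rfl
  · have : tog k T ⟨(I-1).toNat, by omega⟩ ⟨(J-1).toNat, by omega⟩
        = T ⟨(I-1).toNat, by omega⟩ ⟨(J-1).toNat, by omega⟩ := by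
      apply tog_offdiag
      simp only [Fin.val_mk]
      omega
    rw [this]

lemma ext_tog_diag {k : ℤ} {T : Fin a → Fin b → Fin (c+1)} (hT : T ∈ PlanePartitions a b c)
    {I : ℤ} (hI : 1 ≤ I ∧ I ≤ (a:ℤ)) (hJ : 1 ≤ I + k ∧ I + k ≤ (b:ℤ)) :
    ext (tog k T) I (I+k) = togU T I (I+k) + togL T I (I+k) - ext T I (I+k) := by
  rw [ext_eq_val (tog k T) (by omega) (by omega), ext_eq_val T (by omega) (by omega)]
  set iF : Fin a := ⟨(I-1).toNat, by omega⟩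
  set jF : Fin b := ⟨(I+k-1).toNat, by omega⟩
  have hd : ((jF:ℕ):ℤ) - ((iF:ℕ):ℤ) = k := by simp only [iF, jF, Fin.val_mk]; omega
  rw [tog_val hT hd]
  have e1 : ((iF:ℕ):ℤ) + 1 = I := by simp only [iF, Fin.val_mk]; omega
  have e2 : ((jF:ℕ):ℤ) + 1 = I + k := by simp only [jF, Fin.val_mk]; omega
  rw [e1, e2]

end WCS

namespace WCS
variable {a b c : ℕ}

lemma tog_mem {k : ℤ} {T : Fin a → Fin b → Fin (c+1)} (hT : T ∈ PlanePartitions a b c) :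
    tog k T ∈ PlanePartitions a b c := by
  have hTm := hT
  rw [mem_PP_iff] at hTm ⊢
  constructor
  · intro i j j' hle
    rcases eq_or_lt_of_le hle with heq | hlt
    · cases heq; exact le_refl _
    · have hvlt : (j:ℕ) < (j':ℕ) := hlt
      by_cases hd1 : ((j:ℕ):ℤ) - ((i:ℕ):ℤ) = k
      · have hd2 : ((j':ℕ):ℤ) - ((i:ℕ):ℤ) ≠ k := by omega
        rw [tog_offdiag T hd2, Fin.le_def]
        have e1 : ((T i j' : ℕ):ℤ) ≤ ((tog k T i j : ℕ):ℤ) := by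
          rw [tog_val hT hd1]
          have s1 : ((T i j' : ℕ):ℤ) = ext T ((i:ℤ)+1) ((j':ℤ)+1) := (ext_fin T i j').symm
          have s2 : ext T ((i:ℤ)+1) ((j':ℤ)+1) ≤ ext T ((i:ℤ)+1) (((j:ℤ)+1)+1) :=
            ext_anti_row hT _ (by omega)
          have s3 : ext T ((i:ℤ)+1) (((j:ℤ)+1)+1) ≤ togL T ((i:ℤ)+1) ((j:ℤ)+1) :=
            le_max_right _ _
          have s4 := le_togU hT i j
          omega
        exact_mod_cast e1
      · by_cases hd2 : ((j':ℕ):ℤ) - ((i:ℕ):ℤ) = k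
        · rw [tog_offdiag T hd1, Fin.le_def]
          have e1 : ((tog k T i j' : ℕ):ℤ) ≤ ((T i j : ℕ):ℤ) := by
            rw [tog_val hT hd2]
            have s1 : togU T ((i:ℤ)+1) ((j':ℤ)+1) ≤ ext T ((i:ℤ)+1) (((j':ℤ)+1)-1) :=
              min_le_right _ _
            have harg : ((j':ℤ)+1)-1 = ((j':ℕ):ℤ) := by ring
            rw [harg] at s1
            have s2 : ext T ((i:ℤ)+1) ((j':ℕ):ℤ) ≤ ext T ((i:ℤ)+1) ((j:ℤ)+1) :=
              ext_anti_row hT _ (by omega)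
            have s3 := togL_le hT i j'
            have s4 : ((T i j : ℕ):ℤ) = ext T ((i:ℤ)+1) ((j:ℤ)+1) := (ext_fin T i j).symm
            omega
          exact_mod_cast e1
        · rw [tog_offdiag T hd1, tog_offdiag T hd2]; exact hTm.1 i j j' hle
  · intro i i' j hle
    rcases eq_or_lt_of_le hle with heq | hlt
    · cases heq; exact le_refl _
    · have hvlt : (i:ℕ) < (i':ℕ) := hlt
      by_cases hd1 : ((j:ℕ):ℤ) - ((i:ℕ):ℤ) = k
      · have hd2 : ((j:ℕ):ℤ) - ((i':ℕ):ℤ) ≠ k := by omega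
        rw [tog_offdiag T hd2, Fin.le_def]
        have e1 : ((T i' j : ℕ):ℤ) ≤ ((tog k T i j : ℕ):ℤ) := by
          rw [tog_val hT hd1]
          have s1 : ((T i' j : ℕ):ℤ) = ext T ((i':ℤ)+1) ((j:ℤ)+1) := (ext_fin T i' j).symm
          have s2 : ext T ((i':ℤ)+1) ((j:ℤ)+1) ≤ ext T (((i:ℤ)+1)+1) ((j:ℤ)+1) :=
            ext_anti_col hT _ (by omega)
          have s3 : ext T (((i:ℤ)+1)+1) ((j:ℤ)+1) ≤ togL T ((i:ℤ)+1) ((j:ℤ)+1) :=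
            le_max_left _ _
          have s4 := le_togU hT i j
          omega
        exact_mod_cast e1
      · by_cases hd2 : ((j:ℕ):ℤ) - ((i':ℕ):ℤ) = k
        · rw [tog_offdiag T hd1, Fin.le_def]
          have e1 : ((tog k T i' j : ℕ):ℤ) ≤ ((T i j : ℕ):ℤ) := by
            rw [tog_val hT hd2]
            have s1 : togU T ((i':ℤ)+1) ((j:ℤ)+1) ≤ ext T (((i':ℤ)+1)-1) ((j:ℤ)+1) :=
              min_le_left _ _
            have harg : ((i':ℤ)+1)-1 = ((i':ℕ):ℤ) := by ring
            rw [harg] at s1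
            have s2 : ext T ((i':ℕ):ℤ) ((j:ℤ)+1) ≤ ext T ((i:ℤ)+1) ((j:ℤ)+1) :=
              ext_anti_col hT _ (by omega)
            have s3 := togL_le hT i' j
            have s4 : ((T i j : ℕ):ℤ) = ext T ((i:ℤ)+1) ((j:ℤ)+1) := (ext_fin T i j).symm
            omega
          exact_mod_cast e1
        · rw [tog_offdiag T hd1, tog_offdiag T hd2]; exact hTm.2 i i' j hle

lemma tog_tog {k : ℤ} {T : Fin a → Fin b → Fin (c+1)} (hT : T ∈ PlanePartitions a b c) :
    tog k (tog k T) = T := by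
  funext i j
  by_cases hd : ((j:ℕ):ℤ) - ((i:ℕ):ℤ) = k
  · have hT' : tog k T ∈ PlanePartitions a b c := tog_mem hT
    apply Fin.ext
    have e1 := tog_val (k := k) hT' (i := i) (j := j) hd
    have e2 := tog_val (k := k) hT (i := i) (j := j) hd
    have u1 : ext (tog k T) (((i:ℤ)+1)-1) ((j:ℤ)+1) = ext T (((i:ℤ)+1)-1) ((j:ℤ)+1) :=
      ext_tog_offdiag T (by omega)
    have u2 : ext (tog k T) ((i:ℤ)+1) (((j:ℤ)+1)-1) = ext T ((i:ℤ)+1) (((j:ℤ)+1)-1) :=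
      ext_tog_offdiag T (by omega)
    have l1 : ext (tog k T) (((i:ℤ)+1)+1) ((j:ℤ)+1) = ext T (((i:ℤ)+1)+1) ((j:ℤ)+1) :=
      ext_tog_offdiag T (by omega)
    have l2 : ext (tog k T) ((i:ℤ)+1) (((j:ℤ)+1)+1) = ext T ((i:ℤ)+1) (((j:ℤ)+1)+1) :=
      ext_tog_offdiag T (by omega)
    have hU : togU (tog k T) ((i:ℤ)+1) ((j:ℤ)+1) = togU T ((i:ℤ)+1) ((j:ℤ)+1) := by
      unfold togU; rw [u1, u2]
    have hL : togL (tog k T) ((i:ℤ)+1) ((j:ℤ)+1) = togL T ((i:ℤ)+1) ((j:ℤ)+1) := by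
      unfold togL; rw [l1, l2]
    rw [hU, hL] at e1
    have goal : ((tog k (tog k T) i j : ℕ):ℤ) = ((T i j : ℕ):ℤ) := by omega
    exact_mod_cast goal
  · rw [tog_offdiag _ hd, tog_offdiag _ hd]

lemma tog_point {k : ℤ} {T : Fin a → Fin b → Fin (c+1)} (hT : T ∈ PlanePartitions a b c)
    (hk1 : 1 - (a:ℤ) ≤ k) (hk2 : k ≤ -1) {i : ℤ} (hi1 : 1 ≤ i) (hi2 : i ≤ (a:ℤ)) :
    ext (tog k T) i (i+k) + ext T i (i+k)
      = min (ext T (i-1) (i+k)) (ext T i (i+k-1))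
        + max (ext T (i+1-1) (i+1+k)) (ext T (i+1) (i+1+k-1)) := by
  have n1 : i+1-1 = i := by ring
  have n2 : i+1+k-1 = i+k := by ring
  rw [n1, n2]
  rcases lt_trichotomy (i+k) 1 with hc | hc | hc
  · -- i + k ≤ 0
    have h0 : i + k ≤ 0 := by omega
    rw [ext_eq_c (tog k T) ⟨by omega, by omega⟩ (Or.inr h0),
        ext_eq_c T ⟨by omega, by omega⟩ (Or.inr h0),
        ext_eq_c T (i := i-1) ⟨by omega, by omega⟩ (Or.inr h0),
        ext_eq_c T (i := i) (j := i+k-1) ⟨by omega, by omega⟩ (Or.inr (by omega)),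
        min_self]
    rcases lt_or_ge (i+1+k) 1 with hc2 | hc2
    · rw [ext_eq_c T (i := i) (j := i+1+k) ⟨by omega, by omega⟩ (Or.inr (by omega))]
      rw [max_eq_left (ext_le T _ _)]
    · -- i+1+k = 1, i.e. i = -k
      have hik : i + k = 0 := by omega
      rw [ext_eq_c T (i := i+1) (j := i+k) ⟨by omega, by omega⟩ (Or.inr (by omega))]
      rw [max_eq_right (ext_le T _ _)]
  · -- i + k between 1 and b? here i+k = 1... fold into the next case via h
    have h1 : 1 ≤ i + k := by omega
    by_cases hb : i + k ≤ (b:ℤ)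
    · rw [ext_tog_diag hT ⟨hi1, hi2⟩ ⟨h1, hb⟩]
      have hTval : ext T i (i+k) = ext T i (i+k) := rfl
      unfold togU togL
      have n3 : i + k + 1 = i+1+k := by ring
      rw [n3]
      have : max (ext T (i+1) (i+k)) (ext T i (i+1+k))
          = max (ext T i (i+1+k)) (ext T (i+1) (i+k)) := max_comm _ _
      omega
    · -- b < i + k
      rw [ext_eq_zero (tog k T) (Or.inr (by omega)), ext_eq_zero T (Or.inr (by omega)),
        ext_eq_zero T (i := i-1) (Or.inr (by omega)),
        ext_eq_zero T (i := i) (j := i+1+k) (Or.inr (by omega)),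
        ext_eq_zero T (i := i+1) (j := i+k) (Or.inr (by omega))]
      have h5 := ext_nonneg T i (i+k-1)
      have : min 0 (ext T i (i+k-1)) = 0 := min_eq_left h5
      omega
  · -- 1 < i + k : same as middle case
    have h1 : 1 ≤ i + k := by omega
    by_cases hb : i + k ≤ (b:ℤ)
    · rw [ext_tog_diag hT ⟨hi1, hi2⟩ ⟨h1, hb⟩]
      unfold togU togL
      have n3 : i + k + 1 = i+1+k := by ring
      rw [n3]
      have : max (ext T (i+1) (i+k)) (ext T i (i+1+k))
          = max (ext T i (i+1+k)) (ext T (i+1) (i+k)) := max_comm _ _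
      omega
    · rw [ext_eq_zero (tog k T) (Or.inr (by omega)), ext_eq_zero T (Or.inr (by omega)),
        ext_eq_zero T (i := i-1) (Or.inr (by omega)),
        ext_eq_zero T (i := i) (j := i+1+k) (Or.inr (by omega)),
        ext_eq_zero T (i := i+1) (j := i+k) (Or.inr (by omega))]
      have h5 := ext_nonneg T i (i+k-1)
      have : min 0 (ext T i (i+k-1)) = 0 := min_eq_left h5
      omega

lemma tog_sum {k : ℤ} {T : Fin a → Fin b → Fin (c+1)} (hT : T ∈ PlanePartitions a b c)
    (ha : 0 < a) (hk1 : 1-(a:ℤ) ≤ k) (hk2 : k ≤ -1) :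
    ∑ i ∈ Finset.Icc (1:ℤ) (a:ℤ), (ext (tog k T) i (i+k) + ext T i (i+k))
      = gg T (k+1) + gg T (k-1) := by
  set u : ℤ → ℤ := fun t => ext T (t-1) (t+k) with hu
  set v : ℤ → ℤ := fun t => ext T t (t+k-1) with hv
  have hpoint : ∀ i ∈ Finset.Icc (1:ℤ) (a:ℤ),
      ext (tog k T) i (i+k) + ext T i (i+k) = min (u i) (v i) + max (u (i+1)) (v (i+1)) := by
    intro i hi
    simp only [Finset.mem_Icc] at hi
    simpa only [hu, hv] using tog_point hT hk1 hk2 hi.1 hi.2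
  rw [Finset.sum_congr rfl hpoint]
  have htele := tele u v (a-1)
  have e1 : ((a-1:ℕ):ℤ)+1 = (a:ℤ) := by push_cast [Nat.cast_sub ha]; ring
  have e2 : ((a-1:ℕ):ℤ)+2 = (a:ℤ)+1 := by push_cast [Nat.cast_sub ha]; ring
  rw [e1, e2] at htele
  rw [htele]
  have hu1 : u 1 = (c:ℤ) := by
    show ext T (1-1 : ℤ) (1+k) = (c:ℤ)
    exact ext_eq_c T ⟨by omega, by omega⟩ (Or.inl (by omega))
  have hv1 : v 1 = (c:ℤ) := by
    show ext T (1:ℤ) (1+k-1) = (c:ℤ)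
    exact ext_eq_c T ⟨by omega, by omega⟩ (Or.inr (by omega))
  have hva : v ((a:ℤ)+1) = 0 := by
    show ext T ((a:ℤ)+1) ((a:ℤ)+1+k-1) = 0
    exact ext_eq_zero T (Or.inl (by omega))
  have hmax : max (u ((a:ℤ)+1)) (v ((a:ℤ)+1)) = u ((a:ℤ)+1) := by
    rw [hva]; exact max_eq_left (ext_nonneg T _ _)
  have hsum : ∑ i ∈ Finset.Icc (2:ℤ) (a:ℤ), (u i + v i)
      = ∑ i ∈ Finset.Icc (2:ℤ) (a:ℤ), u i + ∑ i ∈ Finset.Icc (2:ℤ) (a:ℤ), v i :=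
    Finset.sum_add_distrib
  have hsumu : ∑ i ∈ Finset.Icc (2:ℤ) (a:ℤ), u i = gg T (k+1) - u ((a:ℤ)+1) := by
    have hmap : Finset.Icc (2:ℤ) (a:ℤ)
        = (Finset.Icc (1:ℤ) ((a:ℤ)-1)).map (addRightEmbedding 1) := by
      rw [Finset.map_add_right_Icc]
      congr 1 <;> ring
    rw [hmap, Finset.sum_map]
    have hterm : ∀ x ∈ Finset.Icc (1:ℤ) ((a:ℤ)-1),
        u (addRightEmbedding 1 x) = ext T x (x+(k+1)) := by
      intro x hx
      show ext T (x+1-1) (x+1+k) = ext T x (x+(k+1))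
      congr 1 <;> ring
    rw [Finset.sum_congr rfl hterm]
    unfold gg
    rw [sum_Icc_top (fun i => ext T i (i+(k+1))) (show (1:ℤ) ≤ (a:ℤ) by omega)]
    have : u ((a:ℤ)+1) = ext T (a:ℤ) ((a:ℤ)+(k+1)) := by
      show ext T ((a:ℤ)+1-1) ((a:ℤ)+1+k) = ext T (a:ℤ) ((a:ℤ)+(k+1))
      congr 1 <;> ring
    rw [this]
    ring
  have hsumv : ∑ i ∈ Finset.Icc (2:ℤ) (a:ℤ), v i = gg T (k-1) - (c:ℤ) := by
    unfold gg
    rw [sum_Icc_bot (fun i => ext T i (i+(k-1))) (show (1:ℤ) ≤ (a:ℤ) by omega)]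
    have h1 : ext T (1:ℤ) (1+(k-1)) = (c:ℤ) :=
      ext_eq_c T ⟨by omega, by omega⟩ (Or.inr (by omega))
    have hterm : ∀ x ∈ Finset.Icc (1+1:ℤ) (a:ℤ), ext T x (x+(k-1)) = v x := by
      intro x hx
      show ext T x (x+(k-1)) = ext T x (x+k-1)
      congr 1; ring
    rw [h1, Finset.sum_congr rfl hterm]
    have : Finset.Icc (1+1:ℤ) (a:ℤ) = Finset.Icc (2:ℤ) (a:ℤ) := by norm_num
    rw [this]
    ring
  rw [hsum, hsumu, hsumv, hu1, hv1, hmax, min_self]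
  ring

end WCS

namespace WCS
variable {a b c : ℕ}

/-- total of `gg · m` over all plane partitions -/
noncomputable def G (a b c : ℕ) (m : ℤ) : ℤ := ∑ T ∈ PlanePartitions a b c, gg T m

/-- total diagonal sum (Fin-filter version) -/
def FS (a b c : ℕ) (k : ℤ) : ℤ :=
  ∑ T ∈ PlanePartitions a b c, ∑ p ∈ dF a b k, ((T p.1 p.2 : ℕ):ℤ)

lemma PP_nonempty : (fun _ _ => (⟨0, by omega⟩ : Fin (c+1))) ∈ PlanePartitions a b c := by
  rw [mem_PP_iff]
  exact ⟨fun _ _ _ _ => le_refl _, fun _ _ _ _ => le_refl _⟩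

lemma card_PP_pos : 0 < (PlanePartitions a b c).card :=
  Finset.card_pos.mpr ⟨_, PP_nonempty⟩

lemma sum_tog_reindex (k : ℤ) (f : (Fin a → Fin b → Fin (c+1)) → ℤ) :
    ∑ T ∈ PlanePartitions a b c, f (tog k T) = ∑ T ∈ PlanePartitions a b c, f T := by
  refine Finset.sum_bij' (fun T _ => tog k T) (fun T _ => tog k T)
    (fun T hT => tog_mem hT) (fun T hT => tog_mem hT)
    (fun T hT => tog_tog hT) (fun T hT => tog_tog hT) (fun T hT => rfl)

lemma G_rec (ha : 0 < a) {k : ℤ} (hk1 : 1-(a:ℤ) ≤ k) (hk2 : k ≤ -1) :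
    G a b c (k+1) + G a b c (k-1) = 2 * G a b c k := by
  have key : ∀ T ∈ PlanePartitions a b c,
      gg (tog k T) k + gg T k = gg T (k+1) + gg T (k-1) := by
    intro T hT
    have := tog_sum hT ha hk1 hk2
    rw [← this]
    unfold gg
    rw [← Finset.sum_add_distrib]
  have e1 : ∑ T ∈ PlanePartitions a b c, (gg (tog k T) k + gg T k)
      = G a b c (k+1) + G a b c (k-1) := by
    rw [Finset.sum_congr rfl key, Finset.sum_add_distrib]
    rfl
  rw [← e1, Finset.sum_add_distrib, sum_tog_reindex k (fun T => gg T k)]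
  unfold G
  ring

lemma sum_comp_reindex (f : (Fin a → Fin b → Fin (c+1)) → ℤ) :
    ∑ T ∈ PlanePartitions a b c, f (comp T) = ∑ T ∈ PlanePartitions a b c, f T := by
  refine Finset.sum_bij' (fun T _ => comp T) (fun T _ => comp T)
    (fun T hT => comp_mem hT) (fun T hT => comp_mem hT)
    (fun T _ => comp_comp T) (fun T _ => comp_comp T) (fun T hT => rfl)

lemma G_comp_rel (k : ℤ) :
    G a b c k + G a b c ((b:ℤ) - a - k) = (c:ℤ) * a * ((PlanePartitions a b c).card : ℤ) := by
  have e1 : ∑ T ∈ PlanePartitions a b c, gg (comp T) k = G a b c k :=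
    sum_comp_reindex (fun T => gg T k)
  have e2 : ∀ T ∈ PlanePartitions a b c,
      gg (comp T) k = (c:ℤ) * a - gg T ((b:ℤ) - a - k) := fun T _ => gg_comp T k
  rw [← e1, Finset.sum_congr rfl e2, Finset.sum_sub_distrib, Finset.sum_const, nsmul_eq_mul]
  unfold G
  ring

lemma gg_bot (T : Fin a → Fin b → Fin (c+1)) : gg T (-(a:ℤ)) = (c:ℤ) * a := by
  unfold gg
  have key : ∀ i ∈ Finset.Icc (1:ℤ) (a:ℤ), ext T i (i + -(a:ℤ)) = (c:ℤ) := by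
    intro i hi
    simp only [Finset.mem_Icc] at hi
    exact ext_eq_c T ⟨by omega, by omega⟩ (Or.inr (by omega))
  rw [Finset.sum_congr rfl key, Finset.sum_const, Int.card_Icc, nsmul_eq_mul]
  have : ((((a:ℤ) + 1 - 1).toNat : ℕ) : ℤ) = (a:ℤ) := by omega
  rw [this]
  ring

lemma G_bot : G a b c (-(a:ℤ)) = (c:ℤ) * a * ((PlanePartitions a b c).card : ℤ) := by
  unfold G
  rw [Finset.sum_congr rfl (fun T _ => gg_bot T), Finset.sum_const, nsmul_eq_mul]
  ring

lemma G_diff (ha : 0 < a) : ∀ n : ℕ, n + 1 ≤ a →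
    G a b c (-(a:ℤ) + n + 1) - G a b c (-(a:ℤ) + n)
      = G a b c (-(a:ℤ) + 1) - G a b c (-(a:ℤ)) := by
  intro n
  induction n with
  | zero => intro _; norm_num
  | succ m ih =>
      intro h
      have hrec := G_rec (b := b) (c := c) ha
        (k := -(a:ℤ) + (m:ℤ) + 1) (by omega) (by omega)
      have e1 : (-(a:ℤ) + (m:ℤ) + 1) + 1 = -(a:ℤ) + ((m+1:ℕ):ℤ) + 1 := by push_cast; ring
      have e2 : (-(a:ℤ) + (m:ℤ) + 1) - 1 = -(a:ℤ) + (m:ℤ) := by ring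
      have e3 : -(a:ℤ) + (m:ℤ) + 1 = -(a:ℤ) + ((m+1:ℕ):ℤ) := by push_cast; ring
      rw [e1, e2] at hrec
      have ihm := ih (by omega)
      rw [e3] at ihm
      omega

lemma G_lin (ha : 0 < a) : ∀ n : ℕ, n ≤ a →
    G a b c (-(a:ℤ) + n)
      = (c:ℤ) * a * ((PlanePartitions a b c).card : ℤ)
        + n * (G a b c (-(a:ℤ) + 1) - G a b c (-(a:ℤ))) := by
  intro n
  induction n with
  | zero =>
      intro _
      simp only [Nat.cast_zero, add_zero, zero_mul]
      exact G_bot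
  | succ m ih =>
      intro h
      have hd := G_diff (b := b) (c := c) ha m (by omega)
      have ihm := ih (by omega)
      have e3 : -(a:ℤ) + ((m+1:ℕ):ℤ) = -(a:ℤ) + (m:ℤ) + 1 := by push_cast; ring
      rw [e3]
      have : ((m+1:ℕ):ℤ) = (m:ℤ) + 1 := by push_cast; ring
      rw [this]
      have expand : ((m:ℤ)+1) * (G a b c (-(a:ℤ) + 1) - G a b c (-(a:ℤ)))
          = (m:ℤ) * (G a b c (-(a:ℤ) + 1) - G a b c (-(a:ℤ)))
            + (G a b c (-(a:ℤ) + 1) - G a b c (-(a:ℤ))) := by ring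
      omega

lemma G_closed (ha : 0 < a) (hb : 0 < b) (hab : b ≤ a) {k : ℤ} (hk1 : -(a:ℤ) ≤ k) (hk2 : k ≤ 0) :
    ((a:ℤ) + b) * G a b c k
      = (c:ℤ) * a * ((PlanePartitions a b c).card : ℤ) * ((b:ℤ) - k) := by
  set Nz : ℤ := ((PlanePartitions a b c).card : ℤ) with hNz
  set S : ℤ := G a b c (-(a:ℤ) + 1) - G a b c (-(a:ℤ)) with hS
  have h0 : G a b c 0 = (c:ℤ)*a*Nz + (a:ℤ) * S := by
    have := G_lin (b := b) (c := c) ha a (le_refl a)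
    simpa using this
  have hba : G a b c ((b:ℤ) - a) = (c:ℤ)*a*Nz + (b:ℤ) * S := by
    have := G_lin (b := b) (c := c) ha b hab
    have e : -(a:ℤ) + (b:ℤ) = (b:ℤ) - a := by ring
    rw [e] at this
    exact this
  have hcomp := G_comp_rel (a := a) (b := b) (c := c) 0
  have e : (b:ℤ) - a - 0 = (b:ℤ) - a := by ring
  rw [e, h0, hba] at hcomp
  have hslope : ((a:ℤ) + b) * S = -((c:ℤ) * a * Nz) := by linarith
  have hk : G a b c k = (c:ℤ)*a*Nz + (k + a) * S := by
    have := G_lin (b := b) (c := c) ha (k + a).toNat (by omega)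
    have e2 : -(a:ℤ) + ((k+a).toNat : ℤ) = k := by omega
    have e3 : (((k+a).toNat : ℕ) : ℤ) = k + a := by omega
    rw [e2, e3] at this
    exact this
  calc ((a:ℤ) + b) * G a b c k = ((a:ℤ)+b) * ((c:ℤ)*a*Nz) + (k+a) * (((a:ℤ)+b) * S) := by
        rw [hk]; ring
    _ = ((a:ℤ)+b) * ((c:ℤ)*a*Nz) + (k+a) * (-((c:ℤ) * a * Nz)) := by rw [hslope]
    _ = (c:ℤ) * a * Nz * ((b:ℤ) - k) := by ring

end WCS

namespace WCS
variable {a b c : ℕ}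

lemma FS_eq {k : ℤ} (hk1 : -(a:ℤ) ≤ k) (hk2 : k ≤ 0) :
    FS a b c k = G a b c k + (c:ℤ) * k * ((PlanePartitions a b c).card : ℤ) := by
  unfold FS
  have key : ∀ T ∈ PlanePartitions a b c,
      ∑ p ∈ dF a b k, ((T p.1 p.2 : ℕ):ℤ) = gg T k + (c:ℤ) * k := by
    intro T _
    have h1 := dF_sum (c := c) k T (fun _ v => v)
    have h2 := gg_split T hk1 hk2
    have hring : (c:ℤ) * (-k) = -((c:ℤ) * k) := by ring
    omega
  rw [Finset.sum_congr rfl key, Finset.sum_add_distrib, Finset.sum_const, nsmul_eq_mul]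
  unfold G
  ring

lemma card_dF {k : ℤ} (hk1 : 0 ≤ k) (hk2 : k ≤ (b:ℤ) - 1) (hab : (b:ℤ) - k ≤ (a:ℤ)) :
    (((dF a b k).card : ℕ) : ℤ) = (b:ℤ) - k := by
  have h1 := dF_sum (a := a) (b := b) (c := 0) k (fun _ _ => (⟨0, by omega⟩ : Fin (0+1)))
    (fun _ _ => (1:ℤ))
  simp only [Finset.sum_const, nsmul_eq_mul, mul_one, Int.card_Icc] at h1
  rw [h1]
  omega

lemma comp_val (T : Fin a → Fin b → Fin (c+1)) (p : Fin a × Fin b) :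
    ((comp T p.1 p.2 : ℕ):ℤ) = (c:ℤ) - ((T p.1.rev p.2.rev : ℕ):ℤ) := by
  simp only [comp, Fin.val_mk]
  have := (T p.1.rev p.2.rev).is_lt
  omega

lemma sum_dF_comp (T : Fin a → Fin b → Fin (c+1)) (k : ℤ) :
    ∑ p ∈ dF a b k, ((comp T p.1 p.2 : ℕ):ℤ)
      = (c:ℤ) * ((dF a b k).card : ℤ)
        - ∑ q ∈ dF a b ((b:ℤ) - a - k), ((T q.1 q.2 : ℕ):ℤ) := by
  rw [Finset.sum_congr rfl (fun p _ => comp_val T p), Finset.sum_sub_distrib,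
    Finset.sum_const, nsmul_eq_mul]
  have reidx : ∑ p ∈ dF a b k, ((T p.1.rev p.2.rev : ℕ):ℤ)
      = ∑ q ∈ dF a b ((b:ℤ) - a - k), ((T q.1 q.2 : ℕ):ℤ) := by
    refine Finset.sum_bij' (fun p _ => (p.1.rev, p.2.rev)) (fun q _ => (q.1.rev, q.2.rev))
      ?_ ?_ ?_ ?_ ?_
    · intro p hp
      simp only [dF, Finset.mem_filter, Finset.mem_univ, true_and] at hp ⊢
      have e1 : ((p.1.rev : ℕ):ℤ) = (a:ℤ) - 1 - (p.1:ℕ) := by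
        rw [Fin.val_rev]; have := p.1.is_lt; omega
      have e2 : ((p.2.rev : ℕ):ℤ) = (b:ℤ) - 1 - (p.2:ℕ) := by
        rw [Fin.val_rev]; have := p.2.is_lt; omega
      omega
    · intro q hq
      simp only [dF, Finset.mem_filter, Finset.mem_univ, true_and] at hq ⊢
      have e1 : ((q.1.rev : ℕ):ℤ) = (a:ℤ) - 1 - (q.1:ℕ) := by
        rw [Fin.val_rev]; have := q.1.is_lt; omega
      have e2 : ((q.2.rev : ℕ):ℤ) = (b:ℤ) - 1 - (q.2:ℕ) := by
        rw [Fin.val_rev]; have := q.2.is_lt; omega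
      omega
    · intro p _; simp [Fin.rev_rev]
    · intro q _; simp [Fin.rev_rev]
    · intro p _; rfl
  rw [reidx]
  ring

lemma FS_comp_rel (k : ℤ) :
    FS a b c k = (c:ℤ) * ((dF a b k).card : ℤ) * ((PlanePartitions a b c).card : ℤ)
      - FS a b c ((b:ℤ) - a - k) := by
  have e1 : ∑ T ∈ PlanePartitions a b c, ∑ p ∈ dF a b k, ((comp T p.1 p.2 : ℕ):ℤ)
      = FS a b c k :=
    sum_comp_reindex (fun T => ∑ p ∈ dF a b k, ((T p.1 p.2 : ℕ):ℤ))
  rw [← e1, Finset.sum_congr rfl (fun T _ => sum_dF_comp T k), Finset.sum_sub_distrib,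
    Finset.sum_const, nsmul_eq_mul]
  unfold FS
  ring

lemma FS_nonpos (ha : 0 < a) (hb : 0 < b) (hab : b ≤ a) {k : ℤ}
    (hk1 : -(a:ℤ) ≤ k) (hk2 : k ≤ 0) :
    ((a:ℤ) + b) * FS a b c k
      = (b:ℤ) * c * ((PlanePartitions a b c).card : ℤ) * ((a:ℤ) + k) := by
  rw [FS_eq hk1 hk2]
  have h1 := G_closed (b := b) (c := c) ha hb hab hk1 hk2
  set Nz : ℤ := ((PlanePartitions a b c).card : ℤ)
  calc ((a:ℤ) + b) * (G a b c k + (c:ℤ) * k * Nz)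
      = ((a:ℤ) + b) * G a b c k + ((a:ℤ)+b) * ((c:ℤ) * k * Nz) := by ring
    _ = (c:ℤ) * a * Nz * ((b:ℤ) - k) + ((a:ℤ)+b) * ((c:ℤ) * k * Nz) := by rw [h1]
    _ = (b:ℤ) * c * Nz * ((a:ℤ) + k) := by ring

lemma FS_nonneg (ha : 0 < a) (hb : 0 < b) (hab : b ≤ a) {k : ℤ}
    (hk1 : 0 ≤ k) (hk2 : k ≤ (b:ℤ) - 1) :
    ((a:ℤ) + b) * FS a b c k
      = (a:ℤ) * c * ((PlanePartitions a b c).card : ℤ) * ((b:ℤ) - k) := by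
  have hcard := card_dF (a := a) hk1 hk2 (by omega)
  have hcomp := FS_comp_rel (a := a) (b := b) (c := c) k
  have hneg := FS_nonpos (c := c) ha hb hab (k := (b:ℤ) - a - k) (by omega) (by omega)
  set Nz : ℤ := ((PlanePartitions a b c).card : ℤ)
  have : ((a:ℤ)+b) * FS a b c k
      = ((a:ℤ)+b) * ((c:ℤ) * (((dF a b k).card : ℕ):ℤ) * Nz) - ((a:ℤ)+b) * FS a b c ((b:ℤ)-a-k) := by
    rw [hcomp]; push_cast; ring
  rw [this, hneg, hcard]
  ring

end WCS

namespace WCS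
variable {a b c : ℕ}

lemma inner_swap (a b c : ℕ) (x₀ : ℤ) (T : Fin a → Fin b → Fin (c+1)) :
    ∑ y ∈ Finset.Icc (0:ℤ) ((a:ℤ) + (c:ℤ) - 1),
      (((univ.filter (fun p : Fin a × Fin b =>
          ((p.2 : ℕ) : ℤ) - ((p.1 : ℕ) : ℤ) + (a : ℤ) = x₀ ∧
          ((T p.1 p.2 : ℕ) : ℤ) + (a : ℤ) - (((p.1 : ℕ) : ℤ) + 1) = y)).card : ℚ))
        * ((y:ℚ) - ((a:ℚ) + (c:ℚ) - 1)/2)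
      = ∑ p ∈ dF a b (x₀ - (a:ℤ)),
          ((((T p.1 p.2 : ℕ):ℤ):ℚ) + (a:ℚ) - 1 - (((p.1:ℕ):ℤ):ℚ) - ((a:ℚ)+(c:ℚ)-1)/2) := by
  have hset : ∀ y : ℤ, (univ.filter (fun p : Fin a × Fin b =>
      ((p.2 : ℕ) : ℤ) - ((p.1 : ℕ) : ℤ) + (a : ℤ) = x₀ ∧
      ((T p.1 p.2 : ℕ) : ℤ) + (a : ℤ) - (((p.1 : ℕ) : ℤ) + 1) = y))
      = (dF a b (x₀ - (a:ℤ))).filter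
          (fun p => ((T p.1 p.2 : ℕ) : ℤ) + (a : ℤ) - (((p.1 : ℕ) : ℤ) + 1) = y) := by
    intro y
    ext p
    simp only [dF, Finset.mem_filter, Finset.mem_univ, true_and]
    constructor
    · rintro ⟨h1, h2⟩; exact ⟨by omega, h2⟩
    · rintro ⟨h1, h2⟩; exact ⟨by omega, h2⟩
  have hcard : ∀ y : ℤ, (((univ.filter (fun p : Fin a × Fin b =>
      ((p.2 : ℕ) : ℤ) - ((p.1 : ℕ) : ℤ) + (a : ℤ) = x₀ ∧
      ((T p.1 p.2 : ℕ) : ℤ) + (a : ℤ) - (((p.1 : ℕ) : ℤ) + 1) = y)).card : ℕ) : ℚ)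
      = ∑ p ∈ dF a b (x₀ - (a:ℤ)),
          (if ((T p.1 p.2 : ℕ) : ℤ) + (a : ℤ) - (((p.1 : ℕ) : ℤ) + 1) = y then (1:ℚ) else 0) := by
    intro y
    rw [hset y, Finset.card_filter]
    push_cast
    exact Finset.sum_congr rfl (fun p _ => by split_ifs <;> norm_num)
  calc ∑ y ∈ Finset.Icc (0:ℤ) ((a:ℤ) + (c:ℤ) - 1),
      (((univ.filter (fun p : Fin a × Fin b =>
          ((p.2 : ℕ) : ℤ) - ((p.1 : ℕ) : ℤ) + (a : ℤ) = x₀ ∧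
          ((T p.1 p.2 : ℕ) : ℤ) + (a : ℤ) - (((p.1 : ℕ) : ℤ) + 1) = y)).card : ℚ))
        * ((y:ℚ) - ((a:ℚ) + (c:ℚ) - 1)/2)
      = ∑ y ∈ Finset.Icc (0:ℤ) ((a:ℤ) + (c:ℤ) - 1), ∑ p ∈ dF a b (x₀ - (a:ℤ)),
          (if ((T p.1 p.2 : ℕ) : ℤ) + (a : ℤ) - (((p.1 : ℕ) : ℤ) + 1) = y
            then ((y:ℚ) - ((a:ℚ) + (c:ℚ) - 1)/2) else 0) := by
        refine Finset.sum_congr rfl (fun y _ => ?_)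
        rw [hcard y, Finset.sum_mul]
        refine Finset.sum_congr rfl (fun p _ => ?_)
        split_ifs <;> norm_num
    _ = ∑ p ∈ dF a b (x₀ - (a:ℤ)), ∑ y ∈ Finset.Icc (0:ℤ) ((a:ℤ) + (c:ℤ) - 1),
          (if ((T p.1 p.2 : ℕ) : ℤ) + (a : ℤ) - (((p.1 : ℕ) : ℤ) + 1) = y
            then ((y:ℚ) - ((a:ℚ) + (c:ℚ) - 1)/2) else 0) := Finset.sum_comm
    _ = ∑ p ∈ dF a b (x₀ - (a:ℤ)),
          ((((T p.1 p.2 : ℕ):ℤ):ℚ) + (a:ℚ) - 1 - (((p.1:ℕ):ℤ):ℚ) - ((a:ℚ)+(c:ℚ)-1)/2) := by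
        refine Finset.sum_congr rfl (fun p _ => ?_)
        rw [Finset.sum_ite_eq (Finset.Icc (0:ℤ) ((a:ℤ) + (c:ℤ) - 1))
          (((T p.1 p.2 : ℕ) : ℤ) + (a : ℤ) - (((p.1 : ℕ) : ℤ) + 1))
          (fun y => ((y:ℚ) - ((a:ℚ) + (c:ℚ) - 1)/2))]
        have hmem : ((T p.1 p.2 : ℕ) : ℤ) + (a : ℤ) - (((p.1 : ℕ) : ℤ) + 1)
            ∈ Finset.Icc (0:ℤ) ((a:ℤ) + (c:ℤ) - 1) := by
          simp only [Finset.mem_Icc]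
          have h1 := (T p.1 p.2).is_lt
          have h2 := p.1.is_lt
          omega
        rw [if_pos hmem]
        push_cast
        ring

lemma LHS_eq (a b c : ℕ) (x₀ : ℤ) :
    ∑ y ∈ Finset.Icc (0:ℤ) ((a:ℤ) + (c:ℤ) - 1),
        P a b c x₀ y * ((y:ℚ) - ((a:ℚ) + (c:ℚ) - 1)/2)
      = (∑ T ∈ PlanePartitions a b c, ∑ p ∈ dF a b (x₀ - (a:ℤ)),
            ((((T p.1 p.2 : ℕ):ℤ):ℚ) + (a:ℚ) - 1 - (((p.1:ℕ):ℤ):ℚ) - ((a:ℚ)+(c:ℚ)-1)/2))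
          / ((PlanePartitions a b c).card : ℚ) := by
  unfold P
  calc ∑ y ∈ Finset.Icc (0:ℤ) ((a:ℤ) + (c:ℤ) - 1),
      ((∑ T ∈ PlanePartitions a b c,
        ((univ.filter (fun p : Fin a × Fin b =>
          ((p.2 : ℕ) : ℤ) - ((p.1 : ℕ) : ℤ) + (a : ℤ) = x₀ ∧
          ((T p.1 p.2 : ℕ) : ℤ) + (a : ℤ) - (((p.1 : ℕ) : ℤ) + 1) = y)).card : ℚ))
        / ((PlanePartitions a b c).card : ℚ)) * ((y:ℚ) - ((a:ℚ) + (c:ℚ) - 1)/2)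
      = ∑ y ∈ Finset.Icc (0:ℤ) ((a:ℤ) + (c:ℤ) - 1),
        (∑ T ∈ PlanePartitions a b c,
          ((univ.filter (fun p : Fin a × Fin b =>
            ((p.2 : ℕ) : ℤ) - ((p.1 : ℕ) : ℤ) + (a : ℤ) = x₀ ∧
            ((T p.1 p.2 : ℕ) : ℤ) + (a : ℤ) - (((p.1 : ℕ) : ℤ) + 1) = y)).card : ℚ)
          * ((y:ℚ) - ((a:ℚ) + (c:ℚ) - 1)/2))
          / ((PlanePartitions a b c).card : ℚ) := by
        refine Finset.sum_congr rfl (fun y _ => ?_)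
        rw [div_mul_eq_mul_div, Finset.sum_mul]
    _ = (∑ y ∈ Finset.Icc (0:ℤ) ((a:ℤ) + (c:ℤ) - 1),
        ∑ T ∈ PlanePartitions a b c,
          ((univ.filter (fun p : Fin a × Fin b =>
            ((p.2 : ℕ) : ℤ) - ((p.1 : ℕ) : ℤ) + (a : ℤ) = x₀ ∧
            ((T p.1 p.2 : ℕ) : ℤ) + (a : ℤ) - (((p.1 : ℕ) : ℤ) + 1) = y)).card : ℚ)
          * ((y:ℚ) - ((a:ℚ) + (c:ℚ) - 1)/2))
          / ((PlanePartitions a b c).card : ℚ) := (Finset.sum_div _ _ _).symm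
    _ = (∑ T ∈ PlanePartitions a b c, ∑ y ∈ Finset.Icc (0:ℤ) ((a:ℤ) + (c:ℤ) - 1),
          ((univ.filter (fun p : Fin a × Fin b =>
            ((p.2 : ℕ) : ℤ) - ((p.1 : ℕ) : ℤ) + (a : ℤ) = x₀ ∧
            ((T p.1 p.2 : ℕ) : ℤ) + (a : ℤ) - (((p.1 : ℕ) : ℤ) + 1) = y)).card : ℚ)
          * ((y:ℚ) - ((a:ℚ) + (c:ℚ) - 1)/2))
          / ((PlanePartitions a b c).card : ℚ) := by rw [Finset.sum_comm]
    _ = (∑ T ∈ PlanePartitions a b c, ∑ p ∈ dF a b (x₀ - (a:ℤ)),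
            ((((T p.1 p.2 : ℕ):ℤ):ℚ) + (a:ℚ) - 1 - (((p.1:ℕ):ℤ):ℚ) - ((a:ℚ)+(c:ℚ)-1)/2))
          / ((PlanePartitions a b c).card : ℚ) := by
        congr 1
        exact Finset.sum_congr rfl (fun T _ => inner_swap a b c x₀ T)

end WCS

namespace WCS
variable {a b c : ℕ}

lemma cst_eval (q : ℚ) (lo : ℤ) : ∀ n : ℕ,
    ∑ i ∈ Finset.Icc lo (lo + (n:ℤ)), (q - (i:ℚ))
      = ((n:ℚ)+1) * q - ((n:ℚ)+1) * (2*(lo:ℚ) + (n:ℚ)) / 2 := by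
  intro n
  induction n with
  | zero =>
      simp only [Nat.cast_zero, add_zero, Finset.Icc_self, Finset.sum_singleton]
      ring
  | succ m ih =>
      rw [sum_Icc_top (fun i => q - (i:ℚ)) (show lo ≤ lo + ((m+1:ℕ):ℤ) by push_cast; omega)]
      have e : lo + ((m+1:ℕ):ℤ) - 1 = lo + (m:ℤ) := by push_cast; ring
      rw [e, ih]
      have e2 : ((lo + ((m+1:ℕ):ℤ) : ℤ):ℚ) = (lo:ℚ) + (m:ℚ) + 1 := by push_cast; ring
      rw [e2]
      push_cast
      ring

lemma main_reduce (a b c : ℕ) (x₀ : ℤ) :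
    (∑ T ∈ PlanePartitions a b c, ∑ p ∈ dF a b (x₀ - (a:ℤ)),
        ((((T p.1 p.2 : ℕ):ℤ):ℚ) + (a:ℚ) - 1 - (((p.1:ℕ):ℤ):ℚ) - ((a:ℚ)+(c:ℚ)-1)/2))
      = ((FS a b c (x₀ - (a:ℤ)) : ℤ):ℚ)
        + ((PlanePartitions a b c).card : ℚ) *
          ∑ i ∈ Finset.Icc (max 1 (1-(x₀-(a:ℤ)))) (min (a:ℤ) ((b:ℤ)-(x₀-(a:ℤ)))),
            (((a:ℚ) - ((a:ℚ)+(c:ℚ)-1)/2) - (i:ℚ)) := by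
  set k := x₀ - (a:ℤ) with hk
  set W := Finset.Icc (max 1 (1-k)) (min (a:ℤ) ((b:ℤ)-k)) with hW
  have per : ∀ T ∈ PlanePartitions a b c,
      ∑ p ∈ dF a b k,
        ((((T p.1 p.2 : ℕ):ℤ):ℚ) + (a:ℚ) - 1 - (((p.1:ℕ):ℤ):ℚ) - ((a:ℚ)+(c:ℚ)-1)/2)
      = ∑ i ∈ W, (((ext T i (i+k) : ℤ):ℚ))
        + ∑ i ∈ W, (((a:ℚ) - ((a:ℚ)+(c:ℚ)-1)/2) - (i:ℚ)) := by
    intro T _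
    have h := dF_sum (c := c) k T
      (fun r v => ((v:ℚ) + (a:ℚ) - 1 - (r:ℚ) - ((a:ℚ)+(c:ℚ)-1)/2))
    rw [h, ← Finset.sum_add_distrib]
    refine Finset.sum_congr rfl (fun i _ => ?_)
    push_cast
    ring
  rw [Finset.sum_congr rfl per, Finset.sum_add_distrib, Finset.sum_const, nsmul_eq_mul]
  have hFS : ((FS a b c k : ℤ):ℚ)
      = ∑ T ∈ PlanePartitions a b c, ∑ i ∈ W, (((ext T i (i+k) : ℤ):ℚ)) := by
    have h1 : FS a b c k
        = ∑ T ∈ PlanePartitions a b c, ∑ i ∈ W, ext T i (i+k) := by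
      unfold FS
      exact Finset.sum_congr rfl (fun T _ => dF_sum (c := c) k T (fun _ v => v))
    rw [h1]
    push_cast
    rfl
  rw [hFS]

end WCS

theorem weighted_column_sum_b_le_a (a b c : ℕ) (ha : 0 < a) (hb : 0 < b) (hc : 0 < c)
    (hab : b ≤ a) (x₀ : ℤ) (hx0 : 1 ≤ x₀) (hx1 : x₀ ≤ (a : ℤ) + b - 1) :
    (1 ≤ x₀ → x₀ ≤ (b : ℤ) →
      ∑ y ∈ Finset.Icc (0 : ℤ) ((a : ℤ) + c - 1),
          P a b c x₀ y * ((y : ℚ) - ((a : ℚ) + c - 1) / 2)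
        = (-(a : ℚ) ^ 2 - a * b - a * c + b * c + a * (x₀ : ℚ) + b * (x₀ : ℚ)) * (x₀ : ℚ)
            / (2 * ((a : ℚ) + b))) ∧
    ((b : ℤ) ≤ x₀ → x₀ ≤ (a : ℤ) →
      ∑ y ∈ Finset.Icc (0 : ℤ) ((a : ℤ) + c - 1),
          P a b c x₀ y * ((y : ℚ) - ((a : ℚ) + c - 1) / 2)
        = -(b : ℚ) * ((a : ℚ) + b + c) * ((a : ℚ) + b - 2 * (x₀ : ℚ))
            / (2 * ((a : ℚ) + b))) ∧
    ((a : ℤ) ≤ x₀ → x₀ ≤ (a : ℤ) + b - 1 →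
      ∑ y ∈ Finset.Icc (0 : ℤ) ((a : ℤ) + c - 1),
          P a b c x₀ y * ((y : ℚ) - ((a : ℚ) + c - 1) / 2)
        = (-(b : ℚ) ^ 2 - a * b - b * c + a * c + a * (x₀ : ℚ) + b * (x₀ : ℚ))
            * ((a : ℚ) + b - (x₀ : ℚ)) / (2 * ((a : ℚ) + b))) := by
  have hN0 : ((PlanePartitions a b c).card : ℚ) ≠ 0 := by
    have h := WCS.card_PP_pos (a := a) (b := b) (c := c)
    exact ne_of_gt (by exact_mod_cast h)
  have hab0 : ((a:ℚ)+(b:ℚ)) ≠ 0 := by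
    have h1 : (0:ℚ) < (a:ℚ) := by exact_mod_cast ha
    have h2 : (0:ℚ) < (b:ℚ) := by exact_mod_cast hb
    positivity
  refine ⟨?_, ?_, ?_⟩
  · -- case 1 : 1 ≤ x₀ ≤ b
    intro h1 h2
    have hWeq : Finset.Icc (max 1 (1-(x₀-(a:ℤ)))) (min (a:ℤ) ((b:ℤ)-(x₀-(a:ℤ))))
        = Finset.Icc ((a:ℤ)-x₀+1) (((a:ℤ)-x₀+1) + (((x₀-1).toNat : ℕ):ℤ)) := by
      congr 1 <;> omega
    have hred := WCS.main_reduce a b c x₀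
    rw [hWeq, WCS.cst_eval ((a:ℚ) - ((a:ℚ)+(c:ℚ)-1)/2) ((a:ℤ)-x₀+1) ((x₀-1).toNat)] at hred
    rw [WCS.LHS_eq a b c x₀, hred]
    have hFZ := WCS.FS_nonpos (c := c) ha hb hab (k := x₀ - (a:ℤ)) (by omega) (by omega)
    rw [show (a:ℤ) + (x₀ - (a:ℤ)) = x₀ by ring] at hFZ
    have hFq : ((a:ℚ)+(b:ℚ)) * ((WCS.FS a b c (x₀-(a:ℤ)) : ℤ):ℚ)
        = (b:ℚ)*(c:ℚ)*((PlanePartitions a b c).card : ℚ)*(x₀:ℚ) := by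
      exact_mod_cast congrArg (fun z : ℤ => (z:ℚ)) hFZ
    have hFv : ((WCS.FS a b c (x₀-(a:ℤ)) : ℤ):ℚ)
        = (b:ℚ)*(c:ℚ)*((PlanePartitions a b c).card : ℚ)*(x₀:ℚ) / ((a:ℚ)+(b:ℚ)) := by
      rw [eq_div_iff hab0]; linear_combination hFq
    rw [hFv]
    have hnc : (((x₀-1).toNat : ℕ):ℚ) = (x₀:ℚ) - 1 := by
      have h : (((x₀-1).toNat : ℕ):ℤ) = x₀ - 1 := by omega
      exact_mod_cast h
    have hlo : (((a:ℤ)-x₀+1 : ℤ):ℚ) = (a:ℚ) - (x₀:ℚ) + 1 := by push_cast; ring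
    rw [hnc, hlo]
    field_simp
    ring
  · -- case 2 : b ≤ x₀ ≤ a
    intro h1 h2
    have hWeq : Finset.Icc (max 1 (1-(x₀-(a:ℤ)))) (min (a:ℤ) ((b:ℤ)-(x₀-(a:ℤ))))
        = Finset.Icc ((a:ℤ)-x₀+1) (((a:ℤ)-x₀+1) + (((b-1 : ℕ)):ℤ)) := by
      have : (((b-1:ℕ)):ℤ) = (b:ℤ) - 1 := by omega
      rw [this]
      congr 1 <;> omega
    have hred := WCS.main_reduce a b c x₀
    rw [hWeq, WCS.cst_eval ((a:ℚ) - ((a:ℚ)+(c:ℚ)-1)/2) ((a:ℤ)-x₀+1) (b-1)] at hred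
    rw [WCS.LHS_eq a b c x₀, hred]
    have hFZ := WCS.FS_nonpos (c := c) ha hb hab (k := x₀ - (a:ℤ)) (by omega) (by omega)
    rw [show (a:ℤ) + (x₀ - (a:ℤ)) = x₀ by ring] at hFZ
    have hFq : ((a:ℚ)+(b:ℚ)) * ((WCS.FS a b c (x₀-(a:ℤ)) : ℤ):ℚ)
        = (b:ℚ)*(c:ℚ)*((PlanePartitions a b c).card : ℚ)*(x₀:ℚ) := by
      exact_mod_cast congrArg (fun z : ℤ => (z:ℚ)) hFZ
    have hFv : ((WCS.FS a b c (x₀-(a:ℤ)) : ℤ):ℚ)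
        = (b:ℚ)*(c:ℚ)*((PlanePartitions a b c).card : ℚ)*(x₀:ℚ) / ((a:ℚ)+(b:ℚ)) := by
      rw [eq_div_iff hab0]; linear_combination hFq
    rw [hFv]
    have hnc : (((b-1 : ℕ)):ℚ) = (b:ℚ) - 1 := by
      have h : (((b-1:ℕ)):ℤ) = (b:ℤ) - 1 := by omega
      exact_mod_cast h
    have hlo : (((a:ℤ)-x₀+1 : ℤ):ℚ) = (a:ℚ) - (x₀:ℚ) + 1 := by push_cast; ring
    rw [hnc, hlo]
    field_simp
    ring
  · -- case 3 : a ≤ x₀ ≤ a+b-1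
    intro h1 h2
    have hWeq : Finset.Icc (max 1 (1-(x₀-(a:ℤ)))) (min (a:ℤ) ((b:ℤ)-(x₀-(a:ℤ))))
        = Finset.Icc 1 (1 + ((((a:ℤ)+b-x₀-1).toNat : ℕ):ℤ)) := by
      congr 1 <;> omega
    have hred := WCS.main_reduce a b c x₀
    rw [hWeq, WCS.cst_eval ((a:ℚ) - ((a:ℚ)+(c:ℚ)-1)/2) 1 (((a:ℤ)+b-x₀-1).toNat)] at hred
    rw [WCS.LHS_eq a b c x₀, hred]
    have hFZ := WCS.FS_nonneg (c := c) ha hb hab (k := x₀ - (a:ℤ)) (by omega) (by omega)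
    rw [show (b:ℤ) - (x₀ - (a:ℤ)) = (a:ℤ) + b - x₀ by ring] at hFZ
    have hFq : ((a:ℚ)+(b:ℚ)) * ((WCS.FS a b c (x₀-(a:ℤ)) : ℤ):ℚ)
        = (a:ℚ)*(c:ℚ)*((PlanePartitions a b c).card : ℚ)*((a:ℚ)+(b:ℚ)-(x₀:ℚ)) := by
      exact_mod_cast congrArg (fun z : ℤ => (z:ℚ)) hFZ
    have hFv : ((WCS.FS a b c (x₀-(a:ℤ)) : ℤ):ℚ)
        = (a:ℚ)*(c:ℚ)*((PlanePartitions a b c).card : ℚ)*((a:ℚ)+(b:ℚ)-(x₀:ℚ))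
          / ((a:ℚ)+(b:ℚ)) := by
      rw [eq_div_iff hab0]; linear_combination hFq
    rw [hFv]
    have hnc : ((((a:ℤ)+b-x₀-1).toNat : ℕ):ℚ) = (a:ℚ)+(b:ℚ)-(x₀:ℚ) - 1 := by
      have h : ((((a:ℤ)+b-x₀-1).toNat : ℕ):ℤ) = (a:ℤ)+b-x₀-1 := by omega
      exact_mod_cast h
    rw [hnc]
    norm_num
    field_simp
    ring
end

section
/- Let n, m be positive integers and let x₀ be an integer with 1 ≤ x₀ ≤ 2n−1. Then Σ_{y=0}^{n+m-1} P_{n,n,m}(x₀, y) · (y − (n+m−1)/2) equals (1/2)·(x₀ − n)·x₀ if 1 ≤ x₀ ≤ n, and equals (1/2)·(x₀ − n)·(2n − x₀) if n ≤ x₀ ≤ 2n−1. -/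
open Finset

def diagSet (n : ℕ) (x₀ : ℤ) : Finset (Fin n × Fin n) :=
  univ.filter (fun p => ((p.2 : ℕ) : ℤ) - ((p.1 : ℕ) : ℤ) + (n : ℤ) = x₀)

def sigmaInv (n m : ℕ) (T : Fin n → Fin n → Fin (m + 1)) : Fin n → Fin n → Fin (m + 1) :=
  fun i j => (T j.rev i.rev).rev

lemma sigmaInv_invol (n m : ℕ) (T : Fin n → Fin n → Fin (m + 1)) :
    sigmaInv n m (sigmaInv n m T) = T := by
  funext i j
  simp [sigmaInv]

lemma sigmaInv_mem (n m : ℕ) (T : Fin n → Fin n → Fin (m + 1))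
    (hT : T ∈ PlanePartitions n n m) : sigmaInv n m T ∈ PlanePartitions n n m := by
  simp only [PlanePartitions, mem_filter, mem_univ, true_and] at hT ⊢
  obtain ⟨h1, h2⟩ := hT
  constructor
  · intro i j j' hjj
    simp only [sigmaInv, Fin.rev_le_rev]
    exact h2 _ _ _ (Fin.rev_le_rev.mpr hjj)
  · intro i i' j hii
    simp only [sigmaInv, Fin.rev_le_rev]
    exact h1 _ _ _ (Fin.rev_le_rev.mpr hii)

lemma rev_cast (m : ℕ) (v : Fin (m + 1)) : ((v.rev : Fin (m+1)) : ℚ) = (m : ℚ) - (v : ℚ) := by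
  have h1 : (v.rev : ℕ) = m - (v : ℕ) := by
    rw [Fin.val_rev]; omega
  rw [h1, Nat.cast_sub v.is_le]

lemma tau_mem (n : ℕ) (x₀ : ℤ) (p : Fin n × Fin n) (hp : p ∈ diagSet n x₀) :
    (p.2.rev, p.1.rev) ∈ diagSet n x₀ := by
  simp only [diagSet, mem_filter, mem_univ, true_and, Fin.val_rev] at hp ⊢
  have h1 := p.1.isLt
  have h2 := p.2.isLt
  omega

lemma lemA (n m : ℕ) (x₀ : ℤ) :
    ∑ T ∈ PlanePartitions n n m, ∑ p ∈ diagSet n x₀, ((T p.1 p.2 : ℕ) : ℚ)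
      = ((PlanePartitions n n m).card : ℚ) * m * ((diagSet n x₀).card : ℚ) / 2 := by
  set S := ∑ T ∈ PlanePartitions n n m, ∑ p ∈ diagSet n x₀, ((T p.1 p.2 : ℕ) : ℚ) with hS
  have key : S = ((PlanePartitions n n m).card : ℚ) * m * ((diagSet n x₀).card : ℚ) - S := by
    have reidx : S = ∑ T ∈ PlanePartitions n n m,
        ∑ p ∈ diagSet n x₀, (((sigmaInv n m T) p.1 p.2 : ℕ) : ℚ) := by
      rw [hS]
      refine Finset.sum_nbij' (sigmaInv n m) (sigmaInv n m)
        (fun T hT => sigmaInv_mem n m T hT) (fun T hT => sigmaInv_mem n m T hT)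
        (fun T _ => sigmaInv_invol n m T) (fun T _ => sigmaInv_invol n m T)
        (fun T hT => ?_)
      rw [sigmaInv_invol]
    conv_lhs => rw [reidx]
    have step : ∀ T ∈ PlanePartitions n n m,
        (∑ p ∈ diagSet n x₀, (((sigmaInv n m T) p.1 p.2 : ℕ) : ℚ))
          = (m : ℚ) * ((diagSet n x₀).card : ℚ)
            - ∑ p ∈ diagSet n x₀, ((T p.1 p.2 : ℕ) : ℚ) := by
      intro T _
      have h1 : (∑ p ∈ diagSet n x₀, (((sigmaInv n m T) p.1 p.2 : ℕ) : ℚ))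
          = ∑ p ∈ diagSet n x₀, ((m : ℚ) - ((T p.2.rev p.1.rev : ℕ) : ℚ)) := by
        refine sum_congr rfl fun p _ => ?_
        simp only [sigmaInv]
        exact rev_cast m _
      have h2 : (∑ p ∈ diagSet n x₀, ((T p.2.rev p.1.rev : ℕ) : ℚ))
          = ∑ p ∈ diagSet n x₀, ((T p.1 p.2 : ℕ) : ℚ) := by
        refine Finset.sum_nbij' (fun p => (p.2.rev, p.1.rev)) (fun p => (p.2.rev, p.1.rev))
          (fun p hp => tau_mem n x₀ p hp) (fun p hp => tau_mem n x₀ p hp)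
          (fun p _ => by simp) (fun p _ => by simp) (fun p _ => rfl)
      rw [h1, Finset.sum_sub_distrib, h2, sum_const, nsmul_eq_mul, mul_comm]
    rw [Finset.sum_congr rfl step, Finset.sum_sub_distrib, sum_const, nsmul_eq_mul, ← hS]
    ring
  linarith

lemma lemB (n m : ℕ) (x₀ : ℤ) (T : Fin n → Fin n → Fin (m + 1)) (f : ℤ → ℚ) :
    ∑ y ∈ Finset.Icc (0 : ℤ) ((n : ℤ) + m - 1),
      ((univ.filter (fun p : Fin n × Fin n =>
          ((p.2 : ℕ) : ℤ) - ((p.1 : ℕ) : ℤ) + (n : ℤ) = x₀ ∧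
          ((T p.1 p.2 : ℕ) : ℤ) + (n : ℤ) - (((p.1 : ℕ) : ℤ) + 1) = y)).card : ℚ) * f y
    = ∑ p ∈ diagSet n x₀,
        f (((T p.1 p.2 : ℕ) : ℤ) + (n : ℤ) - (((p.1 : ℕ) : ℤ) + 1)) := by
  have maps : ∀ p ∈ diagSet n x₀,
      ((T p.1 p.2 : ℕ) : ℤ) + (n : ℤ) - (((p.1 : ℕ) : ℤ) + 1)
        ∈ Finset.Icc (0 : ℤ) ((n : ℤ) + m - 1) := by
    intro p _
    have h1 := (T p.1 p.2).is_le
    have h2 := p.1.isLt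
    simp only [Finset.mem_Icc]
    omega
  rw [← Finset.sum_fiberwise_of_maps_to maps
      (fun p => f (((T p.1 p.2 : ℕ) : ℤ) + (n : ℤ) - (((p.1 : ℕ) : ℤ) + 1)))]
  refine sum_congr rfl fun y hy => ?_
  have hfilter : (univ.filter (fun p : Fin n × Fin n =>
          ((p.2 : ℕ) : ℤ) - ((p.1 : ℕ) : ℤ) + (n : ℤ) = x₀ ∧
          ((T p.1 p.2 : ℕ) : ℤ) + (n : ℤ) - (((p.1 : ℕ) : ℤ) + 1) = y))
      = (diagSet n x₀).filter
          (fun p => ((T p.1 p.2 : ℕ) : ℤ) + (n : ℤ) - (((p.1 : ℕ) : ℤ) + 1) = y) := by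
    rw [diagSet, Finset.filter_filter]
  rw [hfilter]
  rw [Finset.sum_congr rfl (fun p hp => by rw [(Finset.mem_filter.mp hp).2])]
  rw [sum_const, nsmul_eq_mul]


lemma master (n m : ℕ) (x₀ : ℤ) :
    ∑ y ∈ Finset.Icc (0 : ℤ) ((n : ℤ) + m - 1),
        P n n m x₀ y * ((y : ℚ) - ((n : ℚ) + m - 1) / 2)
      = ∑ p ∈ diagSet n x₀, (((n : ℚ) - 1) / 2 - ((p.1 : ℕ) : ℚ)) := by
  have hmem : (fun _ _ => 0 : Fin n → Fin n → Fin (m + 1)) ∈ PlanePartitions n n m := by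
    simp [PlanePartitions]
  have hN : ((PlanePartitions n n m).card : ℚ) ≠ 0 :=
    Nat.cast_ne_zero.mpr (Finset.card_ne_zero_of_mem hmem)
  simp only [P, div_mul_eq_mul_div, sum_mul]
  rw [← Finset.sum_div, Finset.sum_comm]
  rw [Finset.sum_congr rfl
    (fun T _ => lemB n m x₀ T (fun y => (y : ℚ) - ((n : ℚ) + m - 1) / 2))]
  have expand : ∀ T : Fin n → Fin n → Fin (m + 1),
      (∑ p ∈ diagSet n x₀,
        (((((T p.1 p.2 : ℕ) : ℤ) + (n : ℤ) - (((p.1 : ℕ) : ℤ) + 1) : ℤ) : ℚ)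
          - ((n : ℚ) + m - 1) / 2))
      = (∑ p ∈ diagSet n x₀, ((T p.1 p.2 : ℕ) : ℚ))
        + ∑ p ∈ diagSet n x₀,
            ((n : ℚ) - ((p.1 : ℕ) : ℚ) - 1 - ((n : ℚ) + m - 1) / 2) := by
    intro T
    rw [← Finset.sum_add_distrib]
    refine sum_congr rfl fun p _ => ?_
    push_cast
    ring
  rw [Finset.sum_congr rfl (fun T _ => expand T), Finset.sum_add_distrib, lemA n m x₀,
    sum_const, nsmul_eq_mul]
  rw [div_eq_iff hN]
  have hD : (∑ p ∈ diagSet n x₀, (((n : ℚ) - 1) / 2 - ((p.1 : ℕ) : ℚ)))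
      = (m : ℚ) * ((diagSet n x₀).card : ℚ) / 2
        + ∑ p ∈ diagSet n x₀,
            ((n : ℚ) - ((p.1 : ℕ) : ℚ) - 1 - ((n : ℚ) + m - 1) / 2) := by
    have : (m : ℚ) * ((diagSet n x₀).card : ℚ) / 2
        = ∑ _p ∈ diagSet n x₀, (m : ℚ) / 2 := by
      rw [sum_const, nsmul_eq_mul]; ring
    rw [this, ← Finset.sum_add_distrib]
    refine sum_congr rfl fun p _ => ?_
    ring
  rw [hD]
  ring

lemma sum_range_cast (N : ℕ) :
    (∑ i ∈ Finset.range N, (i : ℚ)) = (N : ℚ) * ((N : ℚ) - 1) / 2 := by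
  induction N with
  | zero => simp
  | succ N ih =>
    rw [Finset.sum_range_succ, ih]
    push_cast
    ring

lemma sum_fin_ite (n : ℕ) (c : ℤ) (a : ℚ) :
    (∑ j : Fin n, if ((j : ℕ) : ℤ) = c then a else 0)
      = if 0 ≤ c ∧ c < (n : ℤ) then a else 0 := by
  by_cases h : 0 ≤ c ∧ c < (n : ℤ)
  · rw [if_pos h]
    have hc : c.toNat < n := by omega
    rw [Finset.sum_eq_single_of_mem (⟨c.toNat, hc⟩ : Fin n) (mem_univ _)]
    · exact if_pos (Int.toNat_of_nonneg h.1)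
    · intro j _ hj
      rw [if_neg]
      intro heq
      exact hj (Fin.ext (show (j : ℕ) = c.toNat by omega))
  · rw [if_neg h]
    apply Finset.sum_eq_zero
    intro j _
    rw [if_neg]
    intro hc
    have := j.isLt
    exact h ⟨by omega, by omega⟩

lemma diag_sum_eq (n : ℕ) (x₀ : ℤ) (f : Fin n → ℚ) :
    (∑ p ∈ diagSet n x₀, f p.1)
      = ∑ i : Fin n,
          if 0 ≤ ((i : ℕ) : ℤ) + x₀ - (n : ℤ) ∧ ((i : ℕ) : ℤ) + x₀ - (n : ℤ) < (n : ℤ)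
          then f i else 0 := by
  rw [diagSet, Finset.sum_filter, Fintype.sum_prod_type]
  refine Fintype.sum_congr _ _ fun i => ?_
  show (∑ j : Fin n, if ((j : ℕ) : ℤ) - ((i : ℕ) : ℤ) + (n : ℤ) = x₀ then f i else 0) = _
  rw [show (∑ j : Fin n, if ((j : ℕ) : ℤ) - ((i : ℕ) : ℤ) + (n : ℤ) = x₀ then f i else 0)
      = (∑ j : Fin n, if ((j : ℕ) : ℤ) = x₀ + ((i : ℕ) : ℤ) - (n : ℤ) then f i else 0) from
    Finset.sum_congr rfl (fun j _ => if_congr (by omega) rfl rfl)]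
  rw [sum_fin_ite n (x₀ + (i : ℕ) - n) (f i)]
  exact if_congr (by omega) rfl rfl

lemma diag1 (n : ℕ) (x₀ : ℤ) (h1 : 1 ≤ x₀) (h2 : x₀ ≤ (n : ℤ)) :
    (∑ p ∈ diagSet n x₀, (((n : ℚ) - 1) / 2 - ((p.1 : ℕ) : ℚ)))
      = (1 / 2 : ℚ) * ((x₀ : ℚ) - n) * (x₀ : ℚ) := by
  rw [diag_sum_eq n x₀ (fun i => ((n : ℚ) - 1) / 2 - ((i : ℕ) : ℚ))]
  set k : ℕ := ((n : ℤ) - x₀).toNat with hk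
  have hkz : (k : ℤ) = (n : ℤ) - x₀ := Int.toNat_of_nonneg (by omega)
  have hkn : k ≤ n := by omega
  have hcond : ∀ i : Fin n,
      (0 ≤ ((i : ℕ) : ℤ) + x₀ - (n : ℤ) ∧ ((i : ℕ) : ℤ) + x₀ - (n : ℤ) < (n : ℤ))
        ↔ k ≤ (i : ℕ) := by
    intro i; have := i.isLt; omega
  rw [Fintype.sum_congr _ _ (fun i => if_congr (hcond i) rfl rfl)]
  rw [Fin.sum_univ_eq_sum_range (fun i => if k ≤ i then ((n : ℚ) - 1) / 2 - (i : ℚ) else 0) n]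
  rw [← Finset.sum_filter]
  have hfil : (Finset.range n).filter (fun i => k ≤ i) = Finset.Ico k n := by
    ext i
    simp only [Finset.mem_filter, Finset.mem_range, Finset.mem_Ico]
    omega
  rw [hfil, Finset.sum_sub_distrib, sum_const, Nat.card_Ico, nsmul_eq_mul,
    Finset.sum_Ico_eq_sub _ hkn, sum_range_cast, sum_range_cast, Nat.cast_sub hkn]
  have hkq : (k : ℚ) = (n : ℚ) - (x₀ : ℚ) := by
    have : ((k : ℤ) : ℚ) = (((n : ℤ) - x₀ : ℤ) : ℚ) := by rw [hkz]
    push_cast at this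
    linarith
  rw [hkq]
  ring

lemma diag2 (n : ℕ) (x₀ : ℤ) (h1 : (n : ℤ) ≤ x₀) (h2 : x₀ ≤ 2 * (n : ℤ) - 1) :
    (∑ p ∈ diagSet n x₀, (((n : ℚ) - 1) / 2 - ((p.1 : ℕ) : ℚ)))
      = (1 / 2 : ℚ) * ((x₀ : ℚ) - n) * (2 * (n : ℚ) - (x₀ : ℚ)) := by
  rw [diag_sum_eq n x₀ (fun i => ((n : ℚ) - 1) / 2 - ((i : ℕ) : ℚ))]
  set d : ℕ := (2 * (n : ℤ) - x₀).toNat with hd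
  have hdz : (d : ℤ) = 2 * (n : ℤ) - x₀ := Int.toNat_of_nonneg (by omega)
  have hdn : d ≤ n := by omega
  have hcond : ∀ i : Fin n,
      (0 ≤ ((i : ℕ) : ℤ) + x₀ - (n : ℤ) ∧ ((i : ℕ) : ℤ) + x₀ - (n : ℤ) < (n : ℤ))
        ↔ (i : ℕ) < d := by
    intro i; have := i.isLt; omega
  rw [Fintype.sum_congr _ _ (fun i => if_congr (hcond i) rfl rfl)]
  rw [Fin.sum_univ_eq_sum_range (fun i => if i < d then ((n : ℚ) - 1) / 2 - (i : ℚ) else 0) n]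
  rw [← Finset.sum_filter]
  have hfil : (Finset.range n).filter (fun i => i < d) = Finset.range d := by
    ext i
    simp only [Finset.mem_filter, Finset.mem_range]
    omega
  rw [hfil, Finset.sum_sub_distrib, sum_const, Finset.card_range, nsmul_eq_mul,
    sum_range_cast]
  have hdq : (d : ℚ) = 2 * (n : ℚ) - (x₀ : ℚ) := by
    have : ((d : ℤ) : ℚ) = ((2 * (n : ℤ) - x₀ : ℤ) : ℚ) := by rw [hdz]
    push_cast at this
    linarith
  rw [hdq]
  ring


theorem weighted_column_sum_symmetric_case (n m : ℕ) (hn : 0 < n) (hm : 0 < m)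
    (x₀ : ℤ) (hx0 : 1 ≤ x₀) (hx1 : x₀ ≤ 2 * (n : ℤ) - 1) :
    (1 ≤ x₀ → x₀ ≤ (n : ℤ) →
      ∑ y ∈ Finset.Icc (0 : ℤ) ((n : ℤ) + m - 1),
          P n n m x₀ y * ((y : ℚ) - ((n : ℚ) + m - 1) / 2)
        = (1 / 2 : ℚ) * ((x₀ : ℚ) - n) * (x₀ : ℚ)) ∧
    ((n : ℤ) ≤ x₀ → x₀ ≤ 2 * (n : ℤ) - 1 →
      ∑ y ∈ Finset.Icc (0 : ℤ) ((n : ℤ) + m - 1),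
          P n n m x₀ y * ((y : ℚ) - ((n : ℚ) + m - 1) / 2)
        = (1 / 2 : ℚ) * ((x₀ : ℚ) - n) * (2 * (n : ℚ) - (x₀ : ℚ))) := by
  constructor
  · intro h1 h2
    rw [master n m x₀]
    exact diag1 n x₀ h1 h2
  · intro h1 h2
    rw [master n m x₀]
    exact diag2 n x₀ h1 h2
end
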